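/- arXiv:1601.08142 — 8 statements merged into one kernel-verified Lean document; each statement's English description precedes it below -/
import Mathlib

section
/- Let G be a locally compact second-countable group with a Borel action on a standard Borel space X. Then the free part of the action, {x ∈ X : ∀ g ∈ G, g·x = x → g = e}, is a Borel subset of X. -/
open MeasureTheory Filter Topology Set
open scoped ENNReal Pointwise

section DispAux

variable {G : Type*} [Group G] [TopologicalSpace G] [IsTopologicalGroup G]
    [LocallyCompactSpace G] [SecondCountableTopology G] [PolishSpace G]
    [MeasurableSpace G] [BorelSpace G]
    {X : Type*} [MeasurableSpace X] [MulAction G X]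

/-- The displacement function: an integrated, clipped distance between `(w*g) • x` and `w • x`. -/
noncomputable def disp (ν : Measure G) (W : Set G) (f : X → ℝ) (g : G) (x : X) : ℝ :=
  ∫ w in W, min 1 |f ((w * g) • x) - f (w • x)| ∂ν

lemma lip_min (s t u : ℝ) :
    |min 1 (abs (s - u)) - min 1 (abs (t - u))| ≤ |s - t| := by
  have h1 := abs_min_sub_min_le_max (1 : ℝ) (abs (s - u)) 1 (abs (t - u))
  rw [sub_self, abs_zero, max_eq_right (abs_nonneg _)] at h1
  refine h1.trans ?_
  have := abs_abs_sub_abs_le_abs_sub (s - u) (t - u)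
  simpa using this

variable {ν : Measure G} {W : Set G} {f : X → ℝ}

lemma integrand_meas (hf : Measurable f)
    (hB : Measurable fun p : G × X => p.1 • p.2) (g : G) :
    Measurable fun p : G × X => min 1 |f ((p.1 * g) • p.2) - f (p.1 • p.2)| := by
  apply Measurable.min measurable_const
  apply Measurable.abs
  exact ((hf.comp (hB.comp ((measurable_fst.mul_const g).prodMk measurable_snd))).sub
    (hf.comp hB))

lemma disp_measurable [SFinite ν] (hf : Measurable f)
    (hB : Measurable fun p : G × X => p.1 • p.2) (g : G) :
    Measurable fun x => disp ν W f g x := by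
  have h := ((integrand_meas hf hB g).stronglyMeasurable :
      StronglyMeasurable fun p : G × X => min 1 |f ((p.1 * g) • p.2) - f (p.1 • p.2)|)
  exact (h.integral_prod_left' (μ := ν.restrict W)).measurable

lemma integrand_intOn (hf : Measurable f)
    (hB : Measurable fun p : G × X => p.1 • p.2) (hW : ν W ≠ ⊤) (g : G) (x : X) :
    Integrable (fun w => min 1 |f ((w * g) • x) - f (w • x)|) (ν.restrict W) := by
  have hm : Measurable fun w : G => min 1 |f ((w * g) • x) - f (w • x)| :=
    (integrand_meas hf hB g).comp (measurable_id.prodMk measurable_const)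
  haveI : IsFiniteMeasure (ν.restrict W) := by
    constructor
    rw [Measure.restrict_apply_univ]
    exact lt_top_iff_ne_top.2 hW
  refine Integrable.mono' (integrable_const 1) hm.aestronglyMeasurable ?_
  refine ae_of_all _ fun w => ?_
  rw [Real.norm_eq_abs, abs_of_nonneg (le_min zero_le_one (abs_nonneg _))]
  exact min_le_left _ _

lemma disp_eq_zero_iff (hf : Measurable f) (hinj : Function.Injective f)
    (hB : Measurable fun p : G × X => p.1 • p.2)
    (hW0 : ν W ≠ 0) (hWt : ν W ≠ ⊤) (g : G) (x : X) :
    disp ν W f g x = 0 ↔ g • x = x := by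
  constructor
  · intro h
    have hint := integrand_intOn hf hB hWt g x
    have hnn : 0 ≤ᵐ[ν.restrict W] fun w => min 1 |f ((w * g) • x) - f (w • x)| :=
      ae_of_all _ fun w => le_min zero_le_one (abs_nonneg _)
    have := (integral_eq_zero_iff_of_nonneg_ae hnn hint).1 h
    have hne : NeBot (ae (ν.restrict W)) := by
      refine ae_neBot.2 ?_
      simpa [Measure.restrict_eq_zero] using hW0
    obtain ⟨w, hw⟩ := this.exists
    have habs : |f ((w * g) • x) - f (w • x)| = 0 := by
      rcases min_eq_iff.1 hw with h1 | h1
      · exact absurd h1.1 one_ne_zero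
      · exact h1.1
    have : f ((w * g) • x) = f (w • x) := by
      have := abs_eq_zero.1 habs; linarith
    have h2 : (w * g) • x = w • x := hinj this
    rw [mul_smul] at h2
    exact smul_left_cancel w h2
  · intro h
    have : ∀ w : G, min 1 |f ((w * g) • x) - f (w • x)| = 0 := by
      intro w
      rw [mul_smul, h, sub_self, abs_zero, min_eq_right zero_le_one]
    simp only [disp, this, integral_zero]


lemma disp_nonneg (ν : Measure G) (W : Set G) (f : X → ℝ) (g : G) (x : X) :
    0 ≤ disp ν W f g x :=
  integral_nonneg fun w => le_min zero_le_one (abs_nonneg _)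

lemma disp_continuous [ν.IsMulRightInvariant] [IsLocallyFiniteMeasure ν]
    [ν.InnerRegularCompactLTTop] [IsFiniteMeasureOnCompacts ν]
    (hWc : IsCompact W) (hf : Measurable f) (hfb : ∀ y, |f y| ≤ 2)
    (hB : Measurable fun p : G × X => p.1 • p.2) (x : X) :
    Continuous fun g => disp ν W f g x := by
  rw [continuous_iff_continuousAt]
  intro g₀
  obtain ⟨U, hUc, hU⟩ := exists_compact_mem_nhds g₀
  have hg₀U : g₀ ∈ U := mem_of_mem_nhds hU
  set a : G → ℝ := fun w => f (w • x) with ha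
  have ha_meas : Measurable a := hf.comp (hB.comp (measurable_id.prodMk measurable_const))
  set W' : Set G := W * U with hW'
  have hW'c : IsCompact W' := hWc.mul hUc
  haveI : IsFiniteMeasure (ν.restrict W') := by
    constructor
    rw [Measure.restrict_apply_univ]
    exact hW'c.measure_lt_top
  set b : G → ℝ := W'.indicator a with hb
  have hb_meas : Measurable b := ha_meas.indicator hW'c.measurableSet
  have hb_int : Integrable b ν := by
    rw [integrable_indicator_iff hW'c.measurableSet]
    refine Integrable.mono' (integrable_const 2) ha_meas.aestronglyMeasurable.restrict
      (ae_of_all _ fun w => by simpa [Real.norm_eq_abs] using hfb (w • x))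
  haveI : Fact ((1:ℝ≥0∞) ≤ 1) := ⟨le_refl 1⟩
  set b1 : Lp ℝ 1 ν := (memLp_one_iff_integrable.2 hb_int).toLp b with hb1
  set cm : C(G, C(G, G)) := ContinuousMap.curry ⟨fun p : G × G => p.2 * p.1, by continuity⟩
    with hcm
  have hcm_app : ∀ g w, cm g w = w * g := fun g w => rfl
  have hT : ∀ g : G, MeasurePreserving (cm g) ν ν := fun g => by
    have := measurePreserving_mul_right ν g
    convert this using 1
    rfl
  set u : G → Lp ℝ 1 ν := fun g => Lp.compMeasurePreserving (cm g) (hT g) b1 with hu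
  have key : Tendsto u (𝓝 g₀) (𝓝 (u g₀)) :=
    Filter.Tendsto.compMeasurePreservingLp tendsto_const_nhds (cm.continuous.tendsto g₀)
      hT (hT g₀) (by norm_num)
  have keynorm : Tendsto (fun g => ‖u g - u g₀‖) (𝓝 g₀) (𝓝 0) := by
    simpa using (key.sub (tendsto_const_nhds (x := u g₀))).norm
  -- identify the L¹ norm with the integral of the difference of translates
  have hcoe : ∀ g : G, (u g : G → ℝ) =ᵐ[ν] fun w => b (w * g) := by
    intro g
    refine (Lp.coeFn_compMeasurePreserving b1 (hT g)).trans ?_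
    have h1 : (b1 : G → ℝ) =ᵐ[ν] b := (memLp_one_iff_integrable.2 hb_int).coeFn_toLp
    exact (hT g).quasiMeasurePreserving.ae_eq_comp h1
  have hnorm_eq : ∀ g : G, ‖u g - u g₀‖ = ∫ w, |b (w * g) - b (w * g₀)| ∂ν := by
    intro g
    rw [L1.norm_eq_integral_norm]
    refine integral_congr_ae ?_
    filter_upwards [Lp.coeFn_sub (u g) (u g₀), hcoe g, hcoe g₀] with w h1 h2 h3
    rw [Real.norm_eq_abs, h1, Pi.sub_apply, h2, h3]
  -- the comparison estimate
  haveI : IsFiniteMeasure (ν.restrict W) := by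
    constructor
    rw [Measure.restrict_apply_univ]
    exact hWc.measure_lt_top
  have hWt : ν W ≠ ⊤ := hWc.measure_lt_top.ne
  have hcomp : ∀ᶠ g in 𝓝 g₀, |disp ν W f g x - disp ν W f g₀ x| ≤ ‖u g - u g₀‖ := by
    filter_upwards [hU] with g hg
    rw [hnorm_eq g]
    have hint_g := integrand_intOn hf hB hWt g x
    have hint_g₀ := integrand_intOn hf hB hWt g₀ x
    have habs_int : Integrable (fun w => |b (w * g) - b (w * g₀)|) ν :=
      ((hb_int.comp_mul_right g).sub (hb_int.comp_mul_right g₀)).abs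
    set m : G → G → ℝ := fun g w => min 1 (abs (f ((w * g) • x) - f (w • x))) with hm
    calc |disp ν W f g x - disp ν W f g₀ x|
        = |∫ w in W, (m g w - m g₀ w) ∂ν| := by
          rw [integral_sub hint_g hint_g₀]; rfl
      _ ≤ ∫ w in W, |m g w - m g₀ w| ∂ν := by
          simpa [Real.norm_eq_abs] using
            norm_integral_le_integral_norm (μ := ν.restrict W) (fun w => m g w - m g₀ w)
      _ ≤ ∫ w in W, |b (w * g) - b (w * g₀)| ∂ν := by
          refine setIntegral_mono_on ((hint_g.sub hint_g₀).abs) habs_int.integrableOn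
            hWc.measurableSet (fun w hw => ?_)
          have hwg : w * g ∈ W' := mul_mem_mul hw hg
          have hwg₀ : w * g₀ ∈ W' := mul_mem_mul hw hg₀U
          have e1 : b (w * g) = f ((w * g) • x) := by
            rw [hb, indicator_of_mem hwg]
          have e2 : b (w * g₀) = f ((w * g₀) • x) := by
            rw [hb, indicator_of_mem hwg₀]
          rw [e1, e2]
          exact lip_min _ _ _
      _ ≤ ∫ w, |b (w * g) - b (w * g₀)| ∂ν :=
          setIntegral_le_integral habs_int (ae_of_all _ fun w => abs_nonneg _)
  have hsq : Tendsto (fun g => |disp ν W f g x - disp ν W f g₀ x|) (𝓝 g₀) (𝓝 0) :=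
    squeeze_zero' (Eventually.of_forall fun _ => abs_nonneg _) hcomp keynorm
  rw [ContinuousAt, tendsto_iff_dist_tendsto_zero]
  simpa [Real.dist_eq] using hsq

end DispAux

/-- For a Borel action of a locally compact second-countable (Polish) group `G` on a
standard Borel space `X`, the free part of the action is a Borel subset of `X`. -/
theorem free_part_is_borel
    (G : Type*) [Group G] [TopologicalSpace G] [IsTopologicalGroup G]
    [LocallyCompactSpace G] [SecondCountableTopology G] [PolishSpace G]
    [MeasurableSpace G] [BorelSpace G]
    (X : Type*) [MeasurableSpace X] [StandardBorelSpace X]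
    [MulAction G X]
    (hBorel : Measurable fun p : G × X => p.1 • p.2) :
    MeasurableSet {x : X | ∀ g : G, g • x = x → g = 1} := by
  letI := TopologicalSpace.upgradeIsCompletelyMetrizable G
  obtain ⟨e, he⟩ := MeasureTheory.exists_measurableEmbedding_real X
  set f : X → ℝ := fun y => Real.arctan (e y) with hfdef
  have hf : Measurable f := Real.measurable_arctan.comp he.measurable
  have hfb : ∀ y, |f y| ≤ 2 := fun y => by
    have h1 := Real.arctan_lt_pi_div_two (e y)
    have h2 := Real.neg_pi_div_two_lt_arctan (e y)
    have h3 := Real.pi_le_four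
    rw [abs_le]
    constructor <;> linarith
  have hinj : Function.Injective f := fun a b h => he.injective (Real.arctan_injective h)
  set ν : Measure G := (MeasureTheory.Measure.haar (G := G)).inv with hν
  obtain ⟨W, hWc, hWn⟩ := exists_compact_mem_nhds (1 : G)
  have hW0 : ν W ≠ 0 := (ν.measure_pos_of_mem_nhds hWn).ne'
  have hWt : ν W ≠ ⊤ := hWc.measure_lt_top.ne
  obtain ⟨D, hDc, hDd⟩ := TopologicalSpace.exists_countable_dense G
  set K : CompactExhaustion G := CompactExhaustion.choice G with hK
  set U : ℕ → Set G := fun n => interior (K (n+1)) ∩ {g | (1:ℝ)/(n+1) < dist g 1} with hUdef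
  have hUopen : ∀ n, IsOpen (U n) := fun n =>
    isOpen_interior.inter (isOpen_lt continuous_const (continuous_id.dist continuous_const))
  have hcont : ∀ x : X, Continuous fun g => disp ν W f g x := fun x =>
    disp_continuous hWc hf hfb hBorel x
  have hmeas : ∀ d : G, Measurable fun x => disp ν W f d x := fun d =>
    disp_measurable hf hBorel d
  have hzero : ∀ (g : G) (x : X), disp ν W f g x = 0 ↔ g • x = x := fun g x =>
    disp_eq_zero_iff hf hinj hBorel hW0 hWt g x
  have main : {x : X | ∀ g : G, g • x = x → g = 1}ᶜ =
      ⋃ n : ℕ, ⋂ m : ℕ, ⋃ d ∈ D ∩ U n, {x | disp ν W f d x < 1/(m+1)} := by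
    ext x
    simp only [mem_compl_iff, mem_setOf_eq, mem_iUnion, mem_iInter, not_forall,
      exists_prop, mem_inter_iff]
    constructor
    · rintro ⟨g, hgx, hg1⟩
      obtain ⟨n₀, hn₀⟩ := K.exists_mem g
      have hdist : 0 < dist g 1 := dist_pos.2 hg1
      obtain ⟨n₁, hn₁⟩ := exists_nat_one_div_lt hdist
      refine ⟨max n₀ n₁, fun m => ?_⟩
      have hgU : g ∈ U (max n₀ n₁) := by
        constructor
        · exact interior_mono (K.subset (Nat.succ_le_succ (le_max_left _ _)))
            (K.subset_interior_succ n₀ hn₀)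
        · show (1:ℝ)/(max n₀ n₁ + 1) < dist g 1
          refine lt_of_le_of_lt ?_ hn₁
          apply one_div_le_one_div_of_le
          · positivity
          · have : (n₁ : ℝ) ≤ max n₀ n₁ := by exact_mod_cast le_max_right n₀ n₁
            linarith
      have hDz : disp ν W f g x = 0 := (hzero g x).2 hgx
      have hopen : IsOpen (U (max n₀ n₁) ∩ {h | disp ν W f h x < 1/(m+1)}) :=
        (hUopen _).inter (isOpen_lt (hcont x) continuous_const)
      have hne : (U (max n₀ n₁) ∩ {h | disp ν W f h x < 1/(m+1)}).Nonempty :=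
        ⟨g, hgU, by rw [mem_setOf_eq, hDz]; positivity⟩
      obtain ⟨d, hdD, hd⟩ := hDd.exists_mem_open hopen hne
      exact ⟨d, ⟨hdD, hd.1⟩, hd.2⟩
    · rintro ⟨n, hn⟩
      choose d hd hdlt using hn
      have hdK : ∀ m, d m ∈ K (n+1) := fun m => interior_subset (hd m).2.1
      obtain ⟨a, haK, φ, hφ, hlim⟩ := (K.isCompact (n+1)).tendsto_subseq hdK
      have hda : Tendsto (fun m => disp ν W f (d (φ m)) x) atTop (𝓝 (disp ν W f a x)) :=
        ((hcont x).tendsto a).comp hlim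
      have hto0 : Tendsto (fun m => disp ν W f (d (φ m)) x) atTop (𝓝 0) := by
        refine squeeze_zero (fun m => disp_nonneg ν W f _ x) (fun m => ?_)
          tendsto_one_div_add_atTop_nhds_zero_nat
        refine le_trans (le_of_lt (hdlt (φ m))) ?_
        apply one_div_le_one_div_of_le
        · positivity
        · have : (m : ℝ) ≤ φ m := by exact_mod_cast hφ.le_apply
          linarith
      have hax : disp ν W f a x = 0 := tendsto_nhds_unique hda hto0
      have haxx : a • x = x := (hzero a x).1 hax
      have ha1 : a ≠ 1 := by
        have hge : (1:ℝ)/(n+1) ≤ dist a 1 := by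
          refine ge_of_tendsto (((continuous_id.dist continuous_const).tendsto a).comp hlim) ?_
          exact Eventually.of_forall fun m => le_of_lt (hd (φ m)).2.2
        intro h
        rw [h, dist_self] at hge
        have h01 : (0:ℝ) < 1/(n+1) := by positivity
        linarith
      exact ⟨a, haxx, ha1⟩
  have hmeasset : MeasurableSet ({x : X | ∀ g : G, g • x = x → g = 1}ᶜ) := by
    rw [main]
    refine MeasurableSet.iUnion fun n => MeasurableSet.iInter fun m => ?_
    refine MeasurableSet.biUnion (hDc.mono inter_subset_left) fun d _ => ?_
    exact measurableSet_lt (hmeas d) measurable_const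
  simpa using hmeasset.compl
end

section
/- Let G be a locally compact Polish group with modular function Δ, acting on a probability space (X,μ) preserving μ. Suppose c: X → (0,∞) is a measurable function satisfying c(g·x) = Δ(g)·c(x) for all g ∈ G and almost all x ∈ X. Then Δ(g) = 1 for all g ∈ G, i.e., G is unimodular. -/
open MeasureTheory

/-- If a locally compact Polish group `G` with modular function `Δ` acts on a probability
space preserving the measure, and there is a positive measurable function `c` with
`c(g • x) = Δ(g) * c(x)` for all `g` and almost all `x`, then `Δ ≡ 1`, i.e. `G` is
unimodular. -/
theorem unimodular_of_equivariant_density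
    (G : Type*) [Group G] [TopologicalSpace G] [IsTopologicalGroup G]
    [LocallyCompactSpace G] [PolishSpace G]
    [MeasurableSpace G] [BorelSpace G]
    (lam : Measure G) [lam.IsHaarMeasure]
    (Δ : G →* ℝ) (hΔpos : ∀ g, 0 < Δ g)
    (hΔmod : ∀ (g : G) (s : Set G), MeasurableSet s →
      lam ((fun h => h * g) '' s) = ENNReal.ofReal (Δ g) * lam s)
    (X : Type*) [MeasurableSpace X] (μ : Measure X) [IsProbabilityMeasure μ]
    [MulAction G X]
    (hBorel : Measurable fun p : G × X => p.1 • p.2)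
    (hmp : ∀ g : G, MeasurePreserving (fun x : X => g • x) μ μ)
    (c : X → ℝ) (hc : Measurable c) (hcpos : ∀ x, 0 < c x)
    (hcocycle : ∀ g : G, ∀ᵐ x ∂μ, c (g • x) = Δ g * c x) :
    ∀ g : G, Δ g = 1 := by
  have key : ∀ g : G, 1 < Δ g → False := by
    intro g hd
    have hd0 : (0:ℝ) < Δ g := hΔpos g
    set d := Δ g with hdd
    set A : ℤ → Set X := fun n => {x | d ^ n ≤ c x ∧ c x < d ^ (n+1)} with hA
    have hAm : ∀ n : ℤ, MeasurableSet (A n) := fun n =>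
      (measurableSet_le measurable_const hc).inter (measurableSet_lt hc measurable_const)
    have e1 : ∀ m : ℤ, d ^ (m+1) = d * d ^ m := fun m => by
      rw [zpow_add_one₀ hd0.ne', mul_comm]
    have hstep : ∀ n : ℤ, μ (A (n+1)) = μ (A n) := by
      intro n
      have h1 : μ ((fun x => g • x) ⁻¹' A (n+1)) = μ (A (n+1)) :=
        (hmp g).measure_preimage (hAm (n+1)).nullMeasurableSet
      rw [← h1]
      apply measure_congr
      filter_upwards [hcocycle g] with x hx
      have hx' : c (g • x) = d * c x := hx
      show ((fun x => g • x) ⁻¹' A (n+1)) x = A n x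
      rw [eq_iff_iff]
      show (d ^ (n+1) ≤ c (g • x) ∧ c (g • x) < d ^ (n+1+1)) ↔ (d ^ n ≤ c x ∧ c x < d ^ (n+1))
      rw [hx', e1 (n+1), e1 n]
      exact and_congr (mul_le_mul_iff_right₀ hd0) (mul_lt_mul_iff_right₀ hd0)
    have heq : ∀ n : ℤ, μ (A n) = μ (A 0) := by
      intro n
      induction n using Int.induction_on with
      | zero => rfl
      | succ i ih => rw [hstep i, ih]
      | pred i ih => rw [← ih, ← hstep (-i - 1)]; norm_num
    have hdisj : ∀ m n : ℤ, m < n → Disjoint (A m) (A n) := by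
      intro m n hmn
      rw [Set.disjoint_left]
      rintro x ⟨_, hx2⟩ ⟨hx3, _⟩
      have : d ^ (m+1) ≤ d ^ n := zpow_le_zpow_right₀ hd.le (by omega : m + 1 ≤ n)
      linarith
    have hP : Pairwise (Function.onFun Disjoint A) := by
      intro m n h
      rcases h.lt_or_gt with h | h
      · exact hdisj _ _ h
      · exact (hdisj _ _ h).symm
    have hU : (⋃ n, A n) = Set.univ := by
      apply Set.eq_univ_of_forall
      intro x
      obtain ⟨n, hn⟩ := exists_mem_Ico_zpow (hcpos x) hd
      exact Set.mem_iUnion.mpr ⟨n, hn.1, hn.2⟩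
    have hsum : (∑' n : ℤ, μ (A n)) = 1 := by
      rw [← measure_iUnion hP hAm, hU, measure_univ]
    rcases eq_or_ne (μ (A 0)) 0 with h0 | h0
    · have h1 : (1:ENNReal) = 0 := by
        rw [← hsum, tsum_congr heq]
        simp [h0]
      exact one_ne_zero h1
    · have ht : (∑' (n : ℤ), μ (A n)) = ⊤ := by
        rw [tsum_congr heq]
        exact ENNReal.tsum_const_eq_top_of_ne_zero h0
      rw [hsum] at ht
      exact ENNReal.one_ne_top ht
  intro g
  rcases lt_trichotomy (Δ g) 1 with h | h | h
  · exfalso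
    apply key g⁻¹
    have hinv : Δ g⁻¹ = (Δ g)⁻¹ :=
      eq_inv_of_mul_eq_one_left (by rw [← map_mul, inv_mul_cancel, map_one])
    rw [hinv]
    exact one_lt_inv₀ (hΔpos g) |>.mpr h
  · exact h
  · exact (key g h).elim
end

section
/- Let (Aₙ)ₙ be an increasing sequence of measurable subsets of a probability space (X,μ), let ε > 0, and for each n let Bₙ ⊆ Aₙ satisfy μ(Aₙ \ Bₙ) ≤ (1/ε)·(μ(Aₙ₊₁) − μ(Aₙ)). Set Cₙ := ⋂_{k ≥ n} Bₖ. Then μ(⋃ₙ Cₙ) = μ(⋃ₙ Aₙ). -/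
open MeasureTheory Filter Topology

/-- If `(Aₙ)` is an increasing sequence of measurable sets, `Bₙ ⊆ Aₙ`, and
`μ(Aₙ \ Bₙ) ≤ (1/ε)(μ(Aₙ₊₁) - μ(Aₙ))`, then with `Cₙ := ⋂_{k ≥ n} Bₖ` we have
`μ(⋃ₙ Cₙ) = μ(⋃ₙ Aₙ)`. -/
theorem measure_iUnion_iInter_eq
    (X : Type*) [MeasurableSpace X] (μ : Measure X) [IsProbabilityMeasure μ]
    (ε : ℝ) (hε : 0 < ε)
    (A B : ℕ → Set X)
    (hAmeas : ∀ n, MeasurableSet (A n)) (hBmeas : ∀ n, MeasurableSet (B n))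
    (hmono : ∀ n, A n ⊆ A (n + 1))
    (hBA : ∀ n, B n ⊆ A n)
    (hsmall : ∀ n, μ (A n \ B n) ≤ ENNReal.ofReal (1 / ε) * (μ (A (n + 1)) - μ (A n))) :
    μ (⋃ n, ⋂ k, ⋂ (_ : n ≤ k), B k) = μ (⋃ n, A n) := by
  set c := ENNReal.ofReal (1 / ε) with hc
  have hA : Monotone A := monotone_nat_of_le_succ hmono
  set L := ⋃ n, A n with hL
  set C : ℕ → Set X := fun n => ⋂ k, ⋂ (_ : n ≤ k), B k with hCdef
  have hCsub : ∀ n, C n ⊆ A n := by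
    intro n x hx
    exact hBA n (Set.mem_iInter₂.1 hx n le_rfl)
  have h1 : μ (⋃ n, C n) ≤ μ L :=
    measure_mono (Set.iUnion_subset fun n => (hCsub n).trans (Set.subset_iUnion A n))
  -- key claim: the difference is null
  have key : μ (L \ ⋃ m, C m) = 0 := by
    have bound : ∀ n, μ (L \ ⋃ m, C m) ≤ (1 + c) * μ (L \ A n) := by
      intro n
      have step1 : L \ ⋃ m, C m ⊆ (L \ A n) ∪ (A n \ C n) := by
        intro x hx
        by_cases h : x ∈ A n
        · right; exact ⟨h, fun hxC => hx.2 (Set.mem_iUnion.2 ⟨n, hxC⟩)⟩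
        · left; exact ⟨hx.1, h⟩
      have tsum_bound : (∑' j, (μ (A (n + j + 1)) - μ (A (n + j)))) ≤ μ (L \ A n) := by
        have heq : ∀ j : ℕ, μ (A (n + j + 1)) - μ (A (n + j)) = μ (A (n + j + 1) \ A (n + j)) := by
          intro j
          rw [measure_diff (hA (by omega)) (hAmeas _).nullMeasurableSet (measure_ne_top μ _)]
        have hdisj : Pairwise (Function.onFun Disjoint (fun j => A (n + j + 1) \ A (n + j))) := by
          intro i j hij
          rcases hij.lt_or_gt with h | h
          · exact Set.disjoint_left.2 fun x hxi hxj => hxj.2 (hA (by omega) hxi.1)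
          · exact Set.disjoint_left.2 fun x hxi hxj => hxi.2 (hA (by omega) hxj.1)
        calc (∑' j, (μ (A (n + j + 1)) - μ (A (n + j))))
            = ∑' j, μ (A (n + j + 1) \ A (n + j)) := by simp_rw [heq]
          _ = μ (⋃ j, A (n + j + 1) \ A (n + j)) :=
              (measure_iUnion hdisj fun j => (hAmeas _).diff (hAmeas _)).symm
          _ ≤ μ (L \ A n) := by
              refine measure_mono (Set.iUnion_subset fun j x hx => ?_)
              exact ⟨Set.mem_iUnion.2 ⟨n + j + 1, hx.1⟩, fun hxn => hx.2 (hA (by omega) hxn)⟩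
      have step2 : μ (A n \ C n) ≤ c * μ (L \ A n) := by
        have hsub : A n \ C n ⊆ ⋃ j, (A (n + j) \ B (n + j)) := by
          intro x hx
          obtain ⟨hxA, hxC⟩ := hx
          simp only [hCdef, Set.mem_iInter, not_forall] at hxC
          obtain ⟨k, hk, hxk⟩ := hxC
          refine Set.mem_iUnion.2 ⟨k - n, ?_⟩
          rw [Nat.add_sub_cancel' hk]
          exact ⟨hA hk hxA, hxk⟩
        calc μ (A n \ C n) ≤ ∑' j, μ (A (n + j) \ B (n + j)) :=
              (measure_mono hsub).trans (measure_iUnion_le _)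
          _ ≤ ∑' j, c * (μ (A (n + j + 1)) - μ (A (n + j))) :=
              ENNReal.tsum_le_tsum fun j => hsmall (n + j)
          _ = c * ∑' j, (μ (A (n + j + 1)) - μ (A (n + j))) := ENNReal.tsum_mul_left
          _ ≤ c * μ (L \ A n) := by gcongr
      calc μ (L \ ⋃ m, C m) ≤ μ ((L \ A n) ∪ (A n \ C n)) := measure_mono step1
        _ ≤ μ (L \ A n) + μ (A n \ C n) := measure_union_le _ _
        _ ≤ μ (L \ A n) + c * μ (L \ A n) := by gcongr
        _ = (1 + c) * μ (L \ A n) := by rw [add_mul, one_mul]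
    have hD : Tendsto (fun n => μ (L \ A n)) atTop (𝓝 0) := by
      have hiInter : ⋂ n, (L \ A n) = (∅ : Set X) := by
        rw [← Set.diff_iUnion, ← hL, Set.diff_self]
      have := tendsto_measure_iInter_atTop
        (μ := μ) (s := fun n => L \ A n)
        (fun n => ((MeasurableSet.iUnion hAmeas).diff (hAmeas n)).nullMeasurableSet)
        (fun i j hij => Set.diff_subset_diff_right (hA hij))
        ⟨0, measure_ne_top μ _⟩
      rwa [hiInter, measure_empty] at this
    have htend : Tendsto (fun n => (1 + c) * μ (L \ A n)) atTop (𝓝 0) := by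
      have : Tendsto (fun n => (1 + c) * μ (L \ A n)) atTop (𝓝 ((1 + c) * 0)) :=
        ENNReal.Tendsto.const_mul hD (Or.inr (by simp [hc]))
      simpa using this
    have := ge_of_tendsto' htend (fun n => bound n)
    exact le_antisymm this (zero_le)
  refine le_antisymm h1 ?_
  calc μ L ≤ μ ((⋃ m, C m) ∪ (L \ ⋃ m, C m)) := by
        refine measure_mono fun x hx => ?_
        by_cases h : x ∈ ⋃ m, C m
        · exact Or.inl h
        · exact Or.inr ⟨hx, h⟩
    _ ≤ μ (⋃ m, C m) + μ (L \ ⋃ m, C m) := measure_union_le _ _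
    _ = μ (⋃ m, C m) := by rw [key, add_zero]
end

section
/- The Bernoulli shift action of the infinite symmetric group S_∞ on ([0,1]^ℕ, λ^⊗ℕ) is suitable: for all Borel sets A, B of positive measure, either for every open neighborhood O of the identity there is g ∈ O with μ(A ∩ gB) > 0, or there exist full-measure subsets A' ⊆ A, B' ⊆ B and a neighborhood O of the identity with (O·A') ∩ B' = ∅. -/
open MeasureTheory
open scoped ENNReal

/-- The Polish topology of pointwise convergence on the infinite symmetric group `S_∞`,
induced by the embedding `g ↦ (g, g⁻¹)` into `(ℕ → ℕ) × (ℕ → ℕ)`. -/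
noncomputable instance permTopology : TopologicalSpace (Equiv.Perm ℕ) :=
  TopologicalSpace.induced
    (fun g : Equiv.Perm ℕ => ((g : ℕ → ℕ), (g.symm : ℕ → ℕ))) inferInstance

/-- The Bernoulli shift of `S_∞` on `[0,1]^ℕ`. -/
noncomputable def bernoulliShift (g : Equiv.Perm ℕ) (x : ℕ → ℝ) : ℕ → ℝ :=
  fun n => x (g.symm n)

namespace BernoulliAux

noncomputable def lam0 : Measure ℝ := volume.restrict (Set.Icc 0 1)

instance : IsProbabilityMeasure lam0 :=
  ⟨by simp [lam0, Real.volume_Icc]⟩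

noncomputable def P (n : ℕ) : Measure (Fin n → ℝ) := Measure.pi fun _ => lam0

instance (n : ℕ) : IsProbabilityMeasure (P n) := by
  unfold P; infer_instance

def proj (n : ℕ) (x : ℕ → ℝ) : Fin n → ℝ := fun i => x i

lemma measurable_proj (n : ℕ) : Measurable (proj n) :=
  measurable_pi_lambda _ fun i => measurable_pi_apply _

/-- The π-system of measurable cylinder sets. -/
def cylSets : Set (Set (ℕ → ℝ)) :=
  {t | ∃ (s : Finset ℕ) (f : ℕ → Set ℝ), (∀ i, MeasurableSet (f i)) ∧
    t = {x | ∀ i ∈ s, x i ∈ f i}}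

lemma isPiSystem_cylSets : IsPiSystem cylSets := by
  rintro t₁ ⟨s₁, f₁, hf₁, rfl⟩ t₂ ⟨s₂, f₂, hf₂, rfl⟩ -
  refine ⟨s₁ ∪ s₂, fun i =>
    (if i ∈ s₁ then f₁ i else Set.univ) ∩ (if i ∈ s₂ then f₂ i else Set.univ), ?_, ?_⟩
  · intro i
    refine MeasurableSet.inter ?_ ?_ <;> split <;>
      first | exact hf₁ i | exact hf₂ i | exact MeasurableSet.univ
  · ext x
    simp only [Set.mem_inter_iff, Set.mem_setOf_eq, Finset.mem_union]
    constructor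
    · rintro ⟨h1, h2⟩ i hi
      constructor <;> split <;> first | exact h1 i ‹_› | exact h2 i ‹_› | trivial
    · intro h
      constructor <;> intro i hi
      · have := (h i (Or.inl hi)).1
        rwa [if_pos hi] at this
      · have := (h i (Or.inr hi)).2
        rwa [if_pos hi] at this

lemma measurableSet_of_cyl {t : Set (ℕ → ℝ)} (ht : t ∈ cylSets) : MeasurableSet t := by
  obtain ⟨s, f, hf, rfl⟩ := ht
  have : {x : ℕ → ℝ | ∀ i ∈ s, x i ∈ f i} = ⋂ i ∈ s, (fun x : ℕ → ℝ => x i) ⁻¹' f i := by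
    ext x; simp
  rw [this]
  exact MeasurableSet.biInter s.countable_toSet fun i _ =>
    (measurable_pi_apply i) (hf i)

lemma pi_eq_generateFrom_cyl :
    (MeasurableSpace.pi : MeasurableSpace (ℕ → ℝ)) = MeasurableSpace.generateFrom cylSets := by
  refine le_antisymm ?_ ?_
  · rw [MeasurableSpace.pi]
    refine iSup_le fun i => ?_
    rw [MeasurableSpace.comap_le_iff_le_map]
    intro t ht
    refine MeasurableSpace.measurableSet_generateFrom ?_
    refine ⟨{i}, fun _ => t, fun _ => ht, ?_⟩
    ext x; simp [MeasurableSpace.map]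
  · rw [MeasurableSpace.generateFrom_le_iff]
    intro t ht
    exact measurableSet_of_cyl ht

end BernoulliAux

namespace BernoulliAux

variable {μ : Measure (ℕ → ℝ)} [IsProbabilityMeasure μ]
  (hμ : ∀ (s : Finset ℕ) (f : ℕ → Set ℝ), (∀ i, MeasurableSet (f i)) →
      μ {x | ∀ i ∈ s, x i ∈ f i}
        = ∏ i ∈ s, (MeasureTheory.volume.restrict (Set.Icc (0:ℝ) 1)) (f i))

omit hμ in
lemma shift_measurable (g : Equiv.Perm ℕ) : Measurable (bernoulliShift g) :=
  measurable_pi_lambda _ fun n => measurable_pi_apply _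

include hμ

lemma marginal (n : ℕ) : Measure.map (proj n) μ = P n := by
  refine (Measure.pi_eq fun t ht => ?_).symm
  rw [Measure.map_apply (measurable_proj n) (MeasurableSet.univ_pi ht)]
  have hset : proj n ⁻¹' Set.pi Set.univ t
      = {x : ℕ → ℝ | ∀ i ∈ Finset.range n, x i ∈ (fun j : ℕ =>
          if h : j < n then t ⟨j, h⟩ else Set.univ) i} := by
    ext x
    simp only [Set.mem_preimage, Set.mem_pi, Set.mem_univ, forall_true_left,
      Set.mem_setOf_eq, Finset.mem_range, proj]
    constructor
    · intro h j hj
      simpa [dif_pos hj] using h ⟨j, hj⟩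
    · intro h i
      have := h i i.isLt
      simpa [dif_pos i.isLt] using this
  rw [hset, hμ (Finset.range n) _ (fun j => by split <;> simp_all [ht])]
  rw [← Fin.prod_univ_eq_prod_range (fun j =>
    (volume.restrict (Set.Icc (0:ℝ) 1)) (if h : j < n then t ⟨j, h⟩ else Set.univ)) n]
  exact Finset.prod_congr rfl fun i _ => by simp [lam0]



lemma shift_invariant (g : Equiv.Perm ℕ) :
    Measure.map (bernoulliShift g) μ = μ := by
  have : IsProbabilityMeasure (Measure.map (bernoulliShift g) μ) :=
    Measure.isProbabilityMeasure_map (shift_measurable g).aemeasurable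
  refine ext_of_generate_finite cylSets pi_eq_generateFrom_cyl isPiSystem_cylSets ?_ (by simp)
  rintro t ⟨s, f, hf, rfl⟩
  rw [Measure.map_apply (shift_measurable g) (measurableSet_of_cyl ⟨s, f, hf, rfl⟩)]
  have hset : bernoulliShift g ⁻¹' {x | ∀ i ∈ s, x i ∈ f i}
      = {x : ℕ → ℝ | ∀ i ∈ Finset.image (⇑g.symm) s, x i ∈ (fun j => f (g j)) i} := by
    ext x
    simp only [Set.mem_preimage, Set.mem_setOf_eq, bernoulliShift, Finset.mem_image]
    constructor
    · rintro h i ⟨j, hj, rfl⟩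
      simpa using h j hj
    · intro h i hi
      have := h (g.symm i) ⟨i, hi, rfl⟩
      simpa using this
  rw [hset, hμ _ _ (fun j => hf (g j)), hμ s f hf]
  rw [Finset.prod_image (by intro a _ b _ hab; exact g.symm.injective hab)]
  refine Finset.prod_congr rfl fun i _ => by simp

end BernoulliAux

namespace BernoulliAux

variable {μ : Measure (ℕ → ℝ)} [IsProbabilityMeasure μ]
  (hμ : ∀ (s : Finset ℕ) (f : ℕ → Set ℝ), (∀ i, MeasurableSet (f i)) →
      μ {x | ∀ i ∈ s, x i ∈ f i}
        = ∏ i ∈ s, (MeasureTheory.volume.restrict (Set.Icc (0:ℝ) 1)) (f i))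

def res {n m : ℕ} (h : n ≤ m) (u : Fin m → ℝ) : Fin n → ℝ := fun i => u (Fin.castLE h i)

omit [IsProbabilityMeasure μ] in
lemma measurable_res {n m : ℕ} (h : n ≤ m) : Measurable (res h) :=
  measurable_pi_lambda _ fun i => measurable_pi_apply _

omit [IsProbabilityMeasure μ] in
lemma proj_preimage_pad {n m : ℕ} (h : n ≤ m) (S : Set (Fin n → ℝ)) :
    proj n ⁻¹' S = proj m ⁻¹' (res h ⁻¹' S) := rfl

omit [IsProbabilityMeasure μ] in
lemma cyl_eq_proj_preimage {t : Set (ℕ → ℝ)} (ht : t ∈ cylSets) :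
    ∃ n S, MeasurableSet S ∧ t = proj n ⁻¹' S := by
  obtain ⟨s, f, hf, rfl⟩ := ht
  refine ⟨s.sup id + 1, {u : Fin (s.sup id + 1) → ℝ | ∀ i ∈ s, ∀ h : i < s.sup id + 1,
    u ⟨i, h⟩ ∈ f i}, ?_, ?_⟩
  · have : {u : Fin (s.sup id + 1) → ℝ | ∀ i ∈ s, ∀ h : i < s.sup id + 1, u ⟨i, h⟩ ∈ f i}
        = ⋂ i ∈ s, ⋂ h : i < s.sup id + 1, (fun u : Fin (s.sup id + 1) → ℝ => u ⟨i, h⟩) ⁻¹' f i := by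
      ext u; simp
    rw [this]
    exact MeasurableSet.biInter s.countable_toSet fun i _ =>
      MeasurableSet.iInter fun h => (measurable_pi_apply _) (hf i)
  · ext x
    simp only [Set.mem_setOf_eq, Set.mem_preimage, proj]
    constructor
    · intro hx i hi _; exact hx i hi
    · intro hx i hi
      exact hx i hi (Nat.lt_succ_of_le (Finset.le_sup (f := id) hi))

lemma approx {A : Set (ℕ → ℝ)} (hA : MeasurableSet A) {ε : ℝ≥0∞} (hε : 0 < ε) :
    ∃ n S, MeasurableSet S ∧ μ (symmDiff A (proj n ⁻¹' S)) < ε := by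
  -- reduce to ε finite
  wlog hεtop : ε ≠ ⊤ generalizing ε
  · obtain ⟨n, S, hS, hlt⟩ := this (ε := 1) one_pos ENNReal.one_ne_top
    exact ⟨n, S, hS, hlt.trans_le (by simp_all)⟩
  -- the class of approximable sets is a σ-algebra
  let D : MeasurableSpace (ℕ → ℝ) :=
  { MeasurableSet' := fun t => MeasurableSet t ∧ ∀ δ : ℝ≥0∞, 0 < δ → δ ≠ ⊤ →
      ∃ n S, MeasurableSet S ∧ μ (symmDiff t (proj n ⁻¹' S)) < δ
    measurableSet_empty := ⟨MeasurableSet.empty, fun δ hδ _ =>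
      ⟨0, ∅, MeasurableSet.empty, by simpa [symmDiff_self] using hδ⟩⟩
    measurableSet_compl := by
      rintro t ⟨ht, hap⟩
      refine ⟨ht.compl, fun δ hδ hδt => ?_⟩
      obtain ⟨n, S, hS, hlt⟩ := hap δ hδ hδt
      refine ⟨n, Sᶜ, hS.compl, ?_⟩
      rw [show proj n ⁻¹' Sᶜ = (proj n ⁻¹' S)ᶜ from rfl, compl_symmDiff_compl]
      exact hlt
    measurableSet_iUnion := by
      rintro f hf
      refine ⟨MeasurableSet.iUnion fun k => (hf k).1, fun δ hδ hδt => ?_⟩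
      set δ2 := δ / 2 with hδ2
      have hδ2top : δ2 ≠ ⊤ := by simp [hδ2, ENNReal.div_eq_top, hδt]
      have hδ2pos : 0 < δ2 := ENNReal.div_pos hδ.ne' (by norm_num)
      -- find a finite truncation
      have htend := tendsto_measure_iUnion_atTop (μ := μ) (Set.monotone_accumulate (s := f))
      rw [Set.iUnion_accumulate] at htend
      have hfin : μ (⋃ k, f k) ≠ ⊤ := measure_ne_top μ _
      obtain ⟨N, hN⟩ : ∃ N, μ (⋃ k, f k) < μ (Set.accumulate f N) + δ2 := by
        rcases eq_or_ne (μ (⋃ k, f k)) 0 with h0 | h0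
        · exact ⟨0, by simp [h0, hδ2pos]⟩
        · have hlt : μ (⋃ k, f k) - δ2 < μ (⋃ k, f k) :=
            ENNReal.sub_lt_self hfin h0 hδ2pos.ne'
          obtain ⟨N, hN⟩ := (Filter.Tendsto.eventually_const_lt hlt htend).exists
          refine ⟨N, ?_⟩
          calc μ (⋃ k, f k) ≤ (μ (⋃ k, f k) - δ2) + δ2 := le_tsub_add
          _ < μ (Set.accumulate f N) + δ2 := by
              exact ENNReal.add_lt_add_of_lt_of_le hδ2top hN le_rfl
      have hAccMeas : MeasurableSet (Set.accumulate f N) :=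
        MeasurableSet.biUnion (Set.to_countable _) fun k _ => (hf k).1
      have htrunc : μ ((⋃ k, f k) \ Set.accumulate f N) < δ2 := by
        rw [measure_diff (Set.accumulate_subset_iUnion N) hAccMeas.nullMeasurableSet
            (measure_ne_top μ _)]
        exact ENNReal.sub_lt_of_lt_add (measure_mono (Set.accumulate_subset_iUnion N))
          (by rwa [add_comm] at hN)
      -- approximate each piece
      set δ3 := δ2 / (N + 1 : ℕ) with hδ3
      have hδ3pos : 0 < δ3 := ENNReal.div_pos hδ2pos.ne' (by simp)
      have hδ3top : δ3 ≠ ⊤ := by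
        simp [hδ3, ENNReal.div_eq_top, hδ2top]
      choose n S hS hlt using fun k : Fin (N + 1) => (hf k).2 δ3 hδ3pos hδ3top
      set m := Finset.univ.sup n with hm
      have hnm : ∀ k, n k ≤ m := fun k => Finset.le_sup (Finset.mem_univ k)
      set T : Set (Fin m → ℝ) := ⋃ k, res (hnm k) ⁻¹' S k with hT
      have hTmeas : MeasurableSet T :=
        MeasurableSet.iUnion fun k => measurable_res (hnm k) (hS k)
      refine ⟨m, T, hTmeas, ?_⟩
      have hpre : proj m ⁻¹' T = ⋃ k : Fin (N+1), proj (n k) ⁻¹' S k := by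
        rw [hT, Set.preimage_iUnion]
        exact Set.iUnion_congr fun k => (proj_preimage_pad (hnm k) (S k)).symm
      have hsub1 : symmDiff (Set.accumulate f N) (proj m ⁻¹' T)
          ⊆ ⋃ k : Fin (N+1), symmDiff (f k) (proj (n k) ⁻¹' S k) := by
        rw [hpre]
        have hAcc : Set.accumulate f N = ⋃ k : Fin (N+1), f k := by
          ext x
          simp only [Set.mem_accumulate, Set.mem_iUnion]
          constructor
          · rintro ⟨k, hk, hx⟩; exact ⟨⟨k, Nat.lt_succ_of_le hk⟩, hx⟩
          · rintro ⟨k, hx⟩; exact ⟨k, Nat.lt_succ_iff.mp k.isLt, hx⟩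
        rw [hAcc]
        rintro x hx
        rcases hx with hx | hx
        · obtain ⟨hx1, hx2⟩ := hx
          simp only [Set.mem_iUnion] at hx1 hx2 ⊢
          obtain ⟨k, hk⟩ := hx1
          exact ⟨k, Or.inl ⟨hk, fun h => hx2 ⟨k, h⟩⟩⟩
        · obtain ⟨hx1, hx2⟩ := hx
          simp only [Set.mem_iUnion] at hx1 hx2 ⊢
          obtain ⟨k, hk⟩ := hx1
          exact ⟨k, Or.inr ⟨hk, fun h => hx2 ⟨k, h⟩⟩⟩
      have hsum : μ (symmDiff (Set.accumulate f N) (proj m ⁻¹' T)) ≤ δ2 := by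
        refine le_trans (measure_mono hsub1) ?_
        refine le_trans (measure_iUnion_le _) ?_
        calc ∑' k : Fin (N+1), μ (symmDiff (f k) (proj (n k) ⁻¹' S k))
            ≤ ∑' _ : Fin (N+1), δ3 := ENNReal.tsum_le_tsum fun k => (hlt k).le
          _ = (N + 1 : ℕ) * δ3 := by
              rw [tsum_fintype]; simp [Finset.sum_const, mul_comm]
          _ = δ2 := by
              rw [hδ3, ENNReal.mul_div_cancel' (by simp) (by simp)]
      have htri : symmDiff (⋃ k, f k) (proj m ⁻¹' T)
          ⊆ symmDiff (⋃ k, f k) (Set.accumulate f N)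
            ∪ symmDiff (Set.accumulate f N) (proj m ⁻¹' T) := symmDiff_triangle _ _ _
      have heq : symmDiff (⋃ k, f k) (Set.accumulate f N) = (⋃ k, f k) \ Set.accumulate f N :=
        symmDiff_of_ge (Set.accumulate_subset_iUnion N)
      calc μ (symmDiff (⋃ k, f k) (proj m ⁻¹' T))
          ≤ μ (symmDiff (⋃ k, f k) (Set.accumulate f N))
            + μ (symmDiff (Set.accumulate f N) (proj m ⁻¹' T)) :=
            le_trans (measure_mono htri) (measure_union_le _ _)
        _ < δ2 + δ2 := ENNReal.add_lt_add_of_lt_of_le (measure_ne_top μ _) (heq ▸ htrunc) hsum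
        _ = δ := ENNReal.add_halves δ }
  have hle : (MeasurableSpace.pi : MeasurableSpace (ℕ → ℝ)) ≤ D := by
    rw [pi_eq_generateFrom_cyl]
    refine MeasurableSpace.generateFrom_le fun t ht => ?_
    refine ⟨measurableSet_of_cyl ht, fun δ hδ _ => ?_⟩
    obtain ⟨n, S, hS, rfl⟩ := cyl_eq_proj_preimage ht
    exact ⟨n, S, hS, by simpa [symmDiff_self] using hδ⟩
  exact (hle A hA).2 ε hε hεtop

end BernoulliAux

namespace BernoulliAux

noncomputable def E (m d : ℕ) : (Fin (m + d) → ℝ) ≃ᵐ (Fin m → ℝ) × (Fin d → ℝ) :=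
  ((MeasurableEquiv.piCongrLeft (fun _ : Fin (m + d) => ℝ) finSumFinEquiv).symm).trans
    (MeasurableEquiv.sumPiEquivProdPi fun _ : Fin m ⊕ Fin d => ℝ)

lemma E_measurePreserving (m d : ℕ) :
    MeasurePreserving (E m d) (P (m + d)) ((P m).prod (P d)) := by
  have h1 : MeasurePreserving (MeasurableEquiv.piCongrLeft (fun _ : Fin (m + d) => ℝ)
      finSumFinEquiv).symm (P (m + d)) (Measure.pi fun _ : Fin m ⊕ Fin d => lam0) :=
    (measurePreserving_piCongrLeft (fun _ : Fin (m + d) => lam0) finSumFinEquiv).symm _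
  have h2 : MeasurePreserving (MeasurableEquiv.sumPiEquivProdPi fun _ : Fin m ⊕ Fin d => ℝ)
      (Measure.pi fun _ : Fin m ⊕ Fin d => lam0) ((P m).prod (P d)) :=
    measurePreserving_sumPiEquivProdPi fun _ => lam0
  exact h2.comp h1

lemma E_fst {m d : ℕ} (u : Fin (m + d) → ℝ) (i : Fin m) :
    (E m d u).1 i = u (Fin.castAdd d i) := rfl

lemma E_snd {m d : ℕ} (u : Fin (m + d) → ℝ) (j : Fin d) :
    (E m d u).2 j = u (Fin.natAdd m j) := rfl

lemma Esymm_apply {m d : ℕ} (p : (Fin m → ℝ) × (Fin d → ℝ)) (j : Fin (m + d)) :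
    (E m d).symm p j = if h : (j : ℕ) < m then p.1 ⟨j, h⟩
      else p.2 ⟨(j : ℕ) - m, by omega⟩ := by
  by_cases h : (j : ℕ) < m
  · rw [dif_pos h]
    have key := E_fst ((E m d).symm p) ⟨j, h⟩
    rw [MeasurableEquiv.apply_symm_apply] at key
    rw [key]
    congr 1
  · rw [dif_neg h]
    have key := E_snd ((E m d).symm p) ⟨(j : ℕ) - m, by omega⟩
    rw [MeasurableEquiv.apply_symm_apply] at key
    rw [key]
    exact congrArg _ (Fin.ext (show (↑j : ℕ) = m + (↑j - m) by omega))

end BernoulliAux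

namespace BernoulliAux

open scoped ENNReal

variable {μ : Measure (ℕ → ℝ)} [IsProbabilityMeasure μ]
  (hμ : ∀ (s : Finset ℕ) (f : ℕ → Set ℝ), (∀ i, MeasurableSet (f i)) →
      μ {x | ∀ i ∈ s, x i ∈ f i}
        = ∏ i ∈ s, (MeasureTheory.volume.restrict (Set.Icc (0:ℝ) 1)) (f i))

include hμ

/-- Fiber measure. -/
noncomputable def fib (d : ℕ) {m : ℕ} (W : Set ((Fin m → ℝ) × (Fin d → ℝ)))
    (y : Fin m → ℝ) : ℝ≥0∞ := P d (Prod.mk y ⁻¹' W)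

omit [IsProbabilityMeasure μ] hμ in
lemma measurable_fib {d m : ℕ} {W : Set ((Fin m → ℝ) × (Fin d → ℝ))}
    (hW : MeasurableSet W) : Measurable (fib d W) :=
  measurable_measure_prodMk_left hW

omit [IsProbabilityMeasure μ] hμ in
lemma fib_le_one {d m : ℕ} (W : Set ((Fin m → ℝ) × (Fin d → ℝ))) (y : Fin m → ℝ) :
    fib d W y ≤ 1 := by
  refine le_trans (measure_mono (Set.subset_univ _)) ?_
  simp [fib]

omit [IsProbabilityMeasure μ] hμ in
lemma PK_apply (m d : ℕ) {T : Set (Fin (m + d) → ℝ)} (hT : MeasurableSet T) :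
    P (m + d) T = ((P m).prod (P d)) ((E m d).symm ⁻¹' T) := by
  have h := (E_measurePreserving m d).map_eq
  have hpre : MeasurableSet ((E m d).symm ⁻¹' T) := (E m d).symm.measurable hT
  rw [← h, Measure.map_apply (E m d).measurable hpre]
  congr 1
  ext u
  simp

omit [IsProbabilityMeasure μ] hμ in
lemma resM_Esymm {m d : ℕ} (p : (Fin m → ℝ) × (Fin d → ℝ)) :
    res (Nat.le_add_right m d) ((E m d).symm p) = p.1 := by
  funext i
  have : ((Fin.castLE (Nat.le_add_right m d) i : Fin (m + d)) : ℕ) < m := i.isLt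
  rw [res, Esymm_apply, dif_pos this]
  exact congrArg _ (Fin.ext rfl)

lemma marg_apply (n : ℕ) {S : Set (Fin n → ℝ)} (hS : MeasurableSet S) :
    μ (proj n ⁻¹' S) = P n S := by
  rw [← marginal hμ n, Measure.map_apply (measurable_proj n) hS]

/-- The conditional measure of `A` given the first `M` coordinates, as a measure on
`Fin M → ℝ`. -/
noncomputable def nu (μ : Measure (ℕ → ℝ)) (M : ℕ) (A : Set (ℕ → ℝ)) :
    Measure (Fin M → ℝ) := Measure.map (proj M) (μ.restrict A)

omit [IsProbabilityMeasure μ] hμ in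
lemma nu_apply {M : ℕ} (A : Set (ℕ → ℝ)) {S : Set (Fin M → ℝ)} (hS : MeasurableSet S) :
    nu μ M A S = μ (A ∩ proj M ⁻¹' S) := by
  rw [nu, Measure.map_apply (measurable_proj M) hS,
    Measure.restrict_apply ((measurable_proj M) hS), Set.inter_comm]

omit [IsProbabilityMeasure μ] hμ in
instance {M : ℕ} {A : Set (ℕ → ℝ)} : IsFiniteMeasure (nu μ M A) := by
  constructor
  rw [nu_apply A MeasurableSet.univ]
  exact (measure_mono (Set.inter_subset_left)).trans_lt (measure_lt_top μ A)

lemma nu_absCont {M : ℕ} (A : Set (ℕ → ℝ)) : nu μ M A ≪ P M := by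
  refine Measure.AbsolutelyContinuous.mk fun S hSm hS0 => ?_
  rw [nu_apply A hSm]
  refine measure_mono_null Set.inter_subset_right ?_
  rw [marg_apply hμ M hSm, hS0]

omit [IsProbabilityMeasure μ] hμ in
lemma nu_union {M : ℕ} {A₁ A₂ : Set (ℕ → ℝ)} (hd : Disjoint A₁ A₂) (h₂ : MeasurableSet A₂) :
    nu μ M (A₁ ∪ A₂) = nu μ M A₁ + nu μ M A₂ := by
  rw [nu, Measure.restrict_union hd h₂, Measure.map_add _ _ (measurable_proj M)]
  rfl

/-- Density identity for a cylinder set. -/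
lemma nu_cyl (M d : ℕ) {SA : Set (Fin (M + d) → ℝ)} (hSA : MeasurableSet SA) :
    nu μ M (proj (M + d) ⁻¹' SA)
      = (P M).withDensity (fib d ((E M d).symm ⁻¹' SA)) := by
  set WA := (E M d).symm ⁻¹' SA with hWA
  have hWAm : MeasurableSet WA := (E M d).symm.measurable hSA
  refine Measure.ext fun S hS => ?_
  rw [nu_apply _ hS, withDensity_apply _ hS]
  have hres : proj M ⁻¹' S = proj (M + d) ⁻¹' (res (Nat.le_add_right M d) ⁻¹' S) :=
    proj_preimage_pad _ S
  have hresm : MeasurableSet (res (Nat.le_add_right M d) ⁻¹' S) :=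
    measurable_res _ hS
  rw [hres, ← Set.preimage_inter, marg_apply hμ _ (hSA.inter hresm),
    PK_apply M d (hSA.inter hresm)]
  have hsplit : (E M d).symm ⁻¹' (SA ∩ res (Nat.le_add_right M d) ⁻¹' S)
      = WA ∩ Prod.fst ⁻¹' S := by
    ext p
    simp only [Set.mem_preimage, Set.mem_inter_iff, hWA]
    rw [resM_Esymm]
  rw [hsplit, Measure.prod_apply (hWAm.inter (measurable_fst hS))]
  rw [← lintegral_indicator hS]
  refine lintegral_congr fun y => ?_
  by_cases hy : y ∈ S
  · have : Prod.mk y ⁻¹' (WA ∩ Prod.fst ⁻¹' S) = Prod.mk y ⁻¹' WA := by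
      ext w; simp [hy]
    rw [this, Set.indicator_of_mem hy]
    rfl
  · have : Prod.mk y ⁻¹' (WA ∩ Prod.fst ⁻¹' S) = (∅ : Set (Fin d → ℝ)) := by
      ext w; simp [hy]
    rw [this, Set.indicator_of_notMem hy]
    simp

end BernoulliAux

namespace BernoulliAux

open scoped ENNReal

variable {μ : Measure (ℕ → ℝ)} [IsProbabilityMeasure μ]
  (hμ : ∀ (s : Finset ℕ) (f : ℕ → Set ℝ), (∀ i, MeasurableSet (f i)) →
      μ {x | ∀ i ∈ s, x i ∈ f i}
        = ∏ i ∈ s, (MeasureTheory.volume.restrict (Set.Icc (0:ℝ) 1)) (f i))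

def phi (M d : ℕ) : ℕ → ℕ := fun i =>
  if M ≤ i ∧ i < M + d then i + d
  else if M + d ≤ i ∧ i < M + d + d then i - d else i

lemma phi_invol (M d : ℕ) : Function.Involutive (phi M d) := by
  intro i
  unfold phi
  split_ifs <;> omega

noncomputable def blockSwap (M d : ℕ) : Equiv.Perm ℕ :=
  Function.Involutive.toPerm _ (phi_invol M d)

lemma blockSwap_apply (M d : ℕ) (i : ℕ) : blockSwap M d i = phi M d i := rfl

lemma blockSwap_symm_apply (M d : ℕ) (i : ℕ) : (blockSwap M d).symm i = phi M d i := rfl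

lemma blockSwap_fix (M d : ℕ) {i : ℕ} (hi : i < M) : blockSwap M d i = i := by
  rw [blockSwap_apply, phi]
  split_ifs <;> omega

lemma shift_image (g : Equiv.Perm ℕ) (T : Set (ℕ → ℝ)) :
    bernoulliShift g '' T = (fun x (n : ℕ) => x (g n)) ⁻¹' T := by
  ext x
  constructor
  · rintro ⟨b, hb, rfl⟩
    have : (fun n => bernoulliShift g b (g n)) = b := by
      funext n; simp [bernoulliShift]
    simpa [Set.mem_preimage, this]
  · intro hx
    refine ⟨fun n => x (g n), hx, ?_⟩
    funext n
    simp [bernoulliShift]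

omit [IsProbabilityMeasure μ] hμ in
lemma shift_image_measure (g : Equiv.Perm ℕ) {T : Set (ℕ → ℝ)} (hT : MeasurableSet T) :
    ∀ (hinv : Measure.map (bernoulliShift g⁻¹) μ = μ),
    μ (bernoulliShift g '' T) = μ T := by
  intro hinv
  have hco : (fun x (n : ℕ) => x (g n)) = bernoulliShift g⁻¹ := by
    funext x n
    simp [bernoulliShift, Equiv.Perm.inv_def]
  rw [shift_image, hco, ← Measure.map_apply (shift_measurable g⁻¹) hT, hinv]

include hμ

/-- The key product formula: for cylinder sets on the first `M + d` coordinates, pushing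
the block `[M, M+d)` to `[M+d, M+2d)` makes them conditionally independent given the
first `M` coordinates. -/
lemma key_formula (M d : ℕ) {SA SB : Set (Fin (M + d) → ℝ)}
    (hSA : MeasurableSet SA) (hSB : MeasurableSet SB) :
    μ (proj (M + d) ⁻¹' SA ∩ bernoulliShift (blockSwap M d) '' (proj (M + d) ⁻¹' SB))
      = ∫⁻ y, fib d ((E M d).symm ⁻¹' SA) y * fib d ((E M d).symm ⁻¹' SB) y ∂P M := by
  classical
  set WA := (E M d).symm ⁻¹' SA with hWA
  set WB := (E M d).symm ⁻¹' SB with hWB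
  have hWAm : MeasurableSet WA := (E M d).symm.measurable hSA
  have hWBm : MeasurableSet WB := (E M d).symm.measurable hSB
  -- the permuted-index embedding
  have hphi_lt : ∀ i : Fin (M + d), phi M d i < M + d + d := by
    intro i
    have := i.isLt
    unfold phi
    split_ifs <;> omega
  set emb : Fin (M + d) → Fin (M + d + d) := fun i => ⟨phi M d i, hphi_lt i⟩ with hemb
  -- the intersection as a cylinder at level M + d + d
  have himg : bernoulliShift (blockSwap M d) '' (proj (M + d) ⁻¹' SB)
      = proj (M + d + d) ⁻¹' {u | (fun i : Fin (M + d) => u (emb i)) ∈ SB} := by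
    rw [shift_image]
    ext x
    simp only [Set.mem_preimage, Set.mem_setOf_eq]
    rfl
  have hcyl : proj (M + d) ⁻¹' SA = proj (M + d + d) ⁻¹' {u | (fun i : Fin (M + d) => u (Fin.castAdd d i)) ∈ SA} := by
    ext x
    simp only [Set.mem_preimage, Set.mem_setOf_eq]
    rfl
  set V : Set (Fin (M + d + d) → ℝ) := {u | (fun i : Fin (M + d) => u (Fin.castAdd d i)) ∈ SA}
    ∩ {u | (fun i : Fin (M + d) => u (emb i)) ∈ SB} with hV
  have hVa : MeasurableSet {u : Fin (M + d + d) → ℝ | (fun i : Fin (M + d) => u (Fin.castAdd d i)) ∈ SA} :=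
    (measurable_pi_lambda _ fun i => measurable_pi_apply _) hSA
  have hVb : MeasurableSet {u : Fin (M + d + d) → ℝ | (fun i : Fin (M + d) => u (emb i)) ∈ SB} :=
    (measurable_pi_lambda _ fun i => measurable_pi_apply _) hSB
  have hVm : MeasurableSet V := hVa.inter hVb
  have hstep1 : proj (M + d) ⁻¹' SA ∩ bernoulliShift (blockSwap M d) '' (proj (M + d) ⁻¹' SB)
      = proj (M + d + d) ⁻¹' V := by
    rw [himg, hcyl, hV, Set.preimage_inter]
  rw [hstep1, marg_apply hμ _ hVm, PK_apply (M + d) d hVm]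
  -- identify the preimage under the splitting at (M + d)
  have hsplit : (E (M + d) d).symm ⁻¹' V
      = {p : (Fin (M + d) → ℝ) × (Fin d → ℝ) | p.1 ∈ SA ∧
          (res (Nat.le_add_right M d) p.1, p.2) ∈ WB} := by
    ext p
    have h1 : (fun i : Fin (M + d) => (E (M + d) d).symm p (Fin.castAdd d i)) = p.1 := by
      funext i
      rw [Esymm_apply]
      have hi : ((Fin.castAdd d i : Fin (M + d + d)) : ℕ) < (M + d) := i.isLt
      rw [dif_pos hi]
      exact congrArg _ (Fin.ext rfl)
    have h2 : (fun i : Fin (M + d) => (E (M + d) d).symm p (emb i))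
        = (E M d).symm (res (Nat.le_add_right M d) p.1, p.2) := by
      funext i
      rw [Esymm_apply, Esymm_apply]
      by_cases hi : (i : ℕ) < M
      · have hKlt : phi M d i < (M + d) := by unfold phi; split_ifs <;> omega
        have hphieq : phi M d (i : ℕ) = (i : ℕ) := by unfold phi; split_ifs <;> omega
        rw [dif_pos (show ((emb i : Fin (M + d + d)) : ℕ) < (M + d) from hKlt), dif_pos hi]
        show p.1 _ = res (Nat.le_add_right M d) p.1 ⟨(i : ℕ), hi⟩
        rw [res]
        exact congrArg _ (Fin.ext (by simp [hemb, hphieq]))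
      · have hge : ¬ ((emb i : Fin (M + d + d)) : ℕ) < (M + d) := by
          have := i.isLt
          simp only [hemb]
          unfold phi
          split_ifs <;> omega
        rw [dif_neg hge, dif_neg hi]
        refine congrArg _ (Fin.ext ?_)
        show ((emb i : Fin ((M + d)+d)) : ℕ) - (M + d) = (i : ℕ) - M
        have := i.isLt
        simp only [hemb]
        unfold phi
        split_ifs <;> omega
    simp only [hV, Set.mem_preimage, Set.mem_inter_iff, Set.mem_setOf_eq, h1, h2, hWB]
  rw [hsplit]
  -- Fubini over the product
  have hres_meas : Measurable (fun v : Fin (M + d) → ℝ => res (Nat.le_add_right M d) v) :=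
    measurable_res _
  have hsetm : MeasurableSet {p : (Fin (M + d) → ℝ) × (Fin d → ℝ) | p.1 ∈ SA ∧
      (res (Nat.le_add_right M d) p.1, p.2) ∈ WB} := by
    refine MeasurableSet.inter (measurable_fst hSA) ?_
    exact ((hres_meas.comp measurable_fst).prodMk measurable_snd) hWBm
  rw [Measure.prod_apply hsetm]
  have hib : ∀ v : Fin (M + d) → ℝ,
      P d (Prod.mk v ⁻¹' {p : (Fin (M + d) → ℝ) × (Fin d → ℝ) | p.1 ∈ SA ∧
        (res (Nat.le_add_right M d) p.1, p.2) ∈ WB})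
      = SA.indicator (fun v => fib d WB (res (Nat.le_add_right M d) v)) v := by
    intro v
    by_cases hv : v ∈ SA
    · rw [Set.indicator_of_mem hv]
      congr 1
      ext w
      simp [hv, fib]
    · rw [Set.indicator_of_notMem hv]
      have : Prod.mk v ⁻¹' {p : (Fin (M + d) → ℝ) × (Fin d → ℝ) | p.1 ∈ SA ∧
          (res (Nat.le_add_right M d) p.1, p.2) ∈ WB} = ∅ := by
        ext w; simp [hv]
      rw [this]
      simp
  rw [lintegral_congr hib]
  -- transport the integral over `P (M + d)` to the product `P M ⊗ P d`
  have hFmeas : Measurable (SA.indicator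
      (fun v : Fin (M + d) → ℝ => fib d WB (res (Nat.le_add_right M d) v))) :=
    Measurable.indicator ((measurable_fib hWBm).comp hres_meas) hSA
  have htrans := MeasurePreserving.lintegral_comp
    ((E_measurePreserving M d).symm (E M d)) hFmeas
  rw [← htrans]
  -- compute the double integral
  have hGind : ∀ p : (Fin M → ℝ) × (Fin d → ℝ),
      SA.indicator (fun v : Fin (M + d) → ℝ => fib d WB (res (Nat.le_add_right M d) v))
        ((E M d).symm p)
      = WA.indicator (fun p : (Fin M → ℝ) × (Fin d → ℝ) => fib d WB p.1) p := by
    intro p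
    by_cases hp : p ∈ WA
    · rw [Set.indicator_of_mem hp, Set.indicator_of_mem (by exact hp), resM_Esymm]
    · rw [Set.indicator_of_notMem hp, Set.indicator_of_notMem (by exact hp)]
  rw [lintegral_congr hGind]
  have hGmeas : Measurable (WA.indicator
      (fun p : (Fin M → ℝ) × (Fin d → ℝ) => fib d WB p.1)) :=
    Measurable.indicator ((measurable_fib hWBm).comp measurable_fst) hWAm
  rw [MeasureTheory.lintegral_prod _ hGmeas.aemeasurable]
  refine lintegral_congr fun y => ?_
  have hinner : ∀ w, WA.indicator (fun p : (Fin M → ℝ) × (Fin d → ℝ) => fib d WB p.1) (y, w)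
      = (Prod.mk y ⁻¹' WA).indicator (fun _ => fib d WB y) w := by
    intro w
    by_cases hw : (y, w) ∈ WA
    · rw [Set.indicator_of_mem hw, Set.indicator_of_mem (by exact hw)]
    · rw [Set.indicator_of_notMem hw, Set.indicator_of_notMem (by exact hw)]
  rw [lintegral_congr hinner, lintegral_indicator_const (measurable_prodMk_left hWAm)]
  rw [mul_comm]
  rfl

end BernoulliAux

namespace BernoulliAux

def ON (M : ℕ) : Set (Equiv.Perm ℕ) := {g | ∀ i < M, g i = i}

lemma symm_fix {g : Equiv.Perm ℕ} {M : ℕ} (hg : g ∈ ON M) {i : ℕ} (hi : i < M) :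
    g.symm i = i := by
  conv_lhs => rw [← hg i hi]
  exact g.symm_apply_apply i

lemma one_mem_ON (M : ℕ) : (1 : Equiv.Perm ℕ) ∈ ON M := fun i _ => rfl

lemma isOpen_ON (M : ℕ) : IsOpen (ON M) := by
  have : ON M = (fun g : Equiv.Perm ℕ => ((g : ℕ → ℕ), (g.symm : ℕ → ℕ))) ⁻¹'
      (({i | i < M}.pi fun i => {i}) ×ˢ Set.univ) := by
    ext g
    simp only [ON, Set.mem_preimage, Set.mem_prod, Set.mem_pi, Set.mem_setOf_eq,
      Set.mem_singleton_iff, Set.mem_univ, and_true]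
  rw [this]
  refine isOpen_induced ?_
  refine IsOpen.prod ?_ isOpen_univ
  refine isOpen_set_pi (Set.finite_Iio M) fun i _ => ?_
  exact isOpen_discrete _

lemma exists_ON_subset {O : Set (Equiv.Perm ℕ)} (hO : IsOpen O) (h1 : (1 : Equiv.Perm ℕ) ∈ O) :
    ∃ M, ON M ⊆ O := by
  rw [isOpen_induced_iff] at hO
  obtain ⟨U, hU, rfl⟩ := hO
  rw [Set.mem_preimage] at h1
  rw [isOpen_prod_iff] at hU
  obtain ⟨u, v, hu, hv, hmem_u, hmem_v, huv⟩ := hU _ _ h1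
  rw [isOpen_pi_iff] at hu hv
  obtain ⟨I₁, t₁, ht₁, hsub₁⟩ := hu _ hmem_u
  obtain ⟨I₂, t₂, ht₂, hsub₂⟩ := hv _ hmem_v
  refine ⟨(I₁ ∪ I₂).sup id + 1, fun g hg => ?_⟩
  rw [Set.mem_preimage]
  refine huv ⟨hsub₁ ?_, hsub₂ ?_⟩
  · intro i hi
    have hiM : i < (I₁ ∪ I₂).sup id + 1 :=
      Nat.lt_succ_of_le (Finset.le_sup (f := id) (Finset.mem_union_left _ hi))
    show (g : ℕ → ℕ) i ∈ t₁ i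
    rw [hg i hiM]
    exact (ht₁ i hi).2
  · intro i hi
    have hiM : i < (I₁ ∪ I₂).sup id + 1 :=
      Nat.lt_succ_of_le (Finset.le_sup (f := id) (Finset.mem_union_right _ hi))
    show (g.symm : ℕ → ℕ) i ∈ t₂ i
    rw [symm_fix hg hiM]
    exact (ht₂ i hi).2

end BernoulliAux

namespace BernoulliAux

open scoped ENNReal

variable {μ : Measure (ℕ → ℝ)} [IsProbabilityMeasure μ]
  (hμ : ∀ (s : Finset ℕ) (f : ℕ → Set ℝ), (∀ i, MeasurableSet (f i)) →
      μ {x | ∀ i ∈ s, x i ∈ f i}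
        = ∏ i ∈ s, (MeasureTheory.volume.restrict (Set.Icc (0:ℝ) 1)) (f i))

/-- Conditional density of `A` on the first `M` coordinates. -/
noncomputable def F (μ : Measure (ℕ → ℝ)) (M : ℕ) (A : Set (ℕ → ℝ)) : (Fin M → ℝ) → ℝ≥0∞ :=
  (nu μ M A).rnDeriv (P M)

omit [IsProbabilityMeasure μ] hμ in
lemma lintegral_F_le {M : ℕ} (A : Set (ℕ → ℝ)) : ∫⁻ y, F μ M A y ∂(P M) ≤ μ A := by
  refine (Measure.lintegral_rnDeriv_le).trans ?_
  rw [nu_apply A MeasurableSet.univ]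
  exact measure_mono Set.inter_subset_left

include hμ

/-- If the conditional densities of `A` and `B` have essentially disjoint supports, the second
(separation) alternative holds at level `M`. -/
lemma sep_of_min_zero (M : ℕ) {A B : Set (ℕ → ℝ)} (hA : MeasurableSet A)
    (hB : MeasurableSet B)
    (h0 : ∫⁻ y, min (F μ M A y) (F μ M B y) ∂(P M) = 0) :
    ∃ S : Set (Fin M → ℝ), MeasurableSet S ∧
      μ (A \ proj M ⁻¹' S) = 0 ∧ μ (B ∩ proj M ⁻¹' S) = 0 := by
  have hFA : Measurable (F μ M A) := Measure.measurable_rnDeriv _ _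
  have hFB : Measurable (F μ M B) := Measure.measurable_rnDeriv _ _
  have hmin : Measurable fun y => min (F μ M A y) (F μ M B y) := hFA.min hFB
  have hae : ∀ᵐ y ∂(P M), min (F μ M A y) (F μ M B y) = 0 :=
    (lintegral_eq_zero_iff hmin).mp h0
  set S := {y | F μ M A y ≠ 0} with hSdef
  have hS : MeasurableSet S := (hFA (measurableSet_singleton 0)).compl
  refine ⟨S, hS, ?_, ?_⟩
  · have : μ (A \ proj M ⁻¹' S) = nu μ M A Sᶜ := by
      rw [nu_apply A hS.compl]
      congr 1
    have hz : ∫⁻ y in Sᶜ, (nu μ M A).rnDeriv (P M) y ∂(P M) = ∫⁻ _ in Sᶜ, 0 ∂(P M) :=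
      setLIntegral_congr_fun hS.compl (fun y hy => by
        simpa [hSdef, F] using hy)
    haveI hLDA : (nu μ M A).HaveLebesgueDecomposition (P M) :=
      Measure.haveLebesgueDecomposition_of_sigmaFinite _ _
    rw [this, ← Measure.setLIntegral_rnDeriv (nu_absCont hμ A) Sᶜ, hz]
    simp
  · have : μ (B ∩ proj M ⁻¹' S) = nu μ M B S := (nu_apply B hS).symm
    have hz : ∫⁻ y in S, (nu μ M B).rnDeriv (P M) y ∂(P M) = ∫⁻ _ in S, 0 ∂(P M) := by
      refine setLIntegral_congr_fun_ae hS ?_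
      filter_upwards [hae] with y hy hyS
      rcases min_eq_iff.mp hy with h | h
      · exact absurd h.1 hyS
      · exact h.1
    haveI hLDB : (nu μ M B).HaveLebesgueDecomposition (P M) :=
      Measure.haveLebesgueDecomposition_of_sigmaFinite _ _
    rw [this, ← Measure.setLIntegral_rnDeriv (nu_absCont hμ B) S, hz]
    simp

/-- Comparison of the density of `A` with the explicit density of an approximating
cylinder set. -/
lemma F_le_cyl (M d : ℕ) {A : Set (ℕ → ℝ)} (hA : MeasurableSet A)
    {SA : Set (Fin (M + d) → ℝ)} (hSA : MeasurableSet SA) :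
    F μ M A ≤ᵐ[P M] fun y => fib d ((E M d).symm ⁻¹' SA) y
      + F μ M (A \ proj (M + d) ⁻¹' SA) y := by
  set Acyl := proj (M + d) ⁻¹' SA with hAcyl
  have hAcylm : MeasurableSet Acyl := measurable_proj _ hSA
  have hsplitA : nu μ M A = nu μ M (A ∩ Acyl) + nu μ M (A \ Acyl) := by
    rw [← nu_union (Set.disjoint_left.mpr fun x hx1 hx2 => hx2.2 hx1.2) (hA.diff hAcylm),
      Set.inter_union_diff]
  have hsplitC : nu μ M Acyl = nu μ M (A ∩ Acyl) + nu μ M (Acyl \ A) := by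
    rw [← nu_union (Set.disjoint_left.mpr fun x hx1 hx2 => hx2.2 hx1.1) (hAcylm.diff hA)]
    congr 1
    rw [Set.inter_comm, Set.inter_union_diff]
  have h1 : F μ M A =ᵐ[P M] fun y => (nu μ M (A ∩ Acyl)).rnDeriv (P M) y
      + (nu μ M (A \ Acyl)).rnDeriv (P M) y := by
    rw [F, hsplitA]
    exact Measure.rnDeriv_add' _ _ _
  have h2 : (nu μ M Acyl).rnDeriv (P M) =ᵐ[P M] fun y => (nu μ M (A ∩ Acyl)).rnDeriv (P M) y
      + (nu μ M (Acyl \ A)).rnDeriv (P M) y := by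
    rw [hsplitC]
    exact Measure.rnDeriv_add' _ _ _
  have h3 : (nu μ M Acyl).rnDeriv (P M) =ᵐ[P M] fib d ((E M d).symm ⁻¹' SA) := by
    rw [nu_cyl hμ M d hSA]
    exact Measure.rnDeriv_withDensity _ (measurable_fib ((E M d).symm.measurable hSA))
  filter_upwards [h1, h2, h3] with y hy1 hy2 hy3
  rw [hy1]
  have : (nu μ M (A ∩ Acyl)).rnDeriv (P M) y ≤ fib d ((E M d).symm ⁻¹' SA) y := by
    rw [← hy3, hy2]
    exact le_self_add
  exact add_le_add_left this _

end BernoulliAux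

namespace BernoulliAux

open scoped ENNReal

variable {μ : Measure (ℕ → ℝ)} [IsProbabilityMeasure μ]
  (hμ : ∀ (s : Finset ℕ) (f : ℕ → Set ℝ), (∀ i, MeasurableSet (f i)) →
      μ {x | ∀ i ∈ s, x i ∈ f i}
        = ∏ i ∈ s, (MeasureTheory.volume.restrict (Set.Icc (0:ℝ) 1)) (f i))

include hμ

lemma core (M : ℕ) {A B : Set (ℕ → ℝ)} (hA : MeasurableSet A) (hB : MeasurableSet B)
    (hδ : 0 < ∫⁻ y, min (F μ M A y) (F μ M B y) ∂(P M)) :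
    ∃ g ∈ ON M, 0 < μ (A ∩ bernoulliShift g '' B) := by
  classical
  set δ := ∫⁻ y, min (F μ M A y) (F μ M B y) ∂(P M) with hδdef
  have hδ1 : δ ≤ 1 := by
    refine le_trans (lintegral_mono fun y => min_le_left _ _) ?_
    exact (lintegral_F_le A).trans prob_le_one
  have hδtop : δ ≠ ⊤ := (hδ1.trans_lt ENNReal.one_lt_top).ne
  set ε := δ * δ * δ / 64 with hεdef
  have hε0 : 0 < ε := by
    refine ENNReal.div_pos ?_ (by norm_num)
    exact (ENNReal.mul_pos (ENNReal.mul_pos hδ.ne' hδ.ne').ne' hδ.ne').ne'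
  have hεtop : ε ≠ ⊤ := by
    refine (ENNReal.div_lt_top ?_ (by norm_num)).ne
    exact ENNReal.mul_ne_top (ENNReal.mul_ne_top hδtop hδtop) hδtop
  -- approximate A and B by cylinder sets at common level M + d
  obtain ⟨nA, SA0, hSA0, hapA0⟩ := approx (μ := μ) hA hε0
  obtain ⟨nB, SB0, hSB0, hapB0⟩ := approx (μ := μ) hB hε0
  set d := max nA nB with hd
  have hdA : nA ≤ M + d := le_trans (le_max_left _ _) (Nat.le_add_left _ _)
  have hdB : nB ≤ M + d := le_trans (le_max_right _ _) (Nat.le_add_left _ _)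
  set SA : Set (Fin (M + d) → ℝ) := res hdA ⁻¹' SA0 with hSAdef
  set SB : Set (Fin (M + d) → ℝ) := res hdB ⁻¹' SB0 with hSBdef
  have hSA : MeasurableSet SA := measurable_res _ hSA0
  have hSB : MeasurableSet SB := measurable_res _ hSB0
  set Acyl := proj (M + d) ⁻¹' SA with hAcyldef
  set Bcyl := proj (M + d) ⁻¹' SB with hBcyldef
  have hAcylm : MeasurableSet Acyl := measurable_proj _ hSA
  have hBcylm : MeasurableSet Bcyl := measurable_proj _ hSB
  have hapA : μ (symmDiff A Acyl) < ε := by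
    rwa [hAcyldef, hSAdef, ← proj_preimage_pad hdA]
  have hapB : μ (symmDiff B Bcyl) < ε := by
    rwa [hBcyldef, hSBdef, ← proj_preimage_pad hdB]
  -- the explicit conditional densities of the cylinders
  set fA := fib d ((E M d).symm ⁻¹' SA) with hfAdef
  set fB := fib d ((E M d).symm ⁻¹' SB) with hfBdef
  have hfAm : Measurable fA := measurable_fib ((E M d).symm.measurable hSA)
  have hfBm : Measurable fB := measurable_fib ((E M d).symm.measurable hSB)
  set m := fun y => min (fA y) (fB y) with hmdef
  have hmm : Measurable m := hfAm.min hfBm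
  have hm1 : ∀ y, m y ≤ 1 := fun y => (min_le_left _ _).trans (fib_le_one _ _)
  set δ' := ∫⁻ y, m y ∂(P M) with hδ'def
  have hδ'1 : δ' ≤ 1 := by
    refine le_trans (lintegral_mono hm1) ?_
    simp
  -- step 1 : δ ≤ δ' + ε + ε
  have hRAm : Measurable (F μ M (A \ Acyl)) := Measure.measurable_rnDeriv _ _
  have hRBm : Measurable (F μ M (B \ Bcyl)) := Measure.measurable_rnDeriv _ _
  have hRAint : ∫⁻ y, F μ M (A \ Acyl) y ∂(P M) ≤ ε := by
    refine (lintegral_F_le _).trans (le_of_lt (lt_of_le_of_lt (measure_mono ?_) hapA))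
    intro x hx
    exact Or.inl hx
  have hRBint : ∫⁻ y, F μ M (B \ Bcyl) y ∂(P M) ≤ ε := by
    refine (lintegral_F_le _).trans (le_of_lt (lt_of_le_of_lt (measure_mono ?_) hapB))
    intro x hx
    exact Or.inl hx
  have hpoint : ∀ᵐ y ∂(P M), min (F μ M A y) (F μ M B y)
      ≤ m y + (F μ M (A \ Acyl) y + F μ M (B \ Bcyl) y) := by
    filter_upwards [F_le_cyl hμ M d hA hSA, F_le_cyl hμ M d hB hSB] with y h1y h2y
    set RA := F μ M (A \ Acyl) y
    set RB := F μ M (B \ Bcyl) y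
    calc min (F μ M A y) (F μ M B y) ≤ min (fA y + RA) (fB y + RB) := min_le_min h1y h2y
      _ ≤ min (fA y + (RA + RB)) (fB y + (RA + RB)) :=
          min_le_min (add_le_add_right le_self_add _) (add_le_add_right le_add_self _)
      _ = m y + (RA + RB) := by rw [hmdef, min_add_add_right]
  have hstep1 : δ ≤ δ' + ε + ε := by
    calc δ ≤ ∫⁻ y, (m y + (F μ M (A \ Acyl) y + F μ M (B \ Bcyl) y)) ∂(P M) :=
        lintegral_mono_ae hpoint
      _ = δ' + ∫⁻ y, (F μ M (A \ Acyl) y + F μ M (B \ Bcyl) y) ∂(P M) :=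
        lintegral_add_left hmm _
      _ = δ' + (∫⁻ y, F μ M (A \ Acyl) y ∂(P M) + ∫⁻ y, F μ M (B \ Bcyl) y ∂(P M)) := by
        rw [lintegral_add_left hRAm]
      _ ≤ δ' + (ε + ε) := add_le_add_right (add_le_add hRAint hRBint) _
      _ = δ' + ε + ε := by ring
  -- step 2 : threshold
  set t := δ / 4 with htdef
  have httop : t ≠ ⊤ := by
    refine (ENNReal.div_lt_top hδtop (by norm_num)).ne
  set Sm := {y : Fin M → ℝ | t ≤ m y} with hSmdef
  have hSm : MeasurableSet Sm := measurableSet_le measurable_const hmm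
  have hstep2 : δ' ≤ t + P M Sm := by
    have hpt : ∀ y, m y ≤ t + Sm.indicator (fun _ => (1 : ℝ≥0∞)) y := by
      intro y
      by_cases hy : y ∈ Sm
      · rw [Set.indicator_of_mem hy]
        exact le_add_left (hm1 y)
      · rw [Set.indicator_of_notMem hy]
        rw [hSmdef, Set.mem_setOf_eq, not_le] at hy
        simpa using hy.le
    calc δ' ≤ ∫⁻ y, (t + Sm.indicator (fun _ => (1 : ℝ≥0∞)) y) ∂(P M) := lintegral_mono hpt
      _ = t + P M Sm := by
        rw [lintegral_add_left measurable_const, lintegral_const,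
          lintegral_indicator_const hSm, one_mul, measure_univ, mul_one]
  -- step 3 : lower bound for the product integral
  have hstep3 : t * t * P M Sm ≤ ∫⁻ y, fA y * fB y ∂(P M) := by
    have : ∀ y, Sm.indicator (fun _ => t * t) y ≤ fA y * fB y := by
      intro y
      by_cases hy : y ∈ Sm
      · rw [Set.indicator_of_mem hy]
        have hym : t ≤ m y := hy
        exact mul_le_mul' (hym.trans (min_le_left _ _)) (hym.trans (min_le_right _ _))
      · rw [Set.indicator_of_notMem hy]
        exact zero_le
    refine le_trans (le_of_eq ?_) (lintegral_mono this)
    rw [lintegral_indicator_const hSm]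
  -- the permutation
  set g := blockSwap M d with hgdef
  have hgON : g ∈ ON M := fun i hi => blockSwap_fix M d hi
  have hginv : Measure.map (bernoulliShift g⁻¹) μ = μ := shift_invariant hμ g⁻¹
  have hkey : μ (Acyl ∩ bernoulliShift g '' Bcyl) = ∫⁻ y, fA y * fB y ∂(P M) :=
    key_formula hμ M d hSA hSB
  -- inclusion bound
  have hBdiff : μ (bernoulliShift g '' Bcyl \ bernoulliShift g '' B) ≤ ε := by
    refine le_trans (measure_mono (Set.subset_image_diff _ _ _)) ?_
    rw [shift_image_measure g (hBcylm.diff hB) hginv]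
    refine le_of_lt (lt_of_le_of_lt (measure_mono fun x hx => ?_) hapB)
    exact Or.inr ⟨hx.1, hx.2⟩
  have hAdiff : μ (Acyl \ A) ≤ ε := by
    refine le_of_lt (lt_of_le_of_lt (measure_mono fun x hx => ?_) hapA)
    exact Or.inr hx
  have hsub : Acyl ∩ bernoulliShift g '' Bcyl
      ⊆ (A ∩ bernoulliShift g '' B) ∪ (Acyl \ A) ∪ (bernoulliShift g '' Bcyl \ bernoulliShift g '' B) := by
    intro x hx
    by_cases hxA : x ∈ A
    · by_cases hxB : x ∈ bernoulliShift g '' B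
      · exact Or.inl (Or.inl ⟨hxA, hxB⟩)
      · exact Or.inr ⟨hx.2, hxB⟩
    · exact Or.inl (Or.inr ⟨hx.1, hxA⟩)
  refine ⟨g, hgON, ?_⟩
  by_contra h0
  rw [not_lt, le_zero_iff] at h0
  have hfinal : ∫⁻ y, fA y * fB y ∂(P M) ≤ ε + ε := by
    rw [← hkey]
    calc μ (Acyl ∩ bernoulliShift g '' Bcyl)
        ≤ μ ((A ∩ bernoulliShift g '' B) ∪ (Acyl \ A)
            ∪ (bernoulliShift g '' Bcyl \ bernoulliShift g '' B)) := measure_mono hsub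
      _ ≤ μ ((A ∩ bernoulliShift g '' B) ∪ (Acyl \ A))
            + μ (bernoulliShift g '' Bcyl \ bernoulliShift g '' B) := measure_union_le _ _
      _ ≤ μ (A ∩ bernoulliShift g '' B) + μ (Acyl \ A)
            + μ (bernoulliShift g '' Bcyl \ bernoulliShift g '' B) :=
          add_le_add_left (measure_union_le _ _) _
      _ ≤ 0 + ε + ε := by
          exact add_le_add (add_le_add h0.le hAdiff) hBdiff
      _ = ε + ε := by rw [zero_add]
  -- numeric contradiction
  have hPm1 : P M Sm ≤ 1 := prob_le_one
  have h34 : t * t * P M Sm ≤ ε + ε := hstep3.trans hfinal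
  set a := δ.toReal with hadef
  have ha : 0 < a := ENNReal.toReal_pos hδ.ne' hδtop
  have ha1 : a ≤ 1 := by
    rw [hadef, ← ENNReal.toReal_one]
    exact ENNReal.toReal_mono ENNReal.one_ne_top hδ1
  have hεR : ε.toReal = a * a * a / 64 := by
    rw [hεdef, ENNReal.toReal_div, ENNReal.toReal_mul, ENNReal.toReal_mul]
    norm_num [hadef]
  have htR : t.toReal = a / 4 := by
    rw [htdef, ENNReal.toReal_div]
    norm_num [hadef]
  set b := δ'.toReal with hbdef
  set p := (P M Sm).toReal with hpdef
  have hp0 : 0 ≤ p := ENNReal.toReal_nonneg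
  have hδ'top : δ' ≠ ⊤ := (hδ'1.trans_lt ENNReal.one_lt_top).ne
  have hPmtop : P M Sm ≠ ⊤ := (hPm1.trans_lt ENNReal.one_lt_top).ne
  have h1R : a ≤ b + ε.toReal + ε.toReal := by
    have := ENNReal.toReal_mono (by finiteness) hstep1
    rwa [ENNReal.toReal_add (by finiteness) hεtop, ENNReal.toReal_add hδ'top hεtop] at this
  have h2R : b ≤ t.toReal + p := by
    have := ENNReal.toReal_mono (by finiteness) hstep2
    rwa [ENNReal.toReal_add httop hPmtop] at this
  have h3R : t.toReal * t.toReal * p ≤ ε.toReal + ε.toReal := by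
    have := ENNReal.toReal_mono (by finiteness) h34
    rwa [ENNReal.toReal_add hεtop hεtop, ENNReal.toReal_mul, ENNReal.toReal_mul] at this
  rw [hεR] at h1R h3R
  rw [htR] at h2R h3R
  nlinarith [mul_pos ha ha, mul_pos (mul_pos ha ha) ha, sq_nonneg a,
    mul_le_of_le_one_right (mul_pos ha ha).le ha1]

end BernoulliAux


open BernoulliAux in
/-- The Bernoulli shift action of `S_∞` on `([0,1]^ℕ, λ^⊗ℕ)` is suitable: for all Borel
sets `A, B` of positive measure, either every open neighborhood of the identity contains
some `g` with `μ(A ∩ g·B) > 0`, or there are full-measure subsets `A' ⊆ A`, `B' ⊆ B` and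
a neighborhood `O` of the identity with `(O·A') ∩ B' = ∅`. -/
theorem bernoulli_shift_suitable
    (μ : Measure (ℕ → ℝ)) [IsProbabilityMeasure μ]
    (hμ : ∀ (s : Finset ℕ) (f : ℕ → Set ℝ), (∀ i, MeasurableSet (f i)) →
      μ {x | ∀ i ∈ s, x i ∈ f i}
        = ∏ i ∈ s, (MeasureTheory.volume.restrict (Set.Icc (0:ℝ) 1)) (f i)) :
    ∀ A B : Set (ℕ → ℝ), MeasurableSet A → MeasurableSet B → 0 < μ A → 0 < μ B →
      (∀ O : Set (Equiv.Perm ℕ), IsOpen O → (1 : Equiv.Perm ℕ) ∈ O →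
        ∃ g ∈ O, 0 < μ (A ∩ bernoulliShift g '' B)) ∨
      (∃ A' ⊆ A, ∃ B' ⊆ B, μ (A \ A') = 0 ∧ μ (B \ B') = 0 ∧
        ∃ O : Set (Equiv.Perm ℕ), IsOpen O ∧ (1 : Equiv.Perm ℕ) ∈ O ∧
          (⋃ g ∈ O, bernoulliShift g '' A') ∩ B' = ∅) := by
  intro A B hA hB _ _
  classical
  by_cases hsep : ∃ (M : ℕ) (S : Set (Fin M → ℝ)), MeasurableSet S ∧
      μ (A \ proj M ⁻¹' S) = 0 ∧ μ (B ∩ proj M ⁻¹' S) = 0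
  · right
    obtain ⟨M, S, hS, hA0, hB0⟩ := hsep
    refine ⟨A ∩ proj M ⁻¹' S, Set.inter_subset_left, B \ proj M ⁻¹' S, Set.diff_subset,
      ?_, ?_, ON M, isOpen_ON M, one_mem_ON M, ?_⟩
    · rwa [Set.diff_self_inter]
    · have : B \ (B \ proj M ⁻¹' S) = B ∩ proj M ⁻¹' S := by
        ext x; simp only [Set.mem_diff, Set.mem_inter_iff, not_and, not_not]; tauto
      rwa [this]
    · rw [Set.eq_empty_iff_forall_notMem]
      rintro x ⟨hx1, hx2⟩
      rw [Set.mem_iUnion₂] at hx1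
      obtain ⟨g, hg, a, ⟨haA, haS⟩, rfl⟩ := hx1
      refine hx2.2 ?_
      have : proj M (bernoulliShift g a) = proj M a := by
        funext i
        show a (g.symm (i : ℕ)) = a (i : ℕ)
        rw [symm_fix hg i.isLt]
      rw [Set.mem_preimage, this]
      exact haS
  · left
    push_neg at hsep
    intro O hO hI
    obtain ⟨M, hM⟩ := exists_ON_subset hO hI
    have hδ : 0 < ∫⁻ y, min (F μ M A y) (F μ M B y) ∂(P M) := by
      rcases eq_or_ne (∫⁻ y, min (F μ M A y) (F μ M B y) ∂(P M)) 0 with h | h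
      · obtain ⟨S, hS, h1, h2⟩ := sep_of_min_zero hμ M hA hB h
        exact absurd h2 (hsep M S hS h1)
      · exact pos_iff_ne_zero.mpr h
    obtain ⟨g, hgON, hgpos⟩ := core hμ M hA hB hδ
    exact ⟨g, hM hgON, hgpos⟩
end

section
/- Let G be a locally compact Polish group acting essentially freely and measure-preservingly on (X,μ), let Y ⊆ X be a cross-section with injectivity neighborhood U, and suppose A := U·Y has μ(A) = 1/K for some integer K ≥ 1. If the action is ergodic, then there exists T ∈ [R_G] of order K such that {A, T(A), ..., T^{K−1}(A)} partitions a full-measure subset of X. -/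
open MeasureTheory Pointwise
open scoped ENNReal

/-- A piecewise translation: countably many disjoint measurable pieces, each moved by a
group element, with disjoint images. -/
structure PPT (G X : Type*) [SMul G X] [MeasurableSpace X] where
  ι : Type
  cnt : Countable ι
  pc : ι → Set X
  el : ι → G
  meas : ∀ i, MeasurableSet (pc i)
  disj : Pairwise (Function.onFun Disjoint pc)
  disjIm : Pairwise (Function.onFun Disjoint fun i => el i • pc i)

namespace PPT

variable {G X : Type*} [Group G] [MulAction G X] [MeasurableSpace G] [MeasurableSpace X] [MeasurableSMul G X]

def dom (Φ : PPT G X) : Set X := ⋃ i, Φ.pc i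
def ran (Φ : PPT G X) : Set X := ⋃ i, Φ.el i • Φ.pc i

open scoped Classical in
noncomputable def toFun (Φ : PPT G X) : X → X :=
  fun x => if h : ∃ i, x ∈ Φ.pc i then Φ.el h.choose • x else x

lemma pc_unique (Φ : PPT G X) {x : X} {i j : Φ.ι} (hi : x ∈ Φ.pc i) (hj : x ∈ Φ.pc j) :
    i = j := by
  by_contra hne
  exact Set.disjoint_left.mp (Φ.disj hne) hi hj

lemma toFun_pc (Φ : PPT G X) {x : X} {i : Φ.ι} (hi : x ∈ Φ.pc i) :
    Φ.toFun x = Φ.el i • x := by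
  have h : ∃ j, x ∈ Φ.pc j := ⟨i, hi⟩
  simp only [toFun]
  rw [dif_pos h, Φ.pc_unique h.choose_spec hi]

lemma toFun_out (Φ : PPT G X) {x : X} (hx : x ∉ Φ.dom) : Φ.toFun x = x := by
  have h : ¬ ∃ i, x ∈ Φ.pc i := by
    intro ⟨i, hi⟩; exact hx (Set.mem_iUnion.mpr ⟨i, hi⟩)
  simp only [toFun]
  rw [dif_neg h]

lemma exists_smul (Φ : PPT G X) (x : X) : ∃ g : G, Φ.toFun x = g • x := by
  by_cases h : ∃ i, x ∈ Φ.pc i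
  · obtain ⟨i, hi⟩ := h
    exact ⟨Φ.el i, Φ.toFun_pc hi⟩
  · refine ⟨1, ?_⟩
    simp only [toFun]
    rw [dif_neg h, one_smul]

lemma meas_smul {g : G} {s : Set X} (hs : MeasurableSet s) : MeasurableSet (g • s) := by
  rw [show g • s = (fun x => g⁻¹ • x) ⁻¹' s by
    ext x; simp [Set.mem_smul_set_iff_inv_smul_mem]]
  exact (measurable_const_smul g⁻¹) hs

lemma meas_dom (Φ : PPT G X) : MeasurableSet Φ.dom := by
  haveI := Φ.cnt
  exact MeasurableSet.iUnion fun i => Φ.meas i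

lemma meas_ran (Φ : PPT G X) : MeasurableSet Φ.ran := by
  haveI := Φ.cnt
  exact MeasurableSet.iUnion fun i => meas_smul (Φ.meas i)

lemma measurable_toFun (Φ : PPT G X) : Measurable Φ.toFun := by
  haveI := Φ.cnt
  intro M hM
  have h : Φ.toFun ⁻¹' M = (Φ.domᶜ ∩ M) ∪ ⋃ i, (Φ.pc i ∩ (fun x => Φ.el i • x) ⁻¹' M) := by
    ext x
    constructor
    · intro hx
      by_cases hd : x ∈ Φ.dom
      · obtain ⟨i, hi⟩ := Set.mem_iUnion.mp hd
        refine Or.inr (Set.mem_iUnion.mpr ⟨i, hi, ?_⟩)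
        have h9 := Φ.toFun_pc hi
        rw [Set.mem_preimage] at hx
        show Φ.el i • x ∈ M
        rwa [h9] at hx
      · refine Or.inl ⟨hd, ?_⟩
        rw [Set.mem_preimage] at hx
        rwa [Φ.toFun_out hd] at hx
    · rintro (⟨hd, hm⟩ | hx)
      · rwa [Set.mem_preimage, Φ.toFun_out hd]
      · obtain ⟨i, hi, hm⟩ := Set.mem_iUnion.mp hx
        rw [Set.mem_preimage, Φ.toFun_pc hi]; exact hm
  rw [h]
  exact (Φ.meas_dom.compl.inter hM).union
    (MeasurableSet.iUnion fun i => (Φ.meas i).inter ((measurable_const_smul (Φ.el i)) hM))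

lemma injOn (Φ : PPT G X) : Set.InjOn Φ.toFun Φ.dom := by
  intro x hx y hy hxy
  obtain ⟨i, hi⟩ := Set.mem_iUnion.mp hx
  obtain ⟨j, hj⟩ := Set.mem_iUnion.mp hy
  rw [Φ.toFun_pc hi, Φ.toFun_pc hj] at hxy
  by_cases hij : i = j
  · subst hij
    exact smul_left_cancel _ hxy
  · exfalso
    have h1 : Φ.el i • x ∈ Φ.el i • Φ.pc i := Set.smul_mem_smul_set hi
    have h2 : Φ.el j • y ∈ Φ.el j • Φ.pc j := Set.smul_mem_smul_set hj
    rw [hxy] at h1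
    exact Set.disjoint_left.mp (Φ.disjIm hij) h1 h2

lemma image_pc (Φ : PPT G X) (i : Φ.ι) (S : Set X) :
    Φ.toFun '' (Φ.pc i ∩ S) = Φ.el i • (Φ.pc i ∩ S) := by
  ext y
  constructor
  · rintro ⟨x, hx, rfl⟩
    rw [Φ.toFun_pc hx.1]
    exact Set.smul_mem_smul_set hx
  · rintro ⟨x, hx, rfl⟩
    exact ⟨x, hx, Φ.toFun_pc hx.1⟩

lemma image_dom_inter (Φ : PPT G X) (S : Set X) :
    Φ.toFun '' (Φ.dom ∩ S) = ⋃ i, Φ.el i • (Φ.pc i ∩ S) := by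
  have h : Φ.dom ∩ S = ⋃ i, (Φ.pc i ∩ S) := by
    rw [dom, Set.iUnion_inter]
  rw [h, Set.image_iUnion]
  exact Set.iUnion_congr fun i => Φ.image_pc i S

lemma ran_eq (Φ : PPT G X) : Φ.ran = Φ.toFun '' Φ.dom := by
  have := Φ.image_dom_inter Set.univ
  simp only [Set.inter_univ] at this
  rw [ran, this]

lemma meas_image (Φ : PPT G X) {S : Set X} (hS : MeasurableSet S) :
    MeasurableSet (Φ.toFun '' (Φ.dom ∩ S)) := by
  haveI := Φ.cnt
  rw [Φ.image_dom_inter S]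
  exact MeasurableSet.iUnion fun i => meas_smul ((Φ.meas i).inter hS)

variable {μ : Measure X}

lemma measure_smul (hmp : ∀ g : G, MeasurePreserving (fun x : X => g • x) μ μ)
    {g : G} {s : Set X} (hs : MeasurableSet s) : μ (g • s) = μ s := by
  have h : (fun x => g⁻¹ • x) ⁻¹' s = g • s := by
    ext x; simp [Set.mem_smul_set_iff_inv_smul_mem]
  rw [← h, (hmp g⁻¹).measure_preimage hs.nullMeasurableSet]

lemma measure_image (hmp : ∀ g : G, MeasurePreserving (fun x : X => g • x) μ μ)
    (Φ : PPT G X) {S : Set X} (hS : MeasurableSet S) :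
    μ (Φ.toFun '' (Φ.dom ∩ S)) = μ (Φ.dom ∩ S) := by
  haveI := Φ.cnt
  rw [Φ.image_dom_inter S]
  have h1 : μ (⋃ i, Φ.el i • (Φ.pc i ∩ S)) = ∑' i, μ (Φ.el i • (Φ.pc i ∩ S)) := by
    refine measure_iUnion ?_ fun i => meas_smul ((Φ.meas i).inter hS)
    intro i j hij
    exact (Φ.disjIm hij).mono (Set.smul_set_mono (Set.inter_subset_left))
      (Set.smul_set_mono (Set.inter_subset_left))
  have h2 : μ (Φ.dom ∩ S) = ∑' i, μ (Φ.pc i ∩ S) := by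
    rw [dom, Set.iUnion_inter]
    refine measure_iUnion ?_ fun i => (Φ.meas i).inter hS
    intro i j hij
    exact (Φ.disj hij).mono Set.inter_subset_left Set.inter_subset_left
  rw [h1, h2]
  exact tsum_congr fun i => measure_smul hmp ((Φ.meas i).inter hS)

lemma measure_ran (hmp : ∀ g : G, MeasurePreserving (fun x : X => g • x) μ μ)
    (Φ : PPT G X) : μ Φ.ran = μ Φ.dom := by
  have := Φ.measure_image hmp MeasurableSet.univ
  simpa [Set.inter_univ, ← Φ.ran_eq] using this

lemma measure_preimage_null (hmp : ∀ g : G, MeasurePreserving (fun x : X => g • x) μ μ)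
    (Φ : PPT G X) {S : Set X} (hS : MeasurableSet S) (hS0 : μ S = 0) :
    μ (Φ.dom ∩ Φ.toFun ⁻¹' S) = 0 := by
  have hT : MeasurableSet (Φ.dom ∩ Φ.toFun ⁻¹' S) := Φ.meas_dom.inter (Φ.measurable_toFun hS)
  have h1 : μ (Φ.toFun '' (Φ.dom ∩ (Φ.dom ∩ Φ.toFun ⁻¹' S))) = μ (Φ.dom ∩ (Φ.dom ∩ Φ.toFun ⁻¹' S)) :=
    Φ.measure_image hmp hT
  have h2 : Φ.dom ∩ (Φ.dom ∩ Φ.toFun ⁻¹' S) = Φ.dom ∩ Φ.toFun ⁻¹' S := by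
    rw [← Set.inter_assoc, Set.inter_self]
  rw [h2] at h1
  have h3 : Φ.toFun '' (Φ.dom ∩ Φ.toFun ⁻¹' S) ⊆ S := by
    rintro y ⟨x, hx, rfl⟩; exact hx.2
  refine le_antisymm ?_ (zero_le)
  calc μ (Φ.dom ∩ Φ.toFun ⁻¹' S) = μ (Φ.toFun '' (Φ.dom ∩ Φ.toFun ⁻¹' S)) := h1.symm
    _ ≤ μ S := measure_mono h3
    _ = 0 := hS0

section Ops

/-- Composition of piecewise translations (Ψ after Φ), restricted to where pieces chain. -/
noncomputable def comp (Ψ Φ : PPT G X) : PPT G X where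
  ι := Φ.ι × Ψ.ι
  cnt := by haveI := Φ.cnt; haveI := Ψ.cnt; infer_instance
  pc := fun p => Φ.pc p.1 ∩ (fun x => Φ.el p.1 • x) ⁻¹' (Ψ.pc p.2)
  el := fun p => Ψ.el p.2 * Φ.el p.1
  meas := fun p => (Φ.meas p.1).inter ((measurable_const_smul (Φ.el p.1)) (Ψ.meas p.2))
  disj := by
    rintro ⟨i, j⟩ ⟨i', j'⟩ hne
    by_cases hi : i = i'
    · subst hi
      have hj : j ≠ j' := fun h => hne (by rw [h])
      refine Set.disjoint_left.mpr fun x hx hx' => ?_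
      exact Set.disjoint_left.mp (Ψ.disj hj) hx.2 hx'.2
    · exact ((Φ.disj hi).mono Set.inter_subset_left Set.inter_subset_left)
  disjIm := by
    rintro ⟨i, j⟩ ⟨i', j'⟩ hne
    have key : ∀ (a : Φ.ι) (b : Ψ.ι),
        (Ψ.el b * Φ.el a) • (Φ.pc a ∩ (fun x => Φ.el a • x) ⁻¹' (Ψ.pc b))
          ⊆ Ψ.el b • (Φ.el a • Φ.pc a ∩ Ψ.pc b) := by
      intro a b
      rw [mul_smul]
      refine Set.smul_set_mono ?_
      rintro y ⟨x, hx, rfl⟩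
      exact ⟨Set.smul_mem_smul_set hx.1, hx.2⟩
    by_cases hj : j = j'
    · subst hj
      have hi : i ≠ i' := fun h => hne (by rw [h])
      refine Disjoint.mono (key i j) (key i' j) ?_
      rw [Set.disjoint_iff_inter_eq_empty, ← Set.smul_set_inter]
      have : (Φ.el i • Φ.pc i ∩ Ψ.pc j) ∩ (Φ.el i' • Φ.pc i' ∩ Ψ.pc j) = ∅ := by
        rw [Set.eq_empty_iff_forall_notMem]
        rintro x ⟨⟨h1, _⟩, ⟨h2, _⟩⟩
        exact Set.disjoint_left.mp (Φ.disjIm hi) h1 h2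
      rw [this, Set.smul_set_empty]
    · refine Disjoint.mono (key i j) (key i' j') ?_
      refine (Ψ.disjIm hj).mono ?_ ?_ <;> exact Set.smul_set_mono Set.inter_subset_right

lemma comp_dom (Ψ Φ : PPT G X) : (comp Ψ Φ).dom = Φ.dom ∩ Φ.toFun ⁻¹' Ψ.dom := by
  ext x
  simp only [comp, dom, Set.mem_iUnion, Set.mem_inter_iff, Set.mem_preimage, Prod.exists]
  constructor
  · rintro ⟨i, j, hx, hj⟩
    exact ⟨⟨i, hx⟩, by rw [Φ.toFun_pc hx]; exact ⟨j, hj⟩⟩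
  · rintro ⟨⟨i, hx⟩, hj⟩
    rw [Φ.toFun_pc hx] at hj
    obtain ⟨j, hj⟩ := hj
    exact ⟨i, j, hx, hj⟩

lemma comp_toFun (Ψ Φ : PPT G X) {x : X} (hx : x ∈ (comp Ψ Φ).dom) :
    (comp Ψ Φ).toFun x = Ψ.toFun (Φ.toFun x) := by
  obtain ⟨p, hp⟩ := Set.mem_iUnion.mp hx
  rw [(comp Ψ Φ).toFun_pc hp]
  have h1 : x ∈ Φ.pc p.1 := hp.1
  have h2 : Φ.el p.1 • x ∈ Ψ.pc p.2 := hp.2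
  rw [Φ.toFun_pc h1, Ψ.toFun_pc h2]
  show (Ψ.el p.2 * Φ.el p.1) • x = _
  rw [mul_smul]

lemma comp_ran_subset (Ψ Φ : PPT G X) : (comp Ψ Φ).ran ⊆ Ψ.ran := by
  rintro y hy
  obtain ⟨p, hp⟩ := Set.mem_iUnion.mp hy
  obtain ⟨x, hx, rfl⟩ := hp
  refine Set.mem_iUnion.mpr ⟨p.2, ?_⟩
  show (Ψ.el p.2 * Φ.el p.1) • x ∈ _
  rw [mul_smul]
  exact Set.smul_mem_smul_set hx.2

/-- Inverse of a piecewise translation. -/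
def inv (Φ : PPT G X) : PPT G X where
  ι := Φ.ι
  cnt := Φ.cnt
  pc := fun i => Φ.el i • Φ.pc i
  el := fun i => (Φ.el i)⁻¹
  meas := fun i => meas_smul (Φ.meas i)
  disj := Φ.disjIm
  disjIm := by
    have h : ∀ i, (Φ.el i)⁻¹ • Φ.el i • Φ.pc i = Φ.pc i := fun i => by
      rw [smul_smul, inv_mul_cancel, one_smul]
    intro i j hij
    rw [Function.onFun, h i, h j]
    exact Φ.disj hij

lemma inv_dom (Φ : PPT G X) : (inv Φ).dom = Φ.ran := rfl

lemma inv_ran (Φ : PPT G X) : (inv Φ).ran = Φ.dom := by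
  have h : ∀ i, (Φ.el i)⁻¹ • Φ.el i • Φ.pc i = Φ.pc i := fun i => by
    rw [smul_smul, inv_mul_cancel, one_smul]
  simp only [ran, inv, dom]
  exact Set.iUnion_congr h

lemma inv_toFun_comp (Φ : PPT G X) {x : X} (hx : x ∈ Φ.dom) :
    (inv Φ).toFun (Φ.toFun x) = x := by
  obtain ⟨i, hi⟩ := Set.mem_iUnion.mp hx
  rw [Φ.toFun_pc hi]
  have h1 : Φ.el i • x ∈ (inv Φ).pc i := Set.smul_mem_smul_set hi
  rw [(inv Φ).toFun_pc h1]
  show (Φ.el i)⁻¹ • Φ.el i • x = x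
  rw [smul_smul, inv_mul_cancel, one_smul]

lemma toFun_inv_comp (Φ : PPT G X) {y : X} (hy : y ∈ Φ.ran) :
    Φ.toFun ((inv Φ).toFun y) = y := by
  obtain ⟨i, hi⟩ := Set.mem_iUnion.mp hy
  obtain ⟨x, hx, rfl⟩ := hi
  have h1 : Φ.el i • x ∈ (inv Φ).pc i := Set.smul_mem_smul_set hx
  rw [(inv Φ).toFun_pc h1]
  show Φ.toFun ((Φ.el i)⁻¹ • Φ.el i • x) = _
  rw [smul_smul, inv_mul_cancel, one_smul, Φ.toFun_pc hx]

/-- Restriction of a piecewise translation to a measurable set. -/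
def restr (Φ : PPT G X) (S : Set X) (hS : MeasurableSet S) : PPT G X where
  ι := Φ.ι
  cnt := Φ.cnt
  pc := fun i => Φ.pc i ∩ S
  el := Φ.el
  meas := fun i => (Φ.meas i).inter hS
  disj := fun i j hij => (Φ.disj hij).mono Set.inter_subset_left Set.inter_subset_left
  disjIm := fun i j hij => (Φ.disjIm hij).mono
    (Set.smul_set_mono Set.inter_subset_left) (Set.smul_set_mono Set.inter_subset_left)

lemma restr_dom (Φ : PPT G X) (S : Set X) (hS : MeasurableSet S) :
    (Φ.restr S hS).dom = Φ.dom ∩ S := by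
  simp only [restr, dom, Set.iUnion_inter]

lemma restr_toFun (Φ : PPT G X) (S : Set X) (hS : MeasurableSet S) {x : X}
    (hx : x ∈ Φ.dom ∩ S) : (Φ.restr S hS).toFun x = Φ.toFun x := by
  obtain ⟨i, hi⟩ := Set.mem_iUnion.mp hx.1
  have h1 : x ∈ (Φ.restr S hS).pc i := ⟨hi, hx.2⟩
  rw [(Φ.restr S hS).toFun_pc h1, Φ.toFun_pc hi]
  rfl

lemma restr_ran (Φ : PPT G X) (S : Set X) (hS : MeasurableSet S) :
    (Φ.restr S hS).ran = Φ.toFun '' (Φ.dom ∩ S) := by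
  rw [Φ.image_dom_inter S]
  simp only [restr, ran]

/-- Union of two piecewise translations with disjoint domains and disjoint ranges. -/
def union2 (Φ Ψ : PPT G X) (hd : Disjoint Φ.dom Ψ.dom) (hr : Disjoint Φ.ran Ψ.ran) :
    PPT G X where
  ι := Φ.ι ⊕ Ψ.ι
  cnt := by haveI := Φ.cnt; haveI := Ψ.cnt; infer_instance
  pc := fun i => Sum.elim Φ.pc Ψ.pc i
  el := fun i => Sum.elim Φ.el Ψ.el i
  meas := fun i => by cases i with
    | inl i => exact Φ.meas i
    | inr i => exact Ψ.meas i
  disj := by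
    rintro (i | i) (j | j) hne
    · exact Φ.disj (fun h => hne (by rw [h]))
    · exact hd.mono (Set.subset_iUnion Φ.pc i) (Set.subset_iUnion Ψ.pc j)
    · exact (hd.symm).mono (Set.subset_iUnion Ψ.pc i) (Set.subset_iUnion Φ.pc j)
    · exact Ψ.disj (fun h => hne (by rw [h]))
  disjIm := by
    rintro (i | i) (j | j) hne
    · exact Φ.disjIm (fun h => hne (by rw [h]))
    · exact hr.mono (Set.subset_iUnion (fun k => Φ.el k • Φ.pc k) i)
        (Set.subset_iUnion (fun k => Ψ.el k • Ψ.pc k) j)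
    · exact (hr.symm).mono (Set.subset_iUnion (fun k => Ψ.el k • Ψ.pc k) i)
        (Set.subset_iUnion (fun k => Φ.el k • Φ.pc k) j)
    · exact Ψ.disjIm (fun h => hne (by rw [h]))

lemma union2_dom (Φ Ψ : PPT G X) (hd : Disjoint Φ.dom Ψ.dom) (hr : Disjoint Φ.ran Ψ.ran) :
    (union2 Φ Ψ hd hr).dom = Φ.dom ∪ Ψ.dom := by
  simp only [union2, dom]
  rw [Set.iUnion_sum]
  rfl

lemma union2_ran (Φ Ψ : PPT G X) (hd : Disjoint Φ.dom Ψ.dom) (hr : Disjoint Φ.ran Ψ.ran) :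
    (union2 Φ Ψ hd hr).ran = Φ.ran ∪ Ψ.ran := by
  simp only [union2, ran]
  rw [Set.iUnion_sum]
  rfl

lemma union2_toFun_left (Φ Ψ : PPT G X) (hd : Disjoint Φ.dom Ψ.dom)
    (hr : Disjoint Φ.ran Ψ.ran) {x : X} (hx : x ∈ Φ.dom) :
    (union2 Φ Ψ hd hr).toFun x = Φ.toFun x := by
  obtain ⟨i, hi⟩ := Set.mem_iUnion.mp hx
  have h1 : x ∈ (union2 Φ Ψ hd hr).pc (Sum.inl i) := hi
  rw [(union2 Φ Ψ hd hr).toFun_pc h1, Φ.toFun_pc hi]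
  rfl

lemma union2_toFun_right (Φ Ψ : PPT G X) (hd : Disjoint Φ.dom Ψ.dom)
    (hr : Disjoint Φ.ran Ψ.ran) {x : X} (hx : x ∈ Ψ.dom) :
    (union2 Φ Ψ hd hr).toFun x = Ψ.toFun x := by
  obtain ⟨i, hi⟩ := Set.mem_iUnion.mp hx
  have h1 : x ∈ (union2 Φ Ψ hd hr).pc (Sum.inr i) := hi
  rw [(union2 Φ Ψ hd hr).toFun_pc h1, Ψ.toFun_pc hi]
  rfl

/-- Finite union of piecewise translations with pairwise disjoint domains and ranges. -/
def unionFin {m : ℕ} (F : Fin m → PPT G X)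
    (hd : Pairwise (Function.onFun Disjoint (fun k => (F k).dom)))
    (hr : Pairwise (Function.onFun Disjoint (fun k => (F k).ran))) : PPT G X where
  ι := Σ k : Fin m, (F k).ι
  cnt := by haveI : ∀ k, Countable (F k).ι := fun k => (F k).cnt; infer_instance
  pc := fun p => (F p.1).pc p.2
  el := fun p => (F p.1).el p.2
  meas := fun p => (F p.1).meas p.2
  disj := by
    rintro ⟨k, i⟩ ⟨k', i'⟩ hne
    by_cases hk : k = k'
    · subst hk
      have : i ≠ i' := fun h => hne (by rw [h])
      exact (F k).disj this
    · exact (hd hk).mono (Set.subset_iUnion (F k).pc i) (Set.subset_iUnion (F k').pc i')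
  disjIm := by
    rintro ⟨k, i⟩ ⟨k', i'⟩ hne
    by_cases hk : k = k'
    · subst hk
      have : i ≠ i' := fun h => hne (by rw [h])
      exact (F k).disjIm this
    · exact (hr hk).mono (Set.subset_iUnion (fun j => (F k).el j • (F k).pc j) i)
        (Set.subset_iUnion (fun j => (F k').el j • (F k').pc j) i')

lemma unionFin_dom {m : ℕ} (F : Fin m → PPT G X) (hd) (hr) :
    (unionFin F hd hr).dom = ⋃ k, (F k).dom := by
  simp only [unionFin, dom]
  rw [Set.iUnion_sigma]

lemma unionFin_ran {m : ℕ} (F : Fin m → PPT G X) (hd) (hr) :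
    (unionFin F hd hr).ran = ⋃ k, (F k).ran := by
  simp only [unionFin, ran]
  rw [Set.iUnion_sigma]

lemma unionFin_toFun {m : ℕ} (F : Fin m → PPT G X) (hd) (hr) {k : Fin m} {x : X}
    (hx : x ∈ (F k).dom) : (unionFin F hd hr).toFun x = (F k).toFun x := by
  obtain ⟨i, hi⟩ := Set.mem_iUnion.mp hx
  have h1 : x ∈ (unionFin F hd hr).pc ⟨k, i⟩ := hi
  rw [(unionFin F hd hr).toFun_pc h1, (F k).toFun_pc hi]
  rfl

/-- The identity piecewise translation on a measurable set. -/
def idOn (S : Set X) (hS : MeasurableSet S) : PPT G X where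
  ι := PUnit
  cnt := inferInstance
  pc := fun _ => S
  el := fun _ => 1
  meas := fun _ => hS
  disj := Subsingleton.pairwise
  disjIm := Subsingleton.pairwise

lemma idOn_dom (S : Set X) (hS : MeasurableSet S) : (idOn (G := G) S hS).dom = S := by
  simp only [idOn, dom, Set.iUnion_const]

lemma idOn_ran (S : Set X) (hS : MeasurableSet S) : (idOn (G := G) S hS).ran = S := by
  simp only [idOn, ran, Set.iUnion_const]
  rw [one_smul]

lemma idOn_toFun (S : Set X) (hS : MeasurableSet S) {x : X} (hx : x ∈ S) :
    (idOn (G := G) S hS).toFun x = x := by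
  have h1 : x ∈ (idOn (G := G) S hS).pc PUnit.unit := hx
  rw [(idOn S hS).toFun_pc h1]
  show (1 : G) • x = x
  rw [one_smul]


section Glob
variable {μ : Measure X}

lemma left_inverse_inv (Φ : PPT G X) (hdom : Φ.dom = Set.univ) (hran : Φ.ran = Set.univ) :
    Function.LeftInverse (inv Φ).toFun Φ.toFun := fun x =>
  Φ.inv_toFun_comp (by rw [hdom]; trivial)

lemma right_inverse_inv (Φ : PPT G X) (hdom : Φ.dom = Set.univ) (hran : Φ.ran = Set.univ) :
    Function.RightInverse (inv Φ).toFun Φ.toFun := fun y =>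
  Φ.toFun_inv_comp (by rw [hran]; trivial)

/-- A piecewise translation with full domain and range gives a measurable equivalence. -/
noncomputable def equiv (Φ : PPT G X) (hdom : Φ.dom = Set.univ) (hran : Φ.ran = Set.univ) :
    X ≃ᵐ X where
  toFun := Φ.toFun
  invFun := (inv Φ).toFun
  left_inv := Φ.left_inverse_inv hdom hran
  right_inv := Φ.right_inverse_inv hdom hran
  measurable_toFun := Φ.measurable_toFun
  measurable_invFun := (inv Φ).measurable_toFun

lemma measurePreserving (Φ : PPT G X)
    (hmp : ∀ g : G, MeasurePreserving (fun x : X => g • x) μ μ)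
    (hdom : Φ.dom = Set.univ) (hran : Φ.ran = Set.univ) :
    MeasurePreserving Φ.toFun μ μ := by
  haveI := Φ.cnt
  refine ⟨Φ.measurable_toFun, ?_⟩
  refine Measure.ext fun s hs => ?_
  rw [Measure.map_apply Φ.measurable_toFun hs]
  have hpre : Φ.toFun ⁻¹' s = ⋃ i, (Φ.pc i ∩ (fun x => Φ.el i • x) ⁻¹' s) := by
    ext x
    have hx : x ∈ Φ.dom := by rw [hdom]; trivial
    obtain ⟨i, hi⟩ := Set.mem_iUnion.mp hx
    constructor
    · intro hxs
      rw [Set.mem_preimage, Φ.toFun_pc hi] at hxs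
      exact Set.mem_iUnion.mpr ⟨i, hi, hxs⟩
    · intro hxs
      obtain ⟨j, hj, hjs⟩ := Set.mem_iUnion.mp hxs
      rw [Set.mem_preimage, Φ.toFun_pc hj]
      exact hjs
  rw [hpre]
  have h1 : μ (⋃ i, (Φ.pc i ∩ (fun x => Φ.el i • x) ⁻¹' s)) =
      ∑' i, μ (Φ.pc i ∩ (fun x => Φ.el i • x) ⁻¹' s) := by
    refine measure_iUnion ?_ fun i => (Φ.meas i).inter ((measurable_const_smul (Φ.el i)) hs)
    intro i j hij
    exact (Φ.disj hij).mono Set.inter_subset_left Set.inter_subset_left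
  have h2 : ∀ i, μ (Φ.pc i ∩ (fun x => Φ.el i • x) ⁻¹' s) = μ (Φ.el i • Φ.pc i ∩ s) := by
    intro i
    have hset : (fun x => Φ.el i • x) ⁻¹' (Φ.el i • Φ.pc i ∩ s)
        = Φ.pc i ∩ (fun x => Φ.el i • x) ⁻¹' s := by
      rw [Set.preimage_inter]
      congr 1
      ext x
      simp [Set.mem_smul_set_iff_inv_smul_mem, inv_smul_smul]
    rw [← hset, (hmp (Φ.el i)).measure_preimage
      ((meas_smul (Φ.meas i)).inter hs).nullMeasurableSet]
  have h3 : μ (⋃ i, (Φ.el i • Φ.pc i ∩ s)) = ∑' i, μ (Φ.el i • Φ.pc i ∩ s) := by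
    refine measure_iUnion ?_ fun i => (meas_smul (Φ.meas i)).inter hs
    intro i j hij
    exact (Φ.disjIm hij).mono Set.inter_subset_left Set.inter_subset_left
  have h4 : (⋃ i, (Φ.el i • Φ.pc i ∩ s)) = s := by
    rw [← Set.iUnion_inter]
    show Φ.ran ∩ s = s
    rw [hran, Set.univ_inter]
  rw [h1]
  calc ∑' i, μ (Φ.pc i ∩ (fun x => Φ.el i • x) ⁻¹' s)
      = ∑' i, μ (Φ.el i • Φ.pc i ∩ s) := tsum_congr h2
    _ = μ (⋃ i, (Φ.el i • Φ.pc i ∩ s)) := h3.symm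
    _ = μ s := by rw [h4]

lemma equiv_coe (Φ : PPT G X) (hdom : Φ.dom = Set.univ) (hran : Φ.ran = Set.univ) :
    ⇑(Φ.equiv hdom hran) = Φ.toFun := rfl

lemma equiv_measurePreserving (Φ : PPT G X)
    (hmp : ∀ g : G, MeasurePreserving (fun x : X => g • x) μ μ)
    (hdom : Φ.dom = Set.univ) (hran : Φ.ran = Set.univ) :
    MeasurePreserving (Φ.equiv hdom hran) μ μ := Φ.measurePreserving hmp hdom hran

end Glob
end Ops
end PPT


section Matching
variable {G : Type*} [Group G] [TopologicalSpace G] [IsTopologicalGroup G]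
    [LocallyCompactSpace G] [PolishSpace G]
    [MeasurableSpace G] [BorelSpace G]
    {X : Type*} [MeasurableSpace X]
    {μ : MeasureTheory.Measure X} [MeasureTheory.IsProbabilityMeasure μ]
    [MulAction G X]

variable {G : Type*} [Group G] [TopologicalSpace G] [IsTopologicalGroup G]
    [LocallyCompactSpace G] [PolishSpace G]
    [MeasurableSpace G] [BorelSpace G]
    {X : Type*} [MeasurableSpace X]
    {μ : Measure X} [IsProbabilityMeasure μ]
    [MulAction G X]

/-- L0: ergodic sweeping lemma. -/
lemma sweep (hBorel : Measurable fun p : G × X => p.1 • p.2)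
    (hmp : ∀ g : G, MeasurePreserving (fun x : X => g • x) μ μ)
    (herg : ∀ s : Set X, MeasurableSet s →
      (∀ g : G, μ (symmDiff ((fun x => g • x) '' s) s) = 0) → μ s = 0 ∨ μ s = 1)
    {B C : Set X} (hB : MeasurableSet B) (hC : MeasurableSet C)
    (h0 : ∀ g : G, μ (B ∩ (fun x => g • x) ⁻¹' C) = 0) (hCpos : μ C ≠ 0) : μ B = 0 := by
  classical
  set ν : Measure G := Measure.haar with hν
  have hmeasE : MeasurableSet {p : G × X | p.1⁻¹ • p.2 ∈ C} := by
    have : Measurable fun p : G × X => p.1⁻¹ • p.2 :=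
      hBorel.comp ((measurable_fst.inv).prodMk measurable_snd)
    exact this hC
  set E : Set (G × X) := {p : G × X | p.1⁻¹ • p.2 ∈ C} with hE
  set t : X → ℝ≥0∞ := fun x => ν ((fun g => (g, x)) ⁻¹' E) with ht
  have htm : Measurable t := measurable_measure_prodMk_right hmeasE
  have htinv : ∀ (h : G) (x : X), t (h • x) = t x := by
    intro h x
    have h1 : ((fun g => (g, h • x)) ⁻¹' E) = (fun g => h⁻¹ * g) ⁻¹' ((fun g => (g, x)) ⁻¹' E) := by
      ext g
      show g⁻¹ • h • x ∈ C ↔ (h⁻¹ * g)⁻¹ • x ∈ C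
      rw [mul_inv_rev, inv_inv, mul_smul]
    show ν _ = ν _
    rw [h1, measure_preimage_mul]
  set W : Set X := {x | t x ≠ 0} with hW
  have hWm : MeasurableSet W := (htm (measurableSet_singleton 0)).compl
  have hWinv : ∀ g : G, (fun x => g • x) '' W = W := by
    intro g
    ext y
    constructor
    · rintro ⟨x, hx, rfl⟩
      simpa [hW, htinv g x] using hx
    · intro hy
      refine ⟨g⁻¹ • y, ?_, by simp⟩
      have : t (g⁻¹ • y) = t y := htinv g⁻¹ y
      simpa [hW, this] using hy
  have hW01 : μ W = 0 ∨ μ W = 1 := by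
    refine herg W hWm fun g => ?_
    rw [hWinv g, symmDiff_self]
    simp
  have hint : ∫⁻ x, t x ∂μ = ν Set.univ * μ C := by
    have h1 : (ν.prod μ) E = ∫⁻ x, ν ((fun g => (g, x)) ⁻¹' E) ∂μ := Measure.prod_apply_symm hmeasE
    have h2 : (ν.prod μ) E = ∫⁻ g, μ (Prod.mk g ⁻¹' E) ∂ν := Measure.prod_apply hmeasE
    have h3 : ∀ g : G, μ (Prod.mk g ⁻¹' E) = μ C := by
      intro g
      have h4 : (Prod.mk g ⁻¹' E) = (fun x => g⁻¹ • x) ⁻¹' C := rfl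
      rw [h4, (hmp g⁻¹).measure_preimage hC.nullMeasurableSet]
    rw [← h1, h2]
    simp only [h3]
    rw [lintegral_const, mul_comm]
  have hWpos : μ W ≠ 0 := by
    intro h
    have hae : t =ᵐ[μ] 0 := by
      have h5 : μ {x | t x ≠ 0} = 0 := h
      filter_upwards [measure_eq_zero_iff_ae_notMem.mp h5] with x hx
      simpa using hx
    have h6 : ∫⁻ x, t x ∂μ = 0 := lintegral_eq_zero_iff htm |>.mpr hae
    rw [hint] at h6
    rcases mul_eq_zero.mp h6 with h' | h'
    · exact (isOpen_univ.measure_pos ν Set.univ_nonempty).ne' h'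
    · exact hCpos h'
  have hW1 : μ W = 1 := hW01.resolve_left hWpos
  -- now the B side
  have hBW : μ (B ∩ W) = 0 := by
    set EB : Set (G × X) := (Prod.snd ⁻¹' B) ∩ E with hEB
    have hEBm : MeasurableSet EB := (measurable_snd hB).inter hmeasE
    set f : X → ℝ≥0∞ := fun x => ν ((fun g => (g, x)) ⁻¹' EB) with hf
    have hfm : Measurable f := measurable_measure_prodMk_right hEBm
    have h1 : (ν.prod μ) EB = 0 := by
      rw [Measure.prod_apply hEBm]
      have h3 : ∀ g : G, μ (Prod.mk g ⁻¹' EB) = 0 := by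
        intro g
        have h7 : (Prod.mk g ⁻¹' EB) = B ∩ (fun x => g⁻¹ • x) ⁻¹' C := rfl
        rw [h7]; exact h0 g⁻¹
      simp [h3]
    have h2 : ∫⁻ x, f x ∂μ = 0 := by
      rw [hf]
      rw [← Measure.prod_apply_symm hEBm, h1]
    have h5 : f =ᵐ[μ] 0 := (lintegral_eq_zero_iff hfm).mp h2
    have h6 : μ {x | f x ≠ 0} = 0 := by
      rw [Filter.EventuallyEq, ae_iff] at h5
      simpa using h5
    refine le_antisymm (le_trans (measure_mono ?_) h6.le) (zero_le)
    intro x hx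
    have h8 : ((fun g => (g, x)) ⁻¹' EB) = ((fun g => (g, x)) ⁻¹' E) := by
      ext g; simp [hEB, hx.1]
    show f x ≠ 0
    rw [hf]
    simp only []
    rw [h8]
    exact hx.2
  have hWc : μ Wᶜ = 0 := by
    rw [measure_compl hWm (measure_ne_top μ W), hW1]
    simp
  have hle : μ B ≤ μ (B ∩ W) + μ Wᶜ := by
    calc μ B ≤ μ ((B ∩ W) ∪ Wᶜ) := measure_mono (by
                intro x hx
                by_cases h : x ∈ W
                · exact Or.inl ⟨hx, h⟩
                · exact Or.inr h)
      _ ≤ μ (B ∩ W) + μ Wᶜ := measure_union_le _ _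
  rw [hBW, hWc] at hle
  simpa using hle


lemma matching (hsm : MeasurableSMul G X)
    (hBorel : Measurable fun p : G × X => p.1 • p.2)
    (hmp : ∀ g : G, MeasurePreserving (fun x : X => g • x) μ μ)
    (herg : ∀ s : Set X, MeasurableSet s →
      (∀ g : G, μ (symmDiff ((fun x => g • x) '' s) s) = 0) → μ s = 0 ∨ μ s = 1)
    {B C : Set X} (hB : MeasurableSet B) (hC : MeasurableSet C) (hBC : μ B ≤ μ C) :
    ∃ Φ : PPT G X, Φ.dom ⊆ B ∧ Φ.ran ⊆ C ∧ μ (B \ Φ.dom) = 0 := by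
  classical
  haveI := hsm
  have pick : ∀ p : Set X × Set X, ∃ g : G,
      (⨆ h : G, μ (p.1 ∩ (fun x => h • x) ⁻¹' p.2)) ≤ 2 * μ (p.1 ∩ (fun x => g • x) ⁻¹' p.2) := by
    intro p
    set s := ⨆ h : G, μ (p.1 ∩ (fun x => h • x) ⁻¹' p.2) with hs
    rcases eq_or_ne s 0 with h0 | h0
    · exact ⟨1, by rw [h0]; exact zero_le⟩
    · have hstop : s ≠ ⊤ := by
        refine ne_top_of_le_ne_top ENNReal.one_ne_top ?_
        exact iSup_le fun h => prob_le_one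
      have hhalf : s / 2 < s := ENNReal.half_lt_self h0 hstop
      obtain ⟨g, hg⟩ := lt_iSup_iff.mp hhalf
      refine ⟨g, ?_⟩
      calc s = 2 * (s / 2) := by
            rw [ENNReal.mul_div_cancel two_ne_zero (by norm_num)]
        _ ≤ 2 * μ (p.1 ∩ (fun x => g • x) ⁻¹' p.2) := mul_le_mul_right hg.le 2
  choose gk hgk using pick
  set nxt : Set X × Set X → Set X × Set X := fun p =>
    (p.1 \ (p.1 ∩ (fun x => gk p • x) ⁻¹' p.2),
     p.2 \ (gk p • (p.1 ∩ (fun x => gk p • x) ⁻¹' p.2))) with hnxt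
  set st : ℕ → Set X × Set X := fun n => nxt^[n] (B, C) with hst
  have hstep : ∀ n, st (n + 1) = nxt (st n) := by
    intro n
    rw [hst]
    exact Function.iterate_succ_apply' nxt n (B, C)
  set P : ℕ → Set X := fun n => (st n).1 ∩ (fun x => gk (st n) • x) ⁻¹' (st n).2 with hP
  set g : ℕ → G := fun n => gk (st n) with hg
  have hsub1 : ∀ n, (st (n + 1)).1 = (st n).1 \ P n := fun n => by rw [hstep n]
  have hsub2 : ∀ n, (st (n + 1)).2 = (st n).2 \ (g n • P n) := fun n => by rw [hstep n]
  have hmeas : ∀ n, MeasurableSet (st n).1 ∧ MeasurableSet (st n).2 := by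
    intro n
    induction n with
    | zero => exact ⟨hB, hC⟩
    | succ n ih =>
      have hPn : MeasurableSet (P n) :=
        ih.1.inter ((measurable_const_smul (g n)) ih.2)
      exact ⟨by rw [hsub1 n]; exact ih.1.diff hPn,
        by rw [hsub2 n]; exact ih.2.diff (PPT.meas_smul hPn)⟩
  have hPmeas : ∀ n, MeasurableSet (P n) := fun n =>
    (hmeas n).1.inter ((measurable_const_smul (g n)) (hmeas n).2)
  have hPsub : ∀ n, P n ⊆ (st n).1 := fun n => Set.inter_subset_left
  have hgP : ∀ n, g n • P n ⊆ (st n).2 := by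
    rintro n y ⟨x, hx, rfl⟩
    exact hx.2
  have hmono1 : ∀ m n, m ≤ n → (st n).1 ⊆ (st m).1 := by
    have hdec : ∀ n, (st (n + 1)).1 ≤ (st n).1 := fun n => by
      rw [hsub1 n]; exact Set.diff_subset
    intro m n hmn
    exact antitone_nat_of_succ_le (f := fun n => (st n).1) hdec hmn
  have hmono2 : ∀ m n, m ≤ n → (st n).2 ⊆ (st m).2 := by
    have hdec : ∀ n, (st (n + 1)).2 ≤ (st n).2 := fun n => by
      rw [hsub2 n]; exact Set.diff_subset
    intro m n hmn
    exact antitone_nat_of_succ_le (f := fun n => (st n).2) hdec hmn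
  have hB0 : (st 0).1 = B := rfl
  have hC0 : (st 0).2 = C := rfl
  have hPB : ∀ n, P n ⊆ B := fun n => subset_trans (hPsub n) (by rw [← hB0]; exact hmono1 0 n (Nat.zero_le n))
  have hPC : ∀ n, g n • P n ⊆ C := fun n => subset_trans (hgP n) (by rw [← hC0]; exact hmono2 0 n (Nat.zero_le n))
  have hdisj_aux : ∀ m n, m < n → Disjoint (P m) (P n) := by
    intro m n hmn
    have h1 : P n ⊆ (st (m + 1)).1 := subset_trans (hPsub n) (hmono1 (m + 1) n hmn)
    rw [hsub1 m] at h1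
    exact Disjoint.symm (Set.disjoint_left.mpr fun x hx => (h1 hx).2)
  have hPdisj : Pairwise (Function.onFun Disjoint P) := by
    intro m n hmn
    rcases lt_or_gt_of_ne hmn with h | h
    · exact hdisj_aux m n h
    · exact (hdisj_aux n m h).symm
  have hIdisj_aux : ∀ m n, m < n → Disjoint (g m • P m) (g n • P n) := by
    intro m n hmn
    have h1 : g n • P n ⊆ (st (m + 1)).2 := subset_trans (hgP n) (hmono2 (m + 1) n hmn)
    rw [hsub2 m] at h1
    exact Disjoint.symm (Set.disjoint_left.mpr fun x hx => (h1 hx).2)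
  have hIdisj : Pairwise (Function.onFun Disjoint fun n => g n • P n) := by
    intro m n hmn
    rcases lt_or_gt_of_ne hmn with h | h
    · exact hIdisj_aux m n h
    · exact (hIdisj_aux n m h).symm
  have htsum : ∑' n, μ (P n) ≠ ⊤ := by
    rw [← measure_iUnion hPdisj hPmeas]
    exact measure_ne_top μ _
  have htend : Filter.Tendsto (fun n => μ (P n)) Filter.atTop (nhds 0) :=
    ENNReal.tendsto_atTop_zero_of_tsum_ne_top htsum
  set Binf : Set X := B \ ⋃ n, P n with hBinf
  set Cinf : Set X := C \ ⋃ n, g n • P n with hCinf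
  have hBinfm : MeasurableSet Binf := hB.diff (MeasurableSet.iUnion hPmeas)
  have hCinfm : MeasurableSet Cinf := hC.diff (MeasurableSet.iUnion fun n => PPT.meas_smul (hPmeas n))
  have hBinf_sub : ∀ n, Binf ⊆ (st n).1 := by
    intro n
    induction n with
    | zero => rw [hB0]; exact Set.diff_subset
    | succ n ih =>
      rw [hsub1 n]
      intro x hx
      exact ⟨ih hx, fun hPx => hx.2 (Set.mem_iUnion.mpr ⟨n, hPx⟩)⟩
  have hCinf_sub : ∀ n, Cinf ⊆ (st n).2 := by
    intro n
    induction n with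
    | zero => rw [hC0]; exact Set.diff_subset
    | succ n ih =>
      rw [hsub2 n]
      intro x hx
      exact ⟨ih hx, fun hPx => hx.2 (Set.mem_iUnion.mpr ⟨n, hPx⟩)⟩
  have hzero : ∀ h : G, μ (Binf ∩ (fun x => h • x) ⁻¹' Cinf) = 0 := by
    intro h
    have hle : ∀ n, μ (Binf ∩ (fun x => h • x) ⁻¹' Cinf) ≤ 2 * μ (P n) := by
      intro n
      refine le_trans (measure_mono ?_) (le_trans
        (le_iSup (fun h' => μ ((st n).1 ∩ (fun x => h' • x) ⁻¹' (st n).2)) h) (hgk (st n)))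
      exact Set.inter_subset_inter (hBinf_sub n) (Set.preimage_mono (hCinf_sub n))
    have h2 : Filter.Tendsto (fun n => 2 * μ (P n)) Filter.atTop (nhds 0) := by
      have := ENNReal.Tendsto.const_mul htend (Or.inr (by norm_num : (2 : ℝ≥0∞) ≠ ⊤))
      simpa using this
    have := ge_of_tendsto' h2 hle
    exact le_antisymm this (zero_le)
  have himg_eq : ∀ n, μ (g n • P n) = μ (P n) := fun n => PPT.measure_smul hmp (hPmeas n)
  have hBdiff : μ Binf = μ B - ∑' n, μ (P n) := by
    rw [hBinf, measure_diff (Set.iUnion_subset hPB)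
      (MeasurableSet.iUnion hPmeas).nullMeasurableSet (measure_ne_top μ _),
      measure_iUnion hPdisj hPmeas]
  have hCdiff : μ Cinf = μ C - ∑' n, μ (P n) := by
    rw [hCinf, measure_diff (Set.iUnion_subset hPC)
      (MeasurableSet.iUnion fun n => PPT.meas_smul (hPmeas n)).nullMeasurableSet
      (measure_ne_top μ _),
      measure_iUnion hIdisj fun n => PPT.meas_smul (hPmeas n)]
    congr 1
    exact tsum_congr himg_eq
  have hBC_inf : μ Binf ≤ μ Cinf := by
    rw [hBdiff, hCdiff]
    exact tsub_le_tsub hBC le_rfl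
  have hBinf0 : μ Binf = 0 := by
    by_cases hC0' : μ Cinf = 0
    · exact le_antisymm (le_trans hBC_inf hC0'.le) (zero_le)
    · exact sweep hBorel hmp herg hBinfm hCinfm hzero hC0'
  refine ⟨⟨ℕ, inferInstance, P, g, hPmeas, hPdisj, hIdisj⟩, ?_, ?_, ?_⟩
  · exact Set.iUnion_subset hPB
  · exact Set.iUnion_subset hPC
  · exact hBinf0


lemma tower (hsm : MeasurableSMul G X)
    (hBorel : Measurable fun p : G × X => p.1 • p.2)
    (hmp : ∀ g : G, MeasurePreserving (fun x : X => g • x) μ μ)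
    (herg : ∀ s : Set X, MeasurableSet s →
      (∀ g : G, μ (symmDiff ((fun x => g • x) '' s) s) = 0) → μ s = 0 ∨ μ s = 1)
    {A : Set X} (hA : MeasurableSet A) {K : ℕ} (hK1 : 1 ≤ K) (hAK : μ A = 1 / K) :
    ∀ m : ℕ, m + 1 ≤ K → ∃ (As : ℕ → Set X) (ψs : ℕ → PPT G X),
      As 0 = A ∧ (∀ i, MeasurableSet (As i)) ∧ (∀ i, i ≤ m → μ (As i) = μ A) ∧
      (∀ i j, i < j → j ≤ m → Disjoint (As i) (As j)) ∧
      (∀ j, j < m → (ψs j).dom ⊆ As j ∧ (ψs j).ran = As (j + 1) ∧ μ (As j \ (ψs j).dom) = 0) := by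
  haveI := hsm
  intro m
  induction m with
  | zero =>
    intro _
    classical
    refine ⟨fun i => if i = 0 then A else ∅, fun _ => PPT.idOn ∅ MeasurableSet.empty,
      by simp, ?_, ?_, ?_, ?_⟩
    · intro i
      by_cases hi : i = 0 <;> simp [hi, hA]
    · intro i hi
      interval_cases i
      simp
    · intro i j hij hj
      omega
    · intro j hj
      omega
  | succ m ih =>
    intro hmK
    obtain ⟨As, ψs, h0, hmeas, hμ, hdisj, hψ⟩ := ih (by omega)
    classical
    set Acc : Set X := ⋃ i ∈ Finset.range (m + 1), As i with hAcc
    have hAccm : MeasurableSet Acc := Finset.measurableSet_biUnion _ fun i _ => hmeas i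
    have hAccμ : μ Acc = (m + 1) * μ A := by
      rw [hAcc, measure_biUnion_finset ?_ fun i _ => hmeas i]
      · rw [Finset.sum_congr rfl (fun i hi => hμ i (by
          have := Finset.mem_range.mp hi; omega))]
        rw [Finset.sum_const, Finset.card_range, nsmul_eq_mul]
        push_cast
        ring
      · intro i hi j hj hij
        have hi' := Finset.mem_range.mp hi
        have hj' := Finset.mem_range.mp hj
        rcases lt_or_gt_of_ne hij with h | h
        · exact hdisj i j h (by omega)
        · exact (hdisj j i h (by omega)).symm
    have hκ0 : (K : ℝ≥0∞) ≠ 0 := by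
      simp only [ne_eq, Nat.cast_eq_zero]
      omega
    have hκtop : (K : ℝ≥0∞) ≠ ⊤ := ENNReal.natCast_ne_top K
    have hAne : μ A = ((K : ℝ≥0∞))⁻¹ := by rw [hAK, one_div]
    have hkey : μ A + (m + 1) * μ A ≤ 1 := by
      rw [hAne]
      have h1 : ((K : ℝ≥0∞))⁻¹ + (↑m + 1) * ((K : ℝ≥0∞))⁻¹ = (↑m + 2) * ((K : ℝ≥0∞))⁻¹ := by
        ring
      rw [h1]
      have h2 : ((m : ℝ≥0∞) + 2) ≤ (K : ℝ≥0∞) := by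
        have : ((m + 2 : ℕ) : ℝ≥0∞) ≤ (K : ℝ≥0∞) := Nat.cast_le.mpr hmK
        push_cast at this
        exact this
      calc ((m : ℝ≥0∞) + 2) * ((K : ℝ≥0∞))⁻¹ ≤ (K : ℝ≥0∞) * ((K : ℝ≥0∞))⁻¹ :=
            mul_le_mul_left h2 _
        _ = 1 := ENNReal.mul_inv_cancel hκ0 hκtop
    have hBC : μ (As m) ≤ μ Accᶜ := by
      rw [prob_compl_eq_one_sub hAccm, hAccμ, hμ m le_rfl]
      refine ENNReal.le_sub_of_add_le_right ?_ hkey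
      refine ENNReal.mul_ne_top (by simp) ?_
      exact ne_top_of_le_ne_top ENNReal.one_ne_top prob_le_one
    obtain ⟨Φ, hΦdom, hΦran, hΦnull⟩ :=
      matching hsm hBorel hmp herg (hmeas m) hAccm.compl hBC
    have hdomμ : μ Φ.dom = μ A := by
      have h1 : μ Φ.dom ≤ μ (As m) := measure_mono hΦdom
      have h2 : μ (As m) ≤ μ Φ.dom := by
        calc μ (As m) ≤ μ (Φ.dom ∪ (As m \ Φ.dom)) := measure_mono (fun x hx => by
              by_cases h : x ∈ Φ.dom
              · exact Or.inl h
              · exact Or.inr ⟨hx, h⟩)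
          _ ≤ μ Φ.dom + μ (As m \ Φ.dom) := measure_union_le _ _
          _ = μ Φ.dom := by rw [hΦnull, add_zero]
      rw [le_antisymm h1 h2, hμ m le_rfl]
    have hranμ : μ Φ.ran = μ A := by rw [Φ.measure_ran hmp, hdomμ]
    have hranDisj : ∀ i, i ≤ m → Disjoint (As i) Φ.ran := by
      intro i hi
      refine Set.disjoint_left.mpr fun x hx hx' => ?_
      have h1 : x ∈ Acc := Set.mem_biUnion (Finset.mem_range.mpr (by omega)) hx
      exact (hΦran hx') h1
    refine ⟨fun i => if i = m + 1 then Φ.ran else As i,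
      fun j => if j = m then Φ else ψs j, ?_, ?_, ?_, ?_, ?_⟩
    · simp only [if_neg (show (0 : ℕ) ≠ m + 1 by omega)]
      exact h0
    · intro i
      by_cases hi : i = m + 1
      · simp only [if_pos hi]; exact Φ.meas_ran
      · simp only [if_neg hi]; exact hmeas i
    · intro i hi
      by_cases hi' : i = m + 1
      · simp only [if_pos hi']; exact hranμ
      · simp only [if_neg hi']; exact hμ i (by omega)
    · intro i j hij hj
      by_cases hj' : j = m + 1
      · simp only [if_pos hj', if_neg (show i ≠ m + 1 by omega)]
        exact hranDisj i (by omega)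
      · simp only [if_neg hj', if_neg (show i ≠ m + 1 by omega)]
        exact hdisj i j hij (by omega)
    · intro j hj
      by_cases hj' : j = m
      · simp only [if_pos hj', if_neg (show j ≠ m + 1 by omega),
          if_pos (show j + 1 = m + 1 by omega)]
        rw [hj']
        exact ⟨hΦdom, trivial, hΦnull⟩
      · simp only [if_neg hj', if_neg (show j ≠ m + 1 by omega),
          if_neg (show j + 1 ≠ m + 1 by omega)]
        exact hψ j (by omega)

end Matching

/-- Let `G` be a locally compact Polish group acting essentially freely, ergodically and
measure-preservingly on `(X,μ)`, let `Y` be a cross-section with injectivity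
neighborhood `U`, and suppose `A := U • Y` has `μ(A) = 1/K`. Then there is an element
`T` of the orbit full group of order `K` such that `A, T(A), ..., T^{K-1}(A)` partition
a full-measure subset of `X`. -/
theorem cross_section_cyclic_element
    (G : Type*) [Group G] [TopologicalSpace G] [IsTopologicalGroup G]
    [LocallyCompactSpace G] [PolishSpace G]
    [MeasurableSpace G] [BorelSpace G]
    (X : Type*) [MeasurableSpace X] [StandardBorelSpace X]
    (μ : Measure X) [IsProbabilityMeasure μ]
    [MulAction G X]
    (hBorel : Measurable fun p : G × X => p.1 • p.2)
    (hmp : ∀ g : G, MeasurePreserving (fun x : X => g • x) μ μ)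
    (hfree : ∀ᵐ x ∂μ, ∀ g : G, g • x = x → g = 1)
    (herg : ∀ s : Set X, MeasurableSet s →
      (∀ g : G, μ (symmDiff ((fun x => g • x) '' s) s) = 0) → μ s = 0 ∨ μ s = 1)
    (Y : Set X) (hY : MeasurableSet Y)
    (U : Set G) (hU : U ∈ nhds (1 : G))
    (hinj : Set.InjOn (fun p : G × X => p.1 • p.2) (U ×ˢ Y))
    (hcover : μ (Set.image2 (fun (g : G) (y : X) => g • y) Set.univ Y)ᶜ = 0)
    (K : ℕ) (hK : 1 ≤ K)
    (A : Set X) (hA : A = Set.image2 (fun (g : G) (y : X) => g • y) U Y)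
    (hAmeas : MeasurableSet A)
    (hAK : μ A = 1 / K) :
    ∃ T : X ≃ᵐ X, MeasurePreserving T μ μ ∧
      (∀ᵐ x ∂μ, ∃ g : G, T x = g • x) ∧
      (∀ᵐ x ∂μ, T^[K] x = x) ∧
      (∀ i j, i < j → j < K → μ (T^[i] '' A ∩ T^[j] '' A) = 0) ∧
      μ (⋃ i ∈ Finset.range K, T^[i] '' A) = 1 := by
  classical
  haveI hsm : MeasurableSMul G X :=
    { measurable_const_smul := fun c => hBorel.comp (measurable_const.prodMk measurable_id),
      measurable_smul_const := fun x => hBorel.comp (measurable_id.prodMk measurable_const) }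
  -- trivial case K = 1
  rcases eq_or_lt_of_le hK with hK1 | hK2
  · refine ⟨MeasurableEquiv.refl X, ?_, ?_, ?_, ?_, ?_⟩
    · exact MeasurePreserving.id μ
    · exact Filter.Eventually.of_forall fun x => ⟨1, (one_smul G x).symm⟩
    · refine Filter.Eventually.of_forall fun x => ?_
      rw [← hK1]
      rfl
    · intro i j hij hjK
      omega
    · rw [← hK1]
      have h1 : (⋃ i ∈ Finset.range 1, (⇑(MeasurableEquiv.refl X))^[i] '' A) = A := by
        simp
      rw [h1, hAK, ← hK1]
      simp
  -- main case K ≥ 2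
  obtain ⟨r', hKr⟩ : ∃ r', K = r' + 2 := ⟨K - 2, by omega⟩
  subst hKr
  obtain ⟨As, ψs, h0, hmeas, hμAs, hdisj, hψ⟩ :=
    tower hsm hBorel hmp herg hAmeas hK hAK (r' + 1) le_rfl
  -- the chain of compositions
  set Cs : ℕ → PPT G X :=
    fun j => Nat.rec (ψs 0) (fun j' C => PPT.comp (ψs (j' + 1)) C) j with hCs
  have hCsS : ∀ j, Cs (j + 1) = PPT.comp (ψs (j + 1)) (Cs j) := fun j => rfl
  have hCs0 : Cs 0 = ψs 0 := rfl
  -- basic facts along the chain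
  have key : ∀ j, j < r' + 1 →
      (Cs j).dom ⊆ A ∧ (Cs j).ran ⊆ As (j + 1) ∧ μ (A \ (Cs j).dom) = 0 := by
    intro j
    induction j with
    | zero =>
      intro hj
      obtain ⟨hd, hr, hn⟩ := hψ 0 hj
      refine ⟨by rw [hCs0, ← h0] at *; exact hd, by rw [hCs0]; exact hr.le, ?_⟩
      rw [hCs0, ← h0]
      exact hn
    | succ j ihj =>
      intro hj
      obtain ⟨ih1, ih2, ih3⟩ := ihj (by omega)
      obtain ⟨hd, hr, hn⟩ := hψ (j + 1) hj
      have hdom : (Cs (j + 1)).dom = (Cs j).dom ∩ (Cs j).toFun ⁻¹' (ψs (j + 1)).dom := by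
        rw [hCsS]
        exact PPT.comp_dom _ _
      refine ⟨?_, ?_, ?_⟩
      · rw [hdom]
        exact subset_trans Set.inter_subset_left ih1
      · rw [hCsS]
        exact subset_trans (PPT.comp_ran_subset _ _) hr.le
      · have hsubun : A \ (Cs (j + 1)).dom ⊆ (A \ (Cs j).dom) ∪
            ((Cs j).dom ∩ (Cs j).toFun ⁻¹' (As (j + 1) \ (ψs (j + 1)).dom)) := by
          intro x hx
          by_cases hxd : x ∈ (Cs j).dom
          · refine Or.inr ⟨hxd, ?_, ?_⟩
            · have : (Cs j).toFun x ∈ (Cs j).ran := by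
                rw [PPT.ran_eq]
                exact Set.mem_image_of_mem _ hxd
              exact ih2 this
            · intro hcon
              exact hx.2 (by rw [hdom]; exact ⟨hxd, hcon⟩)
          · exact Or.inl ⟨hx.1, hxd⟩
        have hnull2 : μ ((Cs j).dom ∩ (Cs j).toFun ⁻¹' (As (j + 1) \ (ψs (j + 1)).dom)) = 0 :=
          PPT.measure_preimage_null hmp _ ((hmeas (j + 1)).diff (ψs (j + 1)).meas_dom) hn
        refine le_antisymm (le_trans (measure_mono hsubun) ?_) (zero_le)
        refine le_trans (measure_union_le _ _) ?_
        rw [ih3, hnull2, add_zero]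
  -- the good set E and the levels D j
  set E : Set X := (Cs r').dom with hE
  have hEsubA : E ⊆ A := (key r' (by omega)).1
  have hEnull : μ (A \ E) = 0 := (key r' (by omega)).2.2
  have hEm : MeasurableSet E := (Cs r').meas_dom
  have hEμ : μ E = μ A := by
    have h1 : μ E ≤ μ A := measure_mono hEsubA
    have h2 : μ A ≤ μ E := by
      calc μ A ≤ μ (E ∪ (A \ E)) := measure_mono (fun x hx => by
            by_cases h : x ∈ E
            · exact Or.inl h
            · exact Or.inr ⟨hx, h⟩)
        _ ≤ μ E + μ (A \ E) := measure_union_le _ _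
        _ = μ E := by rw [hEnull, add_zero]
    exact le_antisymm h1 h2
  have hdomdec : ∀ j, (Cs (j + 1)).dom ⊆ (Cs j).dom := by
    intro j
    rw [hCsS, PPT.comp_dom]
    exact Set.inter_subset_left
  have hEdom : ∀ j, j ≤ r' → E ⊆ (Cs j).dom := by
    intro j hj
    rw [hE]
    exact antitone_nat_of_succ_le (f := fun j => (Cs j).dom) hdomdec hj
  set cf : ℕ → X → X := fun j => Nat.rec _root_.id (fun j' _ => (Cs j').toFun) j with hcf
  have hcf0 : cf 0 = _root_.id := rfl
  have hcfS : ∀ j, cf (j + 1) = (Cs j).toFun := fun j => rfl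
  set D : ℕ → Set X := fun j => cf j '' E with hD
  have hD0 : D 0 = E := by rw [hD]; simp [hcf0]
  have hDS : ∀ j, D (j + 1) = (Cs j).toFun '' E := fun j => rfl
  have hchain : ∀ j, j ≤ r' → ∀ y ∈ E, (ψs j).toFun (cf j y) = cf (j + 1) y := by
    intro j hj y hy
    cases j with
    | zero => rfl
    | succ j' =>
      show (ψs (j' + 1)).toFun ((Cs j').toFun y) = (Cs (j' + 1)).toFun y
      have h1 : y ∈ (Cs (j' + 1)).dom := hEdom (j' + 1) hj hy
      rw [hCsS] at h1 ⊢
      exact (PPT.comp_toFun _ _ h1).symm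
  have hcfmem : ∀ j, j ≤ r' → ∀ y ∈ E, cf j y ∈ (ψs j).dom := by
    intro j hj y hy
    cases j with
    | zero =>
      rw [hcf0]
      have := hEdom 0 (by omega) hy
      rwa [hCs0] at this
    | succ j' =>
      show (Cs j').toFun y ∈ (ψs (j' + 1)).dom
      have h1 : y ∈ (Cs (j' + 1)).dom := hEdom (j' + 1) hj hy
      rw [hCsS, PPT.comp_dom] at h1
      exact h1.2
  have hDm : ∀ j, j ≤ r' + 1 → MeasurableSet (D j) := by
    intro j hj
    cases j with
    | zero => rw [hD0]; exact hEm
    | succ j' =>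
      rw [hDS]
      have h1 : E = (Cs j').dom ∩ E := (Set.inter_eq_self_of_subset_right
        (hEdom j' (by omega))).symm
      rw [h1]
      exact PPT.meas_image _ hEm
  have hDsub : ∀ j, j ≤ r' + 1 → D j ⊆ As j := by
    intro j hj
    cases j with
    | zero => rw [hD0, h0]; exact hEsubA
    | succ j' =>
      rw [hDS]
      intro x hx
      obtain ⟨y, hy, rfl⟩ := hx
      have h1 : (Cs j').toFun y ∈ (Cs j').ran := by
        rw [PPT.ran_eq]
        exact Set.mem_image_of_mem _ (hEdom j' (by omega) hy)
      exact (key j' (by omega)).2.1 h1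
  have hDdisj : ∀ i j, i < j → j ≤ r' + 1 → Disjoint (D i) (D j) := by
    intro i j hij hj
    exact (hdisj i j hij hj).mono (hDsub i (by omega)) (hDsub j hj)
  -- the pieces of the final map
  set F : Fin (r' + 1) → PPT G X := fun k =>
    (ψs k).restr (D k) (hDm k (by omega : (k : ℕ) ≤ r' + 1)) with hF
  have hFdom : ∀ k : Fin (r' + 1), (F k).dom = D k := by
    intro k
    rw [hF]
    rw [PPT.restr_dom]
    refine Set.inter_eq_self_of_subset_right ?_
    intro x hx
    obtain ⟨y, hy, rfl⟩ : ∃ y ∈ E, cf k y = x := by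
      obtain ⟨y, hy, h⟩ := hx
      exact ⟨y, hy, h⟩
    exact hcfmem k (by omega : (k : ℕ) ≤ r') y hy
  have hFtoFun : ∀ (k : Fin (r' + 1)) (x : X), x ∈ D k → (F k).toFun x = (ψs k).toFun x := by
    intro k x hx
    rw [hF]
    refine PPT.restr_toFun _ _ _ ⟨?_, hx⟩
    obtain ⟨y, hy, rfl⟩ : ∃ y ∈ E, cf k y = x := by
      obtain ⟨y, hy, h⟩ := hx
      exact ⟨y, hy, h⟩
    exact hcfmem k (by omega : (k : ℕ) ≤ r') y hy
  have hFran : ∀ k : Fin (r' + 1), (F k).ran = D ((k : ℕ) + 1) := by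
    intro k
    rw [hF, PPT.restr_ran]
    have h1 : (ψs k).dom ∩ D k = D k := by
      have := hFdom k
      rw [hF, PPT.restr_dom] at this
      exact this
    rw [h1]
    ext z
    constructor
    · rintro ⟨x, hx, rfl⟩
      obtain ⟨y, hy, rfl⟩ : ∃ y ∈ E, cf k y = x := by
        obtain ⟨y, hy, h⟩ := hx
        exact ⟨y, hy, h⟩
      rw [hchain k (by omega : (k : ℕ) ≤ r') y hy]
      exact Set.mem_image_of_mem _ hy
    · rintro ⟨y, hy, rfl⟩
      refine ⟨cf k y, Set.mem_image_of_mem _ hy, ?_⟩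
      exact hchain k (by omega : (k : ℕ) ≤ r') y hy
  set IC : PPT G X := PPT.inv (Cs r') with hIC
  have hICdom : IC.dom = D (r' + 1) := by
    rw [hIC, PPT.inv_dom, hDS, hE, ← PPT.ran_eq]
  have hICran : IC.ran = E := by
    rw [hIC, PPT.inv_ran, hE]
  -- the full-measure union W
  set W : Set X := ⋃ j ∈ Finset.range (r' + 2), D j with hW
  have hWm : MeasurableSet W :=
    Finset.measurableSet_biUnion _ fun j hj => hDm j (by
      have := Finset.mem_range.mp hj; omega)
  set ID : PPT G X := PPT.idOn Wᶜ hWm.compl with hID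
  -- assemble
  have hFd : Pairwise (Function.onFun Disjoint fun k => (F k).dom) := by
    intro k k' hkk
    rw [Function.onFun, hFdom k, hFdom k']
    have hne : (k : ℕ) ≠ (k' : ℕ) := fun h => hkk (Fin.ext h)
    rcases lt_or_gt_of_ne hne with h | h
    · exact hDdisj _ _ h (by omega)
    · exact (hDdisj _ _ h (by omega)).symm
  have hFr : Pairwise (Function.onFun Disjoint fun k => (F k).ran) := by
    intro k k' hkk
    rw [Function.onFun, hFran k, hFran k']
    have hne : (k : ℕ) + 1 ≠ (k' : ℕ) + 1 := by
      intro h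
      exact hkk (Fin.ext (by omega))
    rcases lt_or_gt_of_ne hne with h | h
    · exact hDdisj _ _ h (by omega)
    · exact (hDdisj _ _ h (by omega)).symm
  set Fwd : PPT G X := PPT.unionFin F hFd hFr with hFwd
  have hFwdDom : Fwd.dom = ⋃ k : Fin (r' + 1), D k := by
    rw [hFwd, PPT.unionFin_dom]
    exact Set.iUnion_congr hFdom
  have hFwdRan : Fwd.ran = ⋃ k : Fin (r' + 1), D ((k : ℕ) + 1) := by
    rw [hFwd, PPT.unionFin_ran]
    exact Set.iUnion_congr hFran
  have hd1 : Disjoint Fwd.dom IC.dom := by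
    rw [hFwdDom, hICdom]
    refine Set.disjoint_left.mpr fun x hx hx' => ?_
    obtain ⟨k, hk⟩ := Set.mem_iUnion.mp hx
    exact Set.disjoint_left.mp (hDdisj k (r' + 1) (by omega) le_rfl) hk hx'
  have hr1 : Disjoint Fwd.ran IC.ran := by
    rw [hFwdRan, hICran, ← hD0]
    refine Set.disjoint_left.mpr fun x hx hx' => ?_
    obtain ⟨k, hk⟩ := Set.mem_iUnion.mp hx
    exact Set.disjoint_left.mp (hDdisj 0 ((k : ℕ) + 1) (by omega) (by omega)) hx' hk
  set U1 : PPT G X := PPT.union2 Fwd IC hd1 hr1 with hU1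
  have hU1dom : U1.dom = W := by
    rw [hU1, PPT.union2_dom, hFwdDom, hICdom, hW]
    ext x
    simp only [Set.mem_union, Set.mem_iUnion, Finset.mem_range]
    constructor
    · rintro (⟨k, hk⟩ | h)
      · exact ⟨k, by omega, hk⟩
      · exact ⟨r' + 1, by omega, h⟩
    · rintro ⟨j, hj, hx⟩
      by_cases hj' : j = r' + 1
      · exact Or.inr (hj' ▸ hx)
      · exact Or.inl ⟨⟨j, by omega⟩, hx⟩
  have hU1ran : U1.ran = W := by
    rw [hU1, PPT.union2_ran, hFwdRan, hICran, ← hD0, hW]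
    ext x
    simp only [Set.mem_union, Set.mem_iUnion, Finset.mem_range]
    constructor
    · rintro (⟨k, hk⟩ | h)
      · exact ⟨(k : ℕ) + 1, by omega, hk⟩
      · exact ⟨0, by omega, h⟩
    · rintro ⟨j, hj, hx⟩
      cases j with
      | zero => exact Or.inr hx
      | succ j' => exact Or.inl ⟨⟨j', by omega⟩, hx⟩
  have hd2 : Disjoint U1.dom ID.dom := by
    rw [hU1dom, hID, PPT.idOn_dom]
    exact disjoint_compl_right
  have hr2 : Disjoint U1.ran ID.ran := by
    rw [hU1ran, hID, PPT.idOn_ran]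
    exact disjoint_compl_right
  set Tp : PPT G X := PPT.union2 U1 ID hd2 hr2 with hTp
  have hTpdom : Tp.dom = Set.univ := by
    rw [hTp, PPT.union2_dom, hU1dom, hID, PPT.idOn_dom, Set.union_compl_self]
  have hTpran : Tp.ran = Set.univ := by
    rw [hTp, PPT.union2_ran, hU1ran, hID, PPT.idOn_ran, Set.union_compl_self]
  set T : X ≃ᵐ X := Tp.equiv hTpdom hTpran with hT
  have hTcoe : ⇑T = Tp.toFun := rfl
  have hTmp : MeasurePreserving T μ μ := Tp.measurePreserving hmp hTpdom hTpran
  -- behaviour of T on the pieces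
  have hmemW : ∀ j, j ≤ r' + 1 → D j ⊆ W := by
    intro j hj
    rw [hW]
    intro x hx
    exact Set.mem_biUnion (Finset.mem_range.mpr (by omega)) hx
  have hT_onD : ∀ k, k ≤ r' → ∀ x ∈ D k, T x = (ψs k).toFun x := by
    intro k hk x hx
    have hxU1 : x ∈ U1.dom := by rw [hU1dom]; exact hmemW k (by omega) hx
    have hxF : x ∈ (F ⟨k, by omega⟩).dom := by rw [hFdom]; exact hx
    have hxFwd : x ∈ Fwd.dom := by
      rw [hFwdDom]
      exact Set.mem_iUnion.mpr ⟨⟨k, by omega⟩, hx⟩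
    rw [hTcoe, hTp]
    rw [PPT.union2_toFun_left _ _ _ _ hxU1, hU1]
    rw [PPT.union2_toFun_left _ _ _ _ hxFwd, hFwd]
    rw [PPT.unionFin_toFun _ _ _ hxF]
    exact hFtoFun ⟨k, by omega⟩ x hx
  have hT_onDr : ∀ y ∈ D (r' + 1), T y = IC.toFun y := by
    intro y hy
    have hyU1 : y ∈ U1.dom := by rw [hU1dom]; exact hmemW (r' + 1) le_rfl hy
    have hyIC : y ∈ IC.dom := by rw [hICdom]; exact hy
    rw [hTcoe, hTp]
    rw [PPT.union2_toFun_left _ _ _ _ hyU1, hU1]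
    rw [PPT.union2_toFun_right _ _ _ _ hyIC]
  have hT_rest : ∀ x ∈ Wᶜ, T x = x := by
    intro x hx
    have hxID : x ∈ ID.dom := by rw [hID, PPT.idOn_dom]; exact hx
    rw [hTcoe, hTp]
    rw [PPT.union2_toFun_right _ _ _ _ hxID, hID]
    exact PPT.idOn_toFun _ _ hx
  have hcfD : ∀ j, ∀ y ∈ E, cf j y ∈ D j := by
    intro j y hy
    exact Set.mem_image_of_mem _ hy
  have hIter : ∀ y ∈ E, ∀ j, j ≤ r' + 1 → T^[j] y = cf j y := by
    intro y hy j
    induction j with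
    | zero => intro _; rw [hcf0]; rfl
    | succ j ihj =>
      intro hj
      rw [Function.iterate_succ_apply', ihj (by omega)]
      rw [hT_onD j (by omega) (cf j y) (hcfD j y hy)]
      exact hchain j (by omega) y hy
  have hcycleE : ∀ y ∈ E, T^[r' + 2] y = y := by
    intro y hy
    rw [Function.iterate_succ_apply', hIter y hy (r' + 1) le_rfl]
    rw [hT_onDr (cf (r' + 1) y) (hcfD (r' + 1) y hy)]
    rw [hcfS, hIC]
    exact PPT.inv_toFun_comp (Cs r') (hEdom r' le_rfl hy)
  have hfix : ∀ x, T^[r' + 2] x = x := by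
    intro x
    by_cases hx : x ∈ W
    · rw [hW] at hx
      simp only [Set.mem_iUnion, Finset.mem_range] at hx
      obtain ⟨j, hj, hxD⟩ := hx
      obtain ⟨y, hy, rfl⟩ := hxD
      have h1 : cf j y = T^[j] y := (hIter y hy j (by omega)).symm
      rw [h1, ← Function.iterate_add_apply, Nat.add_comm, Function.iterate_add_apply]
      rw [hcycleE y hy]
    · exact Function.iterate_fixed (hT_rest x hx) (r' + 2)
  -- null sets and measures under iterates of T
  have hpre_null : ∀ (f : X → X), MeasurePreserving f μ μ →
      ∀ S : Set X, μ S = 0 → μ (f ⁻¹' S) = 0 := by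
    intro f hf S hS
    have h1 : μ (f ⁻¹' (toMeasurable μ S)) = 0 := by
      rw [hf.measure_preimage (measurableSet_toMeasurable μ S).nullMeasurableSet,
        measure_toMeasurable, hS]
    exact le_antisymm (le_trans (measure_mono
      (Set.preimage_mono (subset_toMeasurable μ S))) h1.le) (zero_le)
  have hTiter_img : ∀ (n : ℕ) (S : Set X), (⇑T)^[n] '' S = (⇑T.symm)^[n] ⁻¹' S := by
    intro n S
    have h1 := Set.image_eq_preimage_of_inverse
      (Function.LeftInverse.iterate (fun x => T.symm_apply_apply x) n)
      (Function.LeftInverse.iterate (fun x => T.apply_symm_apply x) n)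
    exact congrFun h1 S
  have himg_null : ∀ (n : ℕ) (S : Set X), μ S = 0 → μ ((⇑T)^[n] '' S) = 0 := by
    intro n S hS
    rw [hTiter_img]
    exact hpre_null _ ((hTmp.symm T).iterate n) S hS
  have himg_meas : ∀ (n : ℕ) (S : Set X), MeasurableSet S → μ ((⇑T)^[n] '' S) = μ S := by
    intro n S hS
    rw [hTiter_img]
    exact ((hTmp.symm T).iterate n).measure_preimage hS.nullMeasurableSet
  have hDTj : ∀ j, j ≤ r' + 1 → (⇑T)^[j] '' E = D j := by
    intro j hj
    have h1 : (⇑T)^[j] '' E = cf j '' E := Set.image_congr (fun y hy => hIter y hy j hj)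
    rw [h1, hD]
  have hDμ : ∀ j, j ≤ r' + 1 → μ (D j) = μ A := by
    intro j hj
    rw [← hDTj j hj, himg_meas j E hEm, hEμ]
  have hcond4 : ∀ i j, i < j → j < r' + 2 → μ ((⇑T)^[i] '' A ∩ (⇑T)^[j] '' A) = 0 := by
    intro i j hij hjK
    have hsplit : ∀ n, n ≤ r' + 1 → (⇑T)^[n] '' A ⊆ D n ∪ (⇑T)^[n] '' (A \ E) := by
      intro n hn x hx
      obtain ⟨a, ha, rfl⟩ := hx
      by_cases hae : a ∈ E
      · exact Or.inl (by rw [← hDTj n hn]; exact Set.mem_image_of_mem _ hae)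
      · exact Or.inr (Set.mem_image_of_mem _ ⟨ha, hae⟩)
    have hsub2 : (⇑T)^[i] '' A ∩ (⇑T)^[j] '' A ⊆
        ((⇑T)^[i] '' (A \ E)) ∪ ((⇑T)^[j] '' (A \ E)) := by
      intro x hx
      rcases hsplit i (by omega) hx.1 with hD1 | hN1
      · rcases hsplit j (by omega) hx.2 with hD2 | hN2
        · exact absurd hD2 (Set.disjoint_left.mp (hDdisj i j hij (by omega)) hD1)
        · exact Or.inr hN2
      · exact Or.inl hN1
    refine le_antisymm (le_trans (measure_mono hsub2) ?_) (zero_le)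
    refine le_trans (measure_union_le _ _) ?_
    rw [himg_null i _ hEnull, himg_null j _ hEnull, add_zero]
  have hWμ : μ W = 1 := by
    rw [hW, measure_biUnion_finset ?_ (fun j hj => hDm j (by
      have := Finset.mem_range.mp hj; omega))]
    · rw [Finset.sum_congr rfl (fun j hj => hDμ j (by
        have := Finset.mem_range.mp hj; omega))]
      rw [Finset.sum_const, Finset.card_range, nsmul_eq_mul, hAK, one_div]
      exact ENNReal.mul_inv_cancel (Nat.cast_ne_zero.mpr (by omega)) (ENNReal.natCast_ne_top _)
    · intro i hi j hj hij
      have hi' := Finset.mem_range.mp hi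
      have hj' := Finset.mem_range.mp hj
      rcases lt_or_gt_of_ne hij with h | h
      · exact hDdisj i j h (by omega)
      · exact (hDdisj j i h (by omega)).symm
  have hcond5 : μ (⋃ i ∈ Finset.range (r' + 2), (⇑T)^[i] '' A) = 1 := by
    refine le_antisymm prob_le_one ?_
    rw [← hWμ]
    refine measure_mono ?_
    rw [hW]
    intro x hx
    simp only [Set.mem_iUnion, Finset.mem_range] at hx ⊢
    obtain ⟨j, hj, hxD⟩ := hx
    refine ⟨j, hj, ?_⟩
    rw [← hDTj j (by omega)] at hxD
    exact Set.image_mono hEsubA hxD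
  exact ⟨T, hTmp, Filter.Eventually.of_forall (fun x => Tp.exists_smul x),
    Filter.Eventually.of_forall hfix, hcond4, hcond5⟩
end

section
/- Let G be a locally compact Polish group acting essentially freely on (X,μ) and let M = L^∞(X,μ) ⋊ G be the crossed product von Neumann algebra on L²(G × X, m × μ). Then the Koopman-type representation π of the orbit full group [R_G], given by (π(g)f)(h,x) = f(g(x)⁻¹h, g(x)⁻¹x), takes values in the unitary group of M, i.e., π(g) commutes with all operators f̃ (for f ∈ L^∞(X)) and with all right translations 1 × ρ_{h'}. -/
open MeasureTheory

/-- For a free measure-preserving action of a locally compact unimodular Polish group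
`G` on `(X,μ)`, the Koopman-type representation of an element of the orbit full group
(given by a cocycle `c : X → G` with `x ↦ c x • x` an automorphism), namely
`(π(g)ξ)(h,x) = ξ(c(x)⁻¹ h, c(x)⁻¹ • x)`, is a unitary of the crossed product
`L^∞(X) ⋊ G`: the underlying transformation of `G × X` preserves `m × μ`, and `π(g)`
commutes with the operators `f̃` (for `f ∈ L^∞(X)`) and with the right translations
`ρ_{h'}`, which generate the commutant. -/
theorem full_group_repr_in_crossed_product
    (G : Type*) [Group G] [TopologicalSpace G] [IsTopologicalGroup G]
    [LocallyCompactSpace G] [PolishSpace G]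
    [MeasurableSpace G] [BorelSpace G]
    (m : Measure G) [m.IsHaarMeasure] [m.IsMulRightInvariant] [SigmaFinite m]
    (X : Type*) [MeasurableSpace X] (μ : Measure X) [IsProbabilityMeasure μ]
    [MulAction G X]
    (hBorel : Measurable fun p : G × X => p.1 • p.2)
    (hmp : ∀ g : G, MeasurePreserving (fun x : X => g • x) μ μ)
    (hfree : ∀ (g : G) (x : X), g • x = x → g = 1)
    (c : X → G) (hc : Measurable c)
    (hT : MeasurePreserving (fun x : X => c x • x) μ μ) :
    -- π(g) is a unitary: the underlying transformation preserves m × μ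
    MeasurePreserving (fun p : G × X => (c p.2 * p.1, c p.2 • p.2)) (m.prod μ) (m.prod μ)
    ∧
    -- π(g) commutes with the right translations ρ_{h'}
    (∀ (ξ : G × X → ℂ) (h' : G),
      (fun p : G × X => (fun q : G × X => ξ (q.1 * h', q.2))
          ((c p.2)⁻¹ * p.1, (c p.2)⁻¹ • p.2))
        = fun p : G × X =>
            (fun q : G × X => ξ ((c q.2)⁻¹ * q.1, (c q.2)⁻¹ • q.2)) (p.1 * h', p.2))
    ∧
    -- π(g) commutes with the operators f̃, (f̃ ξ)(h,x) = f(h⁻¹ • x) ξ(h,x)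
    (∀ (ξ : G × X → ℂ) (f : X → ℂ),
      (fun p : G × X => (fun q : G × X => f (q.1⁻¹ • q.2) * ξ q)
          ((c p.2)⁻¹ * p.1, (c p.2)⁻¹ • p.2))
        = fun p : G × X =>
            f (p.1⁻¹ • p.2) *
              (fun q : G × X => ξ ((c q.2)⁻¹ * q.1, (c q.2)⁻¹ • q.2)) p) := by
  refine ⟨?_, ?_, ?_⟩
  · have hS : MeasurePreserving (fun p : X × G => (c p.1 • p.1, c p.1 * p.2))
        (μ.prod m) (μ.prod m) :=
      hT.skew_product (g := fun x h => c x * h)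
        ((hc.comp measurable_fst).mul measurable_snd)
        (Filter.Eventually.of_forall fun x => (measurePreserving_mul_left m (c x)).map_eq)
    have := (Measure.measurePreserving_swap (μ := μ) (ν := m)).comp
      (hS.comp (Measure.measurePreserving_swap (μ := m) (ν := μ)))
    simpa [Function.comp_def] using this
  · intro ξ h'
    funext p
    simp [mul_assoc]
  · intro ξ f
    funext p
    simp [mul_smul, mul_assoc]
end

section
/- Let G be a locally compact Polish group acting freely and measure-preservingly on (X,μ), and let T ∈ Aut(G × X, m × μ) commute with all right translations ρ_{h'} in the first coordinate and with all operators f̃ (f ∈ L^∞(X)). Then T is of the form T(h,x) = (g(x)h, g(x)·x) for some measurable g: X → G with x ↦ g(x)·x in [R_G]; in particular [R_G] = Aut(G×X, m×μ) ∩ U(L^∞(X) ⋊ G). -/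
open MeasureTheory

/-- Let `G` be a locally compact Polish group acting freely and measure-preservingly on
`(X,μ)`, and let `T` be a measure-preserving automorphism of `(G × X, m × μ)` commuting
with all right translations in the first coordinate and with all operators `f̃`
(equivalently, preserving the map `(h,x) ↦ h⁻¹ • x`). Then `T` has the form
`T(h,x) = (g(x)h, g(x) • x)` for a measurable `g : X → G` with `x ↦ g(x) • x` in the
orbit full group. -/
theorem commutant_automorphism_is_full_group_element
    (G : Type*) [Group G] [TopologicalSpace G] [IsTopologicalGroup G]
    [LocallyCompactSpace G] [PolishSpace G]
    [MeasurableSpace G] [BorelSpace G]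
    (m : Measure G) [m.IsHaarMeasure] [SigmaFinite m]
    (X : Type*) [MeasurableSpace X] [StandardBorelSpace X]
    (μ : Measure X) [IsProbabilityMeasure μ]
    [MulAction G X]
    (hBorel : Measurable fun p : G × X => p.1 • p.2)
    (hmp : ∀ g : G, MeasurePreserving (fun x : X => g • x) μ μ)
    (hfree : ∀ (g : G) (x : X), g • x = x → g = 1)
    (T : (G × X) ≃ᵐ (G × X)) (hT : MeasurePreserving T (m.prod μ) (m.prod μ))
    -- T commutes with the right translations ρ_{h'}
    (hρ : ∀ h' : G, ∀ p : G × X, T (p.1 * h', p.2) = ((T p).1 * h', (T p).2))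
    -- T commutes with the operators f̃, i.e. it preserves (h,x) ↦ h⁻¹ • x
    (hf : ∀ᵐ p ∂(m.prod μ), (T p).1⁻¹ • (T p).2 = p.1⁻¹ • p.2) :
    ∃ g : X → G, Measurable g ∧
      (∀ᵐ p ∂(m.prod μ), T p = (g p.2 * p.1, g p.2 • p.2)) ∧
      MeasurePreserving (fun x : X => g x • x) μ μ := by
  classical
  set g : X → G := fun x => (T (1, x)).1 with hg_def
  set t : X → X := fun x => (T (1, x)).2 with ht_def
  have hTmeas : Measurable T := T.measurable
  have haux : Measurable fun x : X => T (1, x) :=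
    hTmeas.comp (measurable_const.prodMk measurable_id)
  have hgm : Measurable g := haux.fst
  have htm : Measurable t := haux.snd
  -- structure of T
  have hTform : ∀ p : G × X, T p = (g p.2 * p.1, t p.2) := by
    intro p
    have h := hρ p.1 (1, p.2)
    simpa using h
  -- a.e. t x = g x • x (as statement over the product)
  have h1 : ∀ᵐ p ∂(m.prod μ), t p.2 = g p.2 • p.2 := by
    filter_upwards [hf] with p hp
    rw [hTform p] at hp
    have h2 : (g p.2)⁻¹ • t p.2 = p.2 := by
      have h3 := congrArg (fun y => p.1 • y) hp
      simp only [smul_smul, mul_inv_rev, mul_inv_cancel_left, mul_inv_cancel,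
        one_smul] at h3
      exact h3
    calc t p.2 = g p.2 • ((g p.2)⁻¹ • t p.2) := by rw [smul_inv_smul]
      _ = g p.2 • p.2 := by rw [h2]
  -- a.e. over μ
  have hm0 : m ≠ 0 := by
    intro h
    have h2 : m Set.univ ≠ 0 := (isOpen_univ.measure_ne_zero m ⟨1, trivial⟩)
    rw [h] at h2
    exact h2 rfl
  haveI : (ae m).NeBot := ae_neBot.mpr hm0
  have hae : ∀ᵐ x ∂μ, t x = g x • x := by
    have h2 := Measure.ae_ae_of_ae_prod h1
    obtain ⟨h0, hh0⟩ := h2.exists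
    exact hh0
  -- a compact set of positive finite measure
  obtain ⟨K, hKc, hKmem⟩ := exists_compact_mem_nhds (1 : G)
  have hKpos : 0 < m K := by
    refine lt_of_lt_of_le ?_ (measure_mono interior_subset)
    exact isOpen_interior.measure_pos m ⟨1, mem_interior_iff_mem_nhds.mpr hKmem⟩
  have hKfin : m K < ⊤ := hKc.measure_lt_top
  -- t is measure preserving
  have key : ∀ A : Set X, MeasurableSet A → μ (t ⁻¹' A) = μ A := by
    intro A hA
    have hKA : MeasurableSet (K ×ˢ A) := hKc.measurableSet.prod hA
    have hpre : (m.prod μ) (T ⁻¹' (K ×ˢ A)) = m K * μ A := by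
      rw [hT.measure_preimage hKA.nullMeasurableSet, Measure.prod_prod]
    have hset : T ⁻¹' (K ×ˢ A) = {p : G × X | g p.2 * p.1 ∈ K ∧ t p.2 ∈ A} := by
      ext p
      simp [hTform p, Set.mem_prod]
    have hsetm : MeasurableSet {p : G × X | g p.2 * p.1 ∈ K ∧ t p.2 ∈ A} := by
      rw [← hset]; exact T.measurable hKA
    have hslice : ∀ x : X,
        m ((fun h : G => (h, x)) ⁻¹' {p : G × X | g p.2 * p.1 ∈ K ∧ t p.2 ∈ A})
          = (t ⁻¹' A).indicator (fun _ => m K) x := by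
      intro x
      by_cases hx : t x ∈ A
      · have hq : ((fun h : G => (h, x)) ⁻¹' {p : G × X | g p.2 * p.1 ∈ K ∧ t p.2 ∈ A})
            = (fun h => g x * h) ⁻¹' K := by
          ext h; simp [hx]
        rw [hq, measure_preimage_mul, Set.indicator_of_mem (show x ∈ t ⁻¹' A from hx)]
      · have hq : ((fun h : G => (h, x)) ⁻¹' {p : G × X | g p.2 * p.1 ∈ K ∧ t p.2 ∈ A})
            = (∅ : Set G) := by
          ext h; simp [hx]
        rw [hq, measure_empty, Set.indicator_of_notMem (show x ∉ t ⁻¹' A from hx)]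
    have hpre2 : (m.prod μ) (T ⁻¹' (K ×ˢ A)) = m K * μ (t ⁻¹' A) := by
      rw [hset, Measure.prod_apply_symm hsetm]
      simp_rw [hslice]
      rw [lintegral_indicator_const (htm hA)]
    have := hpre2.symm.trans hpre
    exact (ENNReal.mul_right_inj hKpos.ne' hKfin.ne).mp this
  have hmp_t : MeasurePreserving t μ μ :=
    ⟨htm, Measure.ext fun A hA => by rw [Measure.map_apply htm hA]; exact key A hA⟩
  have hSm : Measurable fun x : X => g x • x :=
    hBorel.comp (hgm.prodMk measurable_id)
  have hmp_S : MeasurePreserving (fun x : X => g x • x) μ μ :=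
    ⟨hSm, (Measure.map_congr (hae.mono fun x hx => hx.symm)).trans hmp_t.map_eq⟩
  refine ⟨g, hgm, ?_, hmp_S⟩
  filter_upwards [h1] with p hp
  rw [hTform p, hp]
end

section
/- Let G be a Polish group acting freely and measure-preservingly on (X,μ) and suppose R_G admits a quasi-invariant Haar system of probability measures (η_x)_{x∈X} (i.e., [η_x] = [η_y] for a.e. equivalent x, y, and each η_x is supported on the orbit of x). Then the probability measure λ on G defined by λ(A) := ∫_X η_x(A·x) dμ(x) is quasi-invariant under right multiplication: λ(A) = 0 implies λ(Ag) = 0 for all g ∈ G. -/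
open MeasureTheory ProbabilityTheory Filter Topology
open scoped ENNReal NNReal

/-- Let a Polish group `G` act freely and measure-preservingly on `(X,μ)`, and let
`(η_x)` be a quasi-invariant Haar system of probability measures on the orbit
equivalence relation (each `η_x` supported on the orbit of `x`, with `[η_x] = [η_y]`
for a.e. equivalent `x, y`). Then the measure `λ(A) := ∫ η_x(A • x) dμ(x)` on `G` is
quasi-invariant under right multiplication: `λ(A) = 0` implies `λ(A g) = 0`. -/
theorem integrated_haar_system_right_quasi_invariant
    (G : Type*) [Group G] [TopologicalSpace G] [PolishSpace G] [IsTopologicalGroup G]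
    [MeasurableSpace G] [BorelSpace G]
    (X : Type*) [MeasurableSpace X] [StandardBorelSpace X]
    (μ : Measure X) [IsProbabilityMeasure μ]
    [MulAction G X]
    (hBorel : Measurable fun p : G × X => p.1 • p.2)
    (hmp : ∀ g : G, MeasurePreserving (fun x : X => g • x) μ μ)
    (hfree : ∀ (g : G) (x : X), g • x = x → g = 1)
    (η : X → Measure X) (hηprob : ∀ x, IsProbabilityMeasure (η x))
    (hηmeas : ∀ s : Set X, MeasurableSet s → Measurable fun x => η x s)
    (hηsupp : ∀ x, η x ((MulAction.orbit G x)ᶜ) = 0)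
    (hηqi : ∃ X' : Set X, μ X'ᶜ = 0 ∧ ∀ x ∈ X', ∀ y ∈ X',
      (∃ g : G, g • x = y) → (∀ s : Set X, η x s = 0 ↔ η y s = 0)) :
    ∀ A : Set G, (∫⁻ x, η x ((fun g : G => g • x) '' A) ∂μ) = 0 →
      ∀ g₀ : G, (∫⁻ x, η x ((fun g : G => g • x) '' ((fun a => a * g₀) '' A)) ∂μ) = 0 := by
  intro A hA g₀
  obtain ⟨X', hX', hqi⟩ := hηqi
  -- measurability of the action maps
  have hsm : ∀ g : G, Measurable fun x : X => g • x := fun g =>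
    hBorel.comp (measurable_const.prodMk measurable_id)
  -- the measurable equivalence given by acting by `g₀`
  let e : X ≃ᵐ X :=
    { toFun := fun x => g₀ • x
      invFun := fun x => g₀⁻¹ • x
      left_inv := fun x => inv_smul_smul g₀ x
      right_inv := fun x => smul_inv_smul g₀ x
      measurable_toFun := hsm g₀
      measurable_invFun := hsm g₀⁻¹ }
  -- the kernels `x ↦ η x` and `x ↦ η (g₀ • x)`
  let κ : Kernel X X := ⟨η, Measure.measurable_of_measurable_coe η hηmeas⟩
  have hκ : ∀ x, κ x = η x := fun _ => rfl
  haveI : IsMarkovKernel κ := ⟨hηprob⟩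
  let ζ : Kernel X X := κ.comap (fun x => g₀ • x) (hsm g₀)
  have hζ : ∀ x, ζ x = η (g₀ • x) := fun x => rfl
  haveI : IsMarkovKernel ζ := ⟨fun x => hηprob (g₀ • x)⟩
  haveI : ∀ x, IsProbabilityMeasure (κ x) := hηprob
  haveI : ∀ x, IsProbabilityMeasure (ζ x) := fun x => hηprob (g₀ • x)
  -- the hypothesis integrand
  set F : X → ℝ≥0∞ := fun y => η y ((fun g : G => g • y) '' A) with hF
  -- `∫⁻ F (g₀ • x) dμ = ∫⁻ F dμ = 0` since the action is measure preserving
  have hu : (∫⁻ x, F (g₀ • x) ∂μ) = 0 := by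
    have h1 : (∫⁻ x, F (e x) ∂μ) = ∫⁻ y, F y ∂(Measure.map e μ) :=
      (lintegral_map_equiv F e).symm
    have h2 : Measure.map e μ = μ := (hmp g₀).map_eq
    have : (∫⁻ x, F (e x) ∂μ) = ∫⁻ y, F y ∂μ := by rw [h1, h2]
    exact this.trans hA
  -- almost every `x` is "good": `x ∈ X'` and `g₀ • x ∈ X'`
  have hae : ∀ᵐ x ∂μ, x ∈ X' ∧ g₀ • x ∈ X' := by
    have h1 : ∀ᵐ x ∂μ, x ∈ X' := by
      rw [ae_iff]
      exact hX'
    have h2 : ∀ᵐ x ∂μ, g₀ • x ∈ X' := by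
      rw [ae_iff]
      refine measure_mono_null (fun x hx => ?_)
        (((hmp g₀).measure_preimage
          (measurableSet_toMeasurable μ X'ᶜ).nullMeasurableSet).trans
          (by rw [measure_toMeasurable]; exact hX'))
      exact subset_toMeasurable μ X'ᶜ hx
    exact h1.and h2
  -- for good `x`, `η x ≪ η (g₀ • x)`
  have hac : ∀ x, x ∈ X' → g₀ • x ∈ X' → κ x ≪ ζ x := by
    intro x hx hgx s h0
    rw [hκ]
    rw [hζ] at h0
    exact (hqi x hx (g₀ • x) hgx ⟨g₀, rfl⟩ s).mpr h0
  -- the Radon–Nikodym remainder sets and their kernel measures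
  set ρ : X → X → ℝ≥0∞ := Kernel.rnDeriv κ ζ with hρ
  have hρmeas : Measurable (Function.uncurry ρ) := Kernel.measurable_rnDeriv κ ζ
  have hVmeas : ∀ n : ℕ, MeasurableSet {p : X × X | (n : ℝ≥0∞) < ρ p.1 p.2} :=
    fun n => measurableSet_lt measurable_const hρmeas
  set r : ℕ → X → ℝ≥0∞ := fun n x => κ x {y | (n : ℝ≥0∞) < ρ x y} with hr
  have hrmeas : ∀ n, Measurable (r n) := fun n =>
    Kernel.measurable_kernel_prodMk_left (κ := κ) (hVmeas n)
  have hρxmeas : ∀ x, Measurable fun y => ρ x y := fun x =>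
    hρmeas.comp measurable_prodMk_left
  -- the key pointwise bound for good `x`
  have key : ∀ (n : ℕ) (x : X), x ∈ X' → g₀ • x ∈ X' →
      κ x ((fun a : G => a • (g₀ • x)) '' A) ≤
        (n : ℝ≥0∞) * ζ x ((fun a : G => a • (g₀ • x)) '' A) + r n x := by
    intro n x hx hgx
    have hacx := hac x hx hgx
    set S : Set X := (fun a : G => a • (g₀ • x)) '' A with hS
    set B : Set X := toMeasurable (ζ x) S with hB
    have hBmeas : MeasurableSet B := measurableSet_toMeasurable _ _
    set C : Set X := {y | ρ x y ≤ (n : ℝ≥0∞)} with hCdef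
    have hCmeas : MeasurableSet C := measurableSet_le (hρxmeas x) measurable_const
    have hsplit : κ x B = κ x (B ∩ C) + κ x (B \ C) :=
      (measure_inter_add_diff B hCmeas).symm
    have h1 : κ x (B ∩ C) ≤ (n : ℝ≥0∞) * ζ x S := by
      have e1 : κ x (B ∩ C) = ∫⁻ y in B ∩ C, (κ x).rnDeriv (ζ x) y ∂(ζ x) :=
        (Measure.setLIntegral_rnDeriv' hacx (hBmeas.inter hCmeas)).symm
      have e2 : (∫⁻ y in B ∩ C, (κ x).rnDeriv (ζ x) y ∂(ζ x)) =
          ∫⁻ y in B ∩ C, ρ x y ∂(ζ x) :=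
        lintegral_congr_ae (ae_restrict_of_ae
          (Kernel.rnDeriv_eq_rnDeriv_measure (κ := κ) (η := ζ) (a := x)).symm)
      have e3 : (∫⁻ y in B ∩ C, ρ x y ∂(ζ x)) ≤ ∫⁻ _ in B ∩ C, (n : ℝ≥0∞) ∂(ζ x) :=
        lintegral_mono_ae ((ae_restrict_mem (hBmeas.inter hCmeas)).mono
          fun y hy => hy.2)
      have e4 : (∫⁻ _ in B ∩ C, (n : ℝ≥0∞) ∂(ζ x)) = (n : ℝ≥0∞) * ζ x (B ∩ C) :=
        setLIntegral_const _ _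
      have e5 : ζ x (B ∩ C) ≤ ζ x S := by
        calc ζ x (B ∩ C) ≤ ζ x B := measure_mono Set.inter_subset_left
        _ = ζ x S := measure_toMeasurable S
      calc κ x (B ∩ C) = ∫⁻ y in B ∩ C, ρ x y ∂(ζ x) := by rw [e1, e2]
      _ ≤ (n : ℝ≥0∞) * ζ x (B ∩ C) := by rw [← e4]; exact e3
      _ ≤ (n : ℝ≥0∞) * ζ x S := mul_le_mul_right e5 _
    have h2 : κ x (B \ C) ≤ r n x := by
      refine measure_mono fun y hy => ?_
      exact not_le.mp fun h : ρ x y ≤ (n : ℝ≥0∞) => hy.2 h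
    calc κ x S ≤ κ x B := measure_mono (subset_toMeasurable _ _)
    _ = κ x (B ∩ C) + κ x (B \ C) := hsplit
    _ ≤ (n : ℝ≥0∞) * ζ x S + r n x := add_le_add h1 h2
  -- the integrand of the goal equals `κ x S x`
  have hset : ∀ x : X, ((fun g : G => g • x) '' ((fun a => a * g₀) '' A)) =
      (fun a : G => a • (g₀ • x)) '' A := by
    intro x
    rw [Set.image_image]
    exact Set.image_congr fun a _ => mul_smul a g₀ x
  -- for every `n`, the goal integral is bounded by `∫⁻ r n dμ`
  have step : ∀ n : ℕ,
      (∫⁻ x, η x ((fun g : G => g • x) '' ((fun a => a * g₀) '' A)) ∂μ) ≤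
        ∫⁻ x, r n x ∂μ := by
    intro n
    have hb : ∀ᵐ x ∂μ, η x ((fun g : G => g • x) '' ((fun a => a * g₀) '' A)) ≤
        (n : ℝ≥0∞) * F (g₀ • x) + r n x := by
      filter_upwards [hae] with x hx
      have h := key n x hx.1 hx.2
      rw [hκ, hζ] at h
      rw [hset x]
      exact h
    calc (∫⁻ x, η x ((fun g : G => g • x) '' ((fun a => a * g₀) '' A)) ∂μ)
        ≤ ∫⁻ x, ((n : ℝ≥0∞) * F (g₀ • x) + r n x) ∂μ := lintegral_mono_ae hb
    _ = (∫⁻ x, (n : ℝ≥0∞) * F (g₀ • x) ∂μ) + ∫⁻ x, r n x ∂μ :=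
        lintegral_add_right _ (hrmeas n)
    _ = (n : ℝ≥0∞) * (∫⁻ x, F (g₀ • x) ∂μ) + ∫⁻ x, r n x ∂μ := by
        rw [lintegral_const_mul' _ _ (ENNReal.natCast_ne_top n)]
    _ = ∫⁻ x, r n x ∂μ := by rw [hu, mul_zero, zero_add]
  -- a.e. pointwise, `r n x → 0` as `n → ∞`
  have hlim : ∀ᵐ x ∂μ, Tendsto (fun n => r n x) atTop (𝓝 0) := by
    filter_upwards [hae] with x hx
    have hacx := hac x hx.1 hx.2
    have hmono : Antitone fun n : ℕ => {y | (n : ℝ≥0∞) < ρ x y} := by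
      intro a b hab y hy
      have hy' : (b : ℝ≥0∞) < ρ x y := hy
      exact lt_of_le_of_lt (Nat.cast_le.mpr hab) hy'
    have hmeas : ∀ n : ℕ, MeasurableSet {y | (n : ℝ≥0∞) < ρ x y} := fun n =>
      measurableSet_lt measurable_const (hρxmeas x)
    have htend := tendsto_measure_iInter_atTop (μ := κ x)
      (fun n => (hmeas n).nullMeasurableSet) hmono ⟨0, measure_ne_top _ _⟩
    have hInt : (⋂ n : ℕ, {y | (n : ℝ≥0∞) < ρ x y}) = {y | ρ x y = ∞} := by
      ext y
      simp only [Set.mem_iInter, Set.mem_setOf_eq]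
      constructor
      · intro h
        by_contra hne
        obtain ⟨n, hn⟩ := ENNReal.exists_nat_gt hne
        exact lt_asymm hn (h n)
      · intro h n
        rw [h]
        exact ENNReal.natCast_lt_top n
    have hz : κ x {y | ρ x y = ∞} = 0 := by
      refine hacx ?_
      have h1 : ∀ᵐ y ∂(ζ x), (κ x).rnDeriv (ζ x) y < ∞ := Measure.rnDeriv_lt_top _ _
      have h2 := Kernel.rnDeriv_eq_rnDeriv_measure (κ := κ) (η := ζ) (a := x)
      have h3 : ∀ᵐ y ∂(ζ x), ρ x y < ∞ := by
        filter_upwards [h1, h2] with y hy hy2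
        exact lt_of_eq_of_lt hy2 hy
      have h4 : {y | ρ x y = ∞} = {y | ¬ ρ x y < ∞} := by
        ext y; simp [lt_top_iff_ne_top]
      rw [h4]
      exact ae_iff.mp h3
    have h5 := htend
    rw [hInt, hz] at h5
    exact h5
  -- dominated convergence
  have hDC : Tendsto (fun n => ∫⁻ x, r n x ∂μ) atTop (𝓝 0) := by
    have h0 : (0 : ℝ≥0∞) = ∫⁻ _, (0 : ℝ≥0∞) ∂μ := by simp
    rw [h0]
    refine tendsto_lintegral_of_dominated_convergence (bound := fun _ => 1)
      hrmeas (fun n => Eventually.of_forall fun x => ?_) (by simp) hlim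
    exact prob_le_one
  refine le_antisymm ?_ zero_le
  exact ge_of_tendsto' hDC step
end
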